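/- arXiv:1601.05906 — 8 statements merged into one kernel-verified Lean document; each statement's English description precedes it below -/
import Mathlib

section
/- Let n ≥ 4 and for X ∈ sl_n(ℂ) put μ(X) = X_{n,1}·X_{n−1,2} − X_{n−1,1}·X_{n,2}. If X ∈ sl_n(ℂ) is nilpotent and μ(g·X·g⁻¹) = 0 for every g ∈ GL_n(ℂ), then rank X ≤ 1; that is, X lies in the closure of the minimal nilpotent orbit of sl_n(ℂ). -/
open Matrix

noncomputable section

abbrev Mat (n : ℕ) := Matrix (Fin n) (Fin n) ℂ

abbrev GLn (n : ℕ) := Matrix.GeneralLinearGroup (Fin n) ℂ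

namespace Stmt5Aux

open Submodule Module

variable {n : ℕ}

/-- kill a coefficient of a vector outside a submodule -/
lemma coeff_zero (S : Submodule ℂ (Fin n → ℂ)) {z : Fin n → ℂ} (hz : z ∉ S)
    {l : ℂ} {s : Fin n → ℂ} (hs : s ∈ S) (h : l • z + s = 0) : l = 0 := by
  by_contra hl
  apply hz
  have h1 : l • z = -s := by
    rw [eq_neg_iff_add_eq_zero]; exact h
  have hzz : z = l⁻¹ • (-s) := by
    rw [← h1, smul_smul, inv_mul_cancel₀ hl, one_smul]
  rw [hzz]
  exact S.smul_mem _ (S.neg_mem hs)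

lemma exists_mulVec_ne {M : Mat n} (hM : M ≠ 0) : ∃ x : Fin n → ℂ, M.mulVec x ≠ 0 := by
  by_contra h
  push_neg at h
  apply hM
  ext i j
  have := congrFun (h (Pi.single j 1)) i
  simpa using this

lemma smul_ne_zero_iff_zero {u : Fin n → ℂ} (hu : u ≠ 0) {l : ℂ} (h : l • u = 0) : l = 0 :=
  (smul_eq_zero.mp h).resolve_right hu

lemma key (hn : 4 ≤ n) (A : Mat n) (hnil : IsNilpotent A) (hrank : 1 < A.rank) :
    ∃ v w : Fin n → ℂ, LinearIndependent ℂ ![v, w, A.mulVec v, A.mulVec w] := by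
  classical
  have hA0 : A ≠ 0 := by
    rintro rfl
    simp at hrank
  have hP : ∃ j, A ^ j = 0 := hnil
  set m := Nat.find hP with hmdef
  have hm0 : A ^ m = 0 := Nat.find_spec hP
  have hm2 : 2 ≤ m := by
    by_contra h
    push_neg at h
    interval_cases m
    · apply hA0
      calc A = A * A ^ 0 := by rw [pow_zero, mul_one]
        _ = A * 0 := by rw [hm0]
        _ = 0 := by rw [mul_zero]
    · exact hA0 (by simpa using hm0)
  rcases eq_or_lt_of_le hm2 with hm2' | hm3
  · -- case A^2 = 0
    have hA2 : A * A = 0 := by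
      have : A ^ 2 = 0 := by rw [hm2']; exact hm0
      rwa [pow_two] at this
    have h2 : 2 ≤ finrank ℂ (LinearMap.range A.mulVecLin) := hrank
    obtain ⟨f, hf⟩ := exists_linearIndependent_of_le_finrank h2
    have hmap : LinearIndependent ℂ (fun i => ((f i : Fin n → ℂ))) :=
      hf.map' (LinearMap.range A.mulVecLin).subtype (Submodule.ker_subtype _)
    obtain ⟨v, hv⟩ := LinearMap.mem_range.mp (f 0).2
    obtain ⟨w, hw⟩ := LinearMap.mem_range.mp (f 1).2
    have hv' : A.mulVec v = (f 0 : Fin n → ℂ) := by rw [← hv]; rfl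
    have hw' : A.mulVec w = (f 1 : Fin n → ℂ) := by rw [← hw]; rfl
    have hpair : ∀ s t : ℂ, s • A.mulVec v + t • A.mulVec w = 0 → s = 0 ∧ t = 0 := by
      intro s t hst
      have := Fintype.linearIndependent_iff.mp hmap ![s, t] (by
        rw [Fin.sum_univ_two]
        simpa [hv', hw'] using hst)
      exact ⟨by simpa using this 0, by simpa using this 1⟩
    refine ⟨v, w, Fintype.linearIndependent_iff.mpr ?_⟩
    intro g hg
    rw [Fin.sum_univ_four] at hg
    simp only [Matrix.cons_val_zero, Matrix.cons_val_one, Matrix.head_cons,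
      Matrix.cons_val_two, Matrix.tail_cons, Matrix.cons_val_three] at hg
    have hAv2 : A.mulVec (A.mulVec v) = 0 := by
      rw [Matrix.mulVec_mulVec, hA2, Matrix.zero_mulVec]
    have hAw2 : A.mulVec (A.mulVec w) = 0 := by
      rw [Matrix.mulVec_mulVec, hA2, Matrix.zero_mulVec]
    have hg1 := congrArg (fun z => A.mulVec z) hg
    simp only [Matrix.mulVec_add, Matrix.mulVec_smul, hAv2, hAw2, smul_zero, add_zero,
      Matrix.mulVec_zero] at hg1
    obtain ⟨h0, h1⟩ := hpair _ _ hg1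
    rw [h0, h1, zero_smul, zero_smul, zero_add, zero_add] at hg
    obtain ⟨h2', h3⟩ := hpair _ _ hg
    intro i
    fin_cases i
    · exact h0
    · exact h1
    · exact h2'
    · exact h3
  · -- m ≥ 3
    rcases eq_or_lt_of_le (Nat.succ_le_of_lt hm3) with hm3' | hm4
    · -- case m = 3 : A^3 = 0, A^2 ≠ 0
      have hA3 : A ^ 3 = 0 := by rw [show (3:ℕ) = m by omega]; exact hm0
      have hA2ne : A ^ 2 ≠ 0 := Nat.find_min hP (by omega)
      obtain ⟨a, ha⟩ := exists_mulVec_ne hA2ne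
      set a1 := A.mulVec a with ha1def
      set a2 := A.mulVec a1 with ha2def
      have ha2ne : a2 ≠ 0 := by
        rw [ha2def, ha1def, Matrix.mulVec_mulVec, ← pow_two]
        exact ha
      have ha3 : A.mulVec a2 = 0 := by
        rw [ha2def, ha1def, Matrix.mulVec_mulVec, Matrix.mulVec_mulVec]
        rw [show A * A * A = A ^ 3 by rw [pow_succ, pow_two], hA3,
          Matrix.zero_mulVec]
      -- triple independence
      have triple : ∀ p q r : ℂ, p • a + q • a1 + r • a2 = 0 → p = 0 ∧ q = 0 ∧ r = 0 := by
        intro p q r h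
        have h1 := congrArg (fun z => A.mulVec z) h
        simp only [Matrix.mulVec_add, Matrix.mulVec_smul, ← ha1def, ← ha2def, ha3,
          smul_zero, add_zero, Matrix.mulVec_zero] at h1
        have h2 := congrArg (fun z => A.mulVec z) h1
        simp only [Matrix.mulVec_add, Matrix.mulVec_smul, ← ha2def, ha3,
          smul_zero, add_zero, Matrix.mulVec_zero] at h2
        have hp : p = 0 := smul_ne_zero_iff_zero ha2ne h2
        rw [hp, zero_smul, zero_add] at h1
        have hq : q = 0 := smul_ne_zero_iff_zero ha2ne h1
        rw [hp, hq, zero_smul, zero_smul, zero_add, zero_add] at h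
        exact ⟨hp, hq, smul_ne_zero_iff_zero ha2ne h⟩
      set S := Submodule.span ℂ (Set.range ![a, a1, a2]) with hSdef
      have haS : a ∈ S := subset_span ⟨0, rfl⟩
      have ha1S : a1 ∈ S := subset_span ⟨1, rfl⟩
      have ha2S : a2 ∈ S := subset_span ⟨2, rfl⟩
      have hSfin : finrank ℂ S ≤ 3 := by
        have h1 := finrank_span_le_card (R := ℂ) (Set.range ![a, a1, a2])
        refine h1.trans ?_
        rw [Set.toFinset_range]
        exact (Finset.card_image_le).trans (by simp)
      obtain ⟨c, hc⟩ : ∃ c, c ∉ S := by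
        by_contra h
        push_neg at h
        have hS : S = ⊤ := eq_top_iff'.mpr h
        rw [hS, finrank_top, Module.finrank_fin_fun] at hSfin
        omega
      by_cases hcs : A.mulVec c ∈ Submodule.span ℂ (Set.range ![a, a1, c])
      · -- A c = α a + β a1 + γ c
        obtain ⟨t, ht⟩ := (mem_span_range_iff_exists_fun ℂ).mp hcs
        rw [Fin.sum_univ_three] at ht
        simp only [Matrix.cons_val_zero, Matrix.cons_val_one, Matrix.head_cons,
          Matrix.cons_val_two, Matrix.tail_cons] at ht
        set α := t 0
        set β := t 1
        set γ := t 2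
        have hAc : A.mulVec c = α • a + β • a1 + γ • c := ht.symm
        -- show γ = 0
        have k0 : A.mulVec (A.mulVec (A.mulVec c)) = 0 := by
          rw [Matrix.mulVec_mulVec, Matrix.mulVec_mulVec,
            show A * A * A = A ^ 3 by rw [pow_succ, pow_two], hA3, Matrix.zero_mulVec]
        have k1 : A.mulVec (A.mulVec c) = α • a1 + β • a2 + γ • A.mulVec c := by
          conv_lhs => rw [hAc]
          simp only [Matrix.mulVec_add, Matrix.mulVec_smul, ← ha1def, ← ha2def]
        have k2 : A.mulVec (A.mulVec (A.mulVec c)) = α • a2 + γ • (A.mulVec (A.mulVec c)) := by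
          conv_lhs => rw [k1]
          simp only [Matrix.mulVec_add, Matrix.mulVec_smul, ← ha2def, ha3, smul_zero, add_zero]
        rw [k0, k1, hAc] at k2
        have k3 : γ ^ 3 • c + ((γ ^ 2 * α) • a + (γ * α + γ ^ 2 * β) • a1 + (α + γ * β) • a2) = 0 := by
          calc γ ^ 3 • c + ((γ ^ 2 * α) • a + (γ * α + γ ^ 2 * β) • a1 + (α + γ * β) • a2)
              = α • a2 + γ • (α • a1 + β • a2 + γ • (α • a + β • a1 + γ • c)) := by
                module
            _ = 0 := k2.symm
        have hγ3 : γ ^ 3 = 0 :=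
          coeff_zero S hc (S.add_mem (S.add_mem (S.smul_mem _ haS) (S.smul_mem _ ha1S))
            (S.smul_mem _ ha2S)) k3
        have hγ : γ = 0 := by
          exact (pow_eq_zero_iff (by norm_num : (3 : ℕ) ≠ 0)).mp hγ3
        rw [hγ, zero_smul, add_zero] at hAc
        by_cases hα : α = 0
        · -- A c = β • a1 ; use v = a, w = a1 + (c - β • a)
          set c' := c - β • a with hc'def
          have hc' : c' ∉ S := by
            intro hmem
            apply hc
            have : c = c' + β • a := by rw [hc'def]; abel
            rw [this]
            exact S.add_mem hmem (S.smul_mem _ haS)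
          have hAc' : A.mulVec c' = 0 := by
            rw [hc'def, Matrix.mulVec_sub, Matrix.mulVec_smul, hAc, hα, zero_smul, zero_add,
              ← ha1def, sub_self]
          refine ⟨a, a1 + c', Fintype.linearIndependent_iff.mpr ?_⟩
          intro g hg
          rw [Fin.sum_univ_four] at hg
          simp only [Matrix.cons_val_zero, Matrix.cons_val_one, Matrix.head_cons,
            Matrix.cons_val_two, Matrix.tail_cons, Matrix.cons_val_three] at hg
          rw [Matrix.mulVec_add, hAc', add_zero, ← ha1def, ← ha2def] at hg
          -- hg : g 0 • a + g 1 • (a1 + c') + g 2 • a1 + g 3 • a2 = 0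
          have hre : g 1 • c' + (g 0 • a + (g 1 + g 2) • a1 + g 3 • a2) = 0 := by
            calc g 1 • c' + (g 0 • a + (g 1 + g 2) • a1 + g 3 • a2)
                = g 0 • a + g 1 • (a1 + c') + g 2 • a1 + g 3 • a2 := by module
              _ = 0 := hg
          have hg1 : g 1 = 0 :=
            coeff_zero S hc' (S.add_mem (S.add_mem (S.smul_mem _ haS) (S.smul_mem _ ha1S))
              (S.smul_mem _ ha2S)) hre
          rw [hg1, zero_smul, zero_add] at hre
          obtain ⟨h0, h12, h3⟩ := triple _ _ _ hre
          have hg2 : g 2 = 0 := by rwa [zero_add] at h12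
          intro i
          fin_cases i
          · exact h0
          · exact hg1
          · exact hg2
          · exact h3
        · -- α ≠ 0 : use v = c, w = a1
          refine ⟨c, a1, Fintype.linearIndependent_iff.mpr ?_⟩
          intro g hg
          rw [Fin.sum_univ_four] at hg
          simp only [Matrix.cons_val_zero, Matrix.cons_val_one, Matrix.head_cons,
            Matrix.cons_val_two, Matrix.tail_cons, Matrix.cons_val_three] at hg
          rw [hAc, ← ha2def] at hg
          -- hg : g 0 • c + g 1 • a1 + g 2 • (α • a + β • a1) + g 3 • a2 = 0
          have hre : g 0 • c + ((g 2 * α) • a + (g 1 + g 2 * β) • a1 + g 3 • a2) = 0 := by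
            calc g 0 • c + ((g 2 * α) • a + (g 1 + g 2 * β) • a1 + g 3 • a2)
                = g 0 • c + g 1 • a1 + g 2 • (α • a + β • a1) + g 3 • a2 := by module
              _ = 0 := hg
          have hg0 : g 0 = 0 :=
            coeff_zero S hc (S.add_mem (S.add_mem (S.smul_mem _ haS) (S.smul_mem _ ha1S))
              (S.smul_mem _ ha2S)) hre
          rw [hg0, zero_smul, zero_add] at hre
          obtain ⟨h2α, h1, h3⟩ := triple _ _ _ hre
          have hg2 : g 2 = 0 := by
            rcases mul_eq_zero.mp h2α with h | h
            · exact h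
            · exact absurd h hα
          have hg1 : g 1 = 0 := by
            rw [hg2, zero_mul, add_zero] at h1; exact h1
          intro i
          fin_cases i
          · exact hg0
          · exact hg1
          · exact hg2
          · exact h3
      · -- A c ∉ span {a, a1, c} : use v = a, w = c
        refine ⟨a, c, Fintype.linearIndependent_iff.mpr ?_⟩
        intro g hg
        rw [Fin.sum_univ_four] at hg
        simp only [Matrix.cons_val_zero, Matrix.cons_val_one, Matrix.head_cons,
          Matrix.cons_val_two, Matrix.tail_cons, Matrix.cons_val_three] at hg
        rw [← ha1def] at hg
        -- hg : g 0 • a + g 1 • c + g 2 • a1 + g 3 • A.mulVec c = 0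
        set S' := Submodule.span ℂ (Set.range ![a, a1, c]) with hS'def
        have haS' : a ∈ S' := subset_span ⟨0, rfl⟩
        have ha1S' : a1 ∈ S' := subset_span ⟨1, rfl⟩
        have hcS' : c ∈ S' := subset_span ⟨2, rfl⟩
        have hre : g 3 • A.mulVec c + (g 0 • a + g 1 • c + g 2 • a1) = 0 := by
          calc g 3 • A.mulVec c + (g 0 • a + g 1 • c + g 2 • a1)
              = g 0 • a + g 1 • c + g 2 • a1 + g 3 • A.mulVec c := by module
            _ = 0 := hg
        have hg3 : g 3 = 0 :=
          coeff_zero S' hcs (S'.add_mem (S'.add_mem (S'.smul_mem _ haS') (S'.smul_mem _ hcS'))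
            (S'.smul_mem _ ha1S')) hre
        rw [hg3, zero_smul, zero_add] at hre
        have hre2 : g 1 • c + (g 0 • a + g 2 • a1) = 0 := by
          calc g 1 • c + (g 0 • a + g 2 • a1) = g 0 • a + g 1 • c + g 2 • a1 := by module
            _ = 0 := hre
        have hg1 : g 1 = 0 :=
          coeff_zero S hc (S.add_mem (S.smul_mem _ haS) (S.smul_mem _ ha1S)) hre2
        rw [hg1, zero_smul, zero_add] at hre2
        have hre3 : g 0 • a + g 2 • a1 + (0 : ℂ) • a2 = 0 := by
          rw [zero_smul, add_zero]; exact hre2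
        obtain ⟨h0, h2, -⟩ := triple _ _ _ hre3
        intro i
        fin_cases i
        · exact h0
        · exact hg1
        · exact h2
        · exact hg3
    · -- m ≥ 4
      have hAm1ne : A ^ (m - 1) ≠ 0 := Nat.find_min hP (by omega)
      obtain ⟨x, hx⟩ := exists_mulVec_ne hAm1ne
      obtain ⟨j, hj⟩ : ∃ j, m = j + 4 := ⟨m - 4, by omega⟩
      have hstep : ∀ k : ℕ, A.mulVec ((A ^ k).mulVec x) = (A ^ (k + 1)).mulVec x := by
        intro k
        rw [Matrix.mulVec_mulVec, show A * A ^ k = A ^ (k + 1) from (pow_succ' A k).symm]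
      set u0 := (A ^ j).mulVec x with hu0e
      set u1 := (A ^ (j + 1)).mulVec x with hu1e
      set u2 := (A ^ (j + 2)).mulVec x with hu2e
      set u3 := (A ^ (j + 3)).mulVec x with hu3e
      have hu1 : A.mulVec u0 = u1 := hstep j
      have hu2 : A.mulVec u1 = u2 := hstep (j + 1)
      have hu3 : A.mulVec u2 = u3 := hstep (j + 2)
      have hu3ne : u3 ≠ 0 := by
        rw [hu3e]
        have h : m - 1 = j + 3 := by omega
        rwa [h] at hx
      have hu4 : A.mulVec u3 = 0 := by
        rw [hu3e, Matrix.mulVec_mulVec,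
          show A * A ^ (j + 3) = A ^ m by rw [hj]; exact (pow_succ' A (j + 3)).symm,
          hm0, Matrix.zero_mulVec]
      refine ⟨u0, u2, Fintype.linearIndependent_iff.mpr ?_⟩
      intro g hg
      rw [Fin.sum_univ_four] at hg
      simp only [Matrix.cons_val_zero, Matrix.cons_val_one, Matrix.head_cons,
        Matrix.cons_val_two, Matrix.tail_cons, Matrix.cons_val_three] at hg
      rw [hu1, hu3] at hg
      -- hg : g 0 • u0 + g 1 • u2 + g 2 • u1 + g 3 • u3 = 0
      have h1 := congrArg (fun z => A.mulVec z) hg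
      simp only [Matrix.mulVec_add, Matrix.mulVec_smul, hu1, hu2, hu3, hu4,
        smul_zero, add_zero, Matrix.mulVec_zero] at h1
      -- h1 : g 0 • u1 + g 1 • u3 + g 2 • u2 = 0
      have h2 := congrArg (fun z => A.mulVec z) h1
      simp only [Matrix.mulVec_add, Matrix.mulVec_smul, hu1, hu2, hu3, hu4,
        smul_zero, add_zero, Matrix.mulVec_zero] at h2
      -- h2 : g 0 • u2 + g 2 • u3 = 0
      have h3 := congrArg (fun z => A.mulVec z) h2
      simp only [Matrix.mulVec_add, Matrix.mulVec_smul, hu1, hu2, hu3, hu4,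
        smul_zero, add_zero, Matrix.mulVec_zero] at h3
      -- h3 : g 0 • u3 = 0
      have hg0 : g 0 = 0 := smul_ne_zero_iff_zero hu3ne h3
      rw [hg0, zero_smul, zero_add] at h2
      have hg2 : g 2 = 0 := smul_ne_zero_iff_zero hu3ne h2
      rw [hg0, hg2, zero_smul, zero_smul, zero_add, add_zero] at h1
      have hg1 : g 1 = 0 := smul_ne_zero_iff_zero hu3ne h1
      simp only [hg0, hg1, hg2, zero_smul, zero_add] at hg
      have hg3 : g 3 = 0 := smul_ne_zero_iff_zero hu3ne hg
      intro i
      fin_cases i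
      · exact hg0
      · exact hg1
      · exact hg2
      · exact hg3

lemma buildBasis (hn : 4 ≤ n) (c : Fin 4 → (Fin n → ℂ)) (hc : LinearIndependent ℂ c) :
    ∃ b : Basis (Fin n) ℂ (Fin n → ℂ),
      b ⟨0, Nat.lt_of_lt_of_le (Nat.zero_lt_succ 3) hn⟩ = c 0 ∧
      b ⟨1, Nat.lt_of_lt_of_le (Nat.one_lt_succ_succ 2) hn⟩ = c 1 ∧
      b ⟨n - 2, Nat.sub_lt (Nat.lt_of_lt_of_le (Nat.zero_lt_succ 3) hn) Nat.zero_lt_two⟩ = c 2 ∧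
      b ⟨n - 1, Nat.sub_lt (Nat.lt_of_lt_of_le (Nat.zero_lt_succ 3) hn) Nat.zero_lt_one⟩ = c 3 := by
  classical
  set S := Submodule.span ℂ (Set.range c) with hSdef
  obtain ⟨T, hT⟩ := Submodule.exists_isCompl S
  have hrankS : finrank ℂ S = 4 := by
    rw [hSdef, finrank_span_eq_card hc]
    simp
  have hrankT : finrank ℂ T = n - 4 := by
    have h := Submodule.finrank_add_eq_of_isCompl hT
    rw [hrankS, Module.finrank_fin_fun] at h
    omega
  set bT := Module.finBasis ℂ T with hbT
  set d : ℕ → (Fin n → ℂ) := fun j =>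
    if h : j < finrank ℂ T then (bT ⟨j, h⟩ : Fin n → ℂ) else 0 with hd
  set f : Fin n → (Fin n → ℂ) := fun i =>
    if (i : ℕ) = 0 then c 0 else if (i : ℕ) = 1 then c 1 else
    if (i : ℕ) = n - 2 then c 2 else if (i : ℕ) = n - 1 then c 3 else d ((i : ℕ) - 2) with hf
  have hdval : ∀ i : Fin (finrank ℂ ↥T), d (i : ℕ) = ((bT i : ↥T) : Fin n → ℂ) := by
    intro i
    rw [hd]
    show (if h : (i : ℕ) < finrank ℂ ↥T then ((bT ⟨(i : ℕ), h⟩ : ↥T) : Fin n → ℂ) else 0)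
        = ((bT i : ↥T) : Fin n → ℂ)
    rw [dif_pos i.2]
  have hf0 : f ⟨0, by omega⟩ = c 0 := by
    rw [hf]
    show (if (0 : ℕ) = 0 then c 0 else if (0 : ℕ) = 1 then c 1 else if (0 : ℕ) = n - 2 then c 2
      else if (0 : ℕ) = n - 1 then c 3 else d (0 - 2)) = c 0
    rw [if_pos rfl]
  have hf1 : f ⟨1, by omega⟩ = c 1 := by
    rw [hf]
    show (if (1 : ℕ) = 0 then c 0 else if (1 : ℕ) = 1 then c 1 else if (1 : ℕ) = n - 2 then c 2
      else if (1 : ℕ) = n - 1 then c 3 else d (1 - 2)) = c 1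
    rw [if_neg (by omega), if_pos rfl]
  have hf2 : f ⟨n - 2, by omega⟩ = c 2 := by
    rw [hf]
    show (if n - 2 = 0 then c 0 else if n - 2 = 1 then c 1 else if n - 2 = n - 2 then c 2
      else if n - 2 = n - 1 then c 3 else d (n - 2 - 2)) = c 2
    rw [if_neg (by omega), if_neg (by omega), if_pos rfl]
  have hf3 : f ⟨n - 1, by omega⟩ = c 3 := by
    rw [hf]
    show (if n - 1 = 0 then c 0 else if n - 1 = 1 then c 1 else if n - 1 = n - 2 then c 2
      else if n - 1 = n - 1 then c 3 else d (n - 1 - 2)) = c 3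
    rw [if_neg (by omega), if_neg (by omega), if_neg (by omega), if_pos rfl]
  have hfd : ∀ k : ℕ, k < n - 4 → ∀ h : k + 2 < n, f ⟨k + 2, h⟩ = d k := by
    intro k hk h
    rw [hf]
    show (if k + 2 = 0 then c 0 else if k + 2 = 1 then c 1 else if k + 2 = n - 2 then c 2
      else if k + 2 = n - 1 then c 3 else d (k + 2 - 2)) = d k
    rw [if_neg (by omega), if_neg (by omega), if_neg (by omega), if_neg (by omega)]
    congr 1
  have hspan : ⊤ ≤ Submodule.span ℂ (Set.range f) := by
    intro x _
    have hx : x ∈ S ⊔ T := by rw [hT.sup_eq_top]; trivial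
    obtain ⟨s, hs, t, ht, rfl⟩ := Submodule.mem_sup.mp hx
    apply Submodule.add_mem
    · -- s ∈ span range f
      have hsub : S ≤ Submodule.span ℂ (Set.range f) := by
        rw [hSdef]
        apply Submodule.span_le.mpr
        rintro _ ⟨i, rfl⟩
        apply Submodule.subset_span
        fin_cases i
        · exact ⟨⟨0, by omega⟩, hf0⟩
        · exact ⟨⟨1, by omega⟩, hf1⟩
        · exact ⟨⟨n - 2, by omega⟩, hf2⟩
        · exact ⟨⟨n - 1, by omega⟩, hf3⟩
      exact hsub hs
    · -- t ∈ span range f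
      have hsub : T ≤ Submodule.span ℂ (Set.range f) := by
        intro y hy
        have : (⟨y, hy⟩ : T) ∈ (⊤ : Submodule ℂ T) := trivial
        rw [← bT.span_eq] at this
        have hmap := Submodule.mem_map_of_mem (f := T.subtype) this
        rw [Submodule.map_span] at hmap
        refine Submodule.span_mono ?_ hmap
        rintro _ ⟨_, ⟨i, rfl⟩, rfl⟩
        have hi : (i : ℕ) < n - 4 := by
          have := i.2; omega
        refine ⟨⟨(i : ℕ) + 2, by omega⟩, ?_⟩
        rw [hfd (i : ℕ) hi (by omega), hdval i]
        rfl
      exact hsub ht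
  have hcard : Fintype.card (Fin n) = finrank ℂ (Fin n → ℂ) := by
    rw [Module.finrank_fin_fun, Fintype.card_fin]
  refine ⟨basisOfTopLeSpanOfCardEqFinrank f hspan hcard, ?_, ?_, ?_, ?_⟩ <;>
    rw [coe_basisOfTopLeSpanOfCardEqFinrank]
  · exact hf0
  · exact hf1
  · exact hf2
  · exact hf3

end Stmt5Aux

open Stmt5Aux in
theorem stmt_5 (n : ℕ) (hn : 4 ≤ n)
    -- `μ(X) = X_{n,1}·X_{n−1,2} − X_{n−1,1}·X_{n,2}` (1-based indices)
    (mu : Mat n → ℂ)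
    (hmu : mu = fun X =>
      X ⟨n - 1, by omega⟩ ⟨0, by omega⟩ * X ⟨n - 2, by omega⟩ ⟨1, by omega⟩ -
      X ⟨n - 2, by omega⟩ ⟨0, by omega⟩ * X ⟨n - 1, by omega⟩ ⟨1, by omega⟩)
    (X : Mat n) (hXsl : X.trace = 0) (hXnil : IsNilpotent X)
    (hvanish : ∀ g : GLn n, mu ((↑g : Mat n) * X * (↑g⁻¹ : Mat n)) = 0) :
    X.rank ≤ 1 := by
  classical
  by_contra hrank
  push_neg at hrank
  obtain ⟨v, w, hvw⟩ := key hn X hXnil hrank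
  set c : Fin 4 → (Fin n → ℂ) := ![v, w, X.mulVec v, X.mulVec w] with hcdef
  obtain ⟨b, hb0, hb1, hb2, hb3⟩ := buildBasis hn c hvw
  set Q := (Pi.basisFun ℂ (Fin n)).toMatrix ⇑b with hQdef
  have hQ : ∀ i j, Q i j = b j i := by
    intro i j
    rw [hQdef, Module.Basis.toMatrix_apply, Pi.basisFun_repr]
  haveI : Invertible Q := (Pi.basisFun ℂ (Fin n)).invertibleToMatrix b
  have hUnit : IsUnit Q := isUnit_of_invertible Q
  have hdet : IsUnit Q.det := (Matrix.isUnit_iff_isUnit_det Q).mp hUnit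
  set u := hUnit.unit with hu
  have hcol : ∀ (j j' : Fin n), X.mulVec (⇑b j) = b j' →
      ∀ i, (Q⁻¹ * X * Q) i j = (1 : Mat n) i j' := by
    intro j j' hjj i
    have hXQ : ∀ k, (X * Q) k j = Q k j' := by
      intro k
      rw [Matrix.mul_apply]
      have h1 : (X.mulVec (⇑b j)) k = (⇑b j') k := congrFun hjj k
      rw [hQ k j']
      rw [← h1]
      simp only [Matrix.mulVec, dotProduct, hQ]
    calc (Q⁻¹ * X * Q) i j = (Q⁻¹ * (X * Q)) i j := by rw [Matrix.mul_assoc]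
      _ = ∑ k, Q⁻¹ i k * (X * Q) k j := Matrix.mul_apply
      _ = ∑ k, Q⁻¹ i k * Q k j' := by
          apply Finset.sum_congr rfl
          intro k _
          rw [hXQ k]
      _ = (Q⁻¹ * Q) i j' := (Matrix.mul_apply).symm
      _ = (1 : Mat n) i j' := by rw [Matrix.nonsing_inv_mul Q hdet]
  have hc0 : c 0 = v := rfl
  have hc1 : c 1 = w := rfl
  have hc2 : c 2 = X.mulVec v := by simp [hcdef]
  have hc3 : c 3 = X.mulVec w := by simp [hcdef]
  have hcolv : ∀ i, (Q⁻¹ * X * Q) i ⟨0, by omega⟩ = (1 : Mat n) i ⟨n - 2, by omega⟩ := by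
    apply hcol
    rw [hb0, hb2, hc0, hc2]
  have hcolw : ∀ i, (Q⁻¹ * X * Q) i ⟨1, by omega⟩ = (1 : Mat n) i ⟨n - 1, by omega⟩ := by
    apply hcol
    rw [hb1, hb3, hc1, hc3]
  have hg := hvanish u⁻¹
  rw [hmu] at hg
  simp only [Matrix.coe_units_inv, inv_inv] at hg
  have hQu : (↑u : Mat n) = Q := rfl
  rw [hQu] at hg
  -- hg is about Q⁻¹ * X * Q
  rw [hcolv ⟨n - 1, by omega⟩, hcolv ⟨n - 2, by omega⟩,
    hcolw ⟨n - 2, by omega⟩, hcolw ⟨n - 1, by omega⟩] at hg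
  rw [Matrix.one_apply_ne (Fin.ne_of_val_ne (by omega : (n - 1 : ℕ) ≠ (n - 2 : ℕ))),
    Matrix.one_apply_ne (Fin.ne_of_val_ne (by omega : (n - 2 : ℕ) ≠ (n - 1 : ℕ))),
    Matrix.one_apply_eq, Matrix.one_apply_eq] at hg
  norm_num at hg
end
end

section
/- Let m ≥ 2. If X ∈ sl_{2m}(ℂ) is nilpotent and the (2m,1) entry of g·X²·g⁻¹ vanishes for every g ∈ GL_{2m}(ℂ), then X² = 0 (hence also rank X ≤ m, i.e. X lies in the closure of the nilpotent conjugation orbit corresponding to the partition (2^m) of 2m). -/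
open Matrix

noncomputable section

theorem stmt_9 (m : ℕ) (hm : 2 ≤ m)
    (X : Mat (2 * m)) (hXsl : X.trace = 0) (hXnil : IsNilpotent X)
    -- the `(2m,1)` entry of `g·X²·g⁻¹` vanishes for every `g ∈ GL_{2m}(ℂ)`
    (hvanish : ∀ g : GLn (2 * m),
      ((↑g : Mat (2 * m)) * (X * X) * (↑g⁻¹ : Mat (2 * m)))
        ⟨2 * m - 1, by omega⟩ ⟨0, by omega⟩ = 0) :
    X * X = 0 ∧ X.rank ≤ m := by
  set A := X * X with hA
  set p : Fin (2 * m) := ⟨2 * m - 1, by omega⟩ with hp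
  set q : Fin (2 * m) := ⟨0, by omega⟩ with hq
  have hpq : p ≠ q := by
    simp only [hp, hq, ne_eq, Fin.mk.injEq]
    omega
  -- permutation elements of GL
  have permGL : ∀ σ : Equiv.Perm (Fin (2 * m)), ∃ g : GLn (2 * m),
      (↑g : Mat (2 * m)) = σ.toPEquiv.toMatrix ∧
      (↑g⁻¹ : Mat (2 * m)) = σ.symm.toPEquiv.toMatrix := by
    intro σ
    refine ⟨⟨σ.toPEquiv.toMatrix, σ.symm.toPEquiv.toMatrix, ?_, ?_⟩, rfl, rfl⟩
    · rw [← PEquiv.toMatrix_trans, ← Equiv.toPEquiv_trans]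
      simp
    · rw [← PEquiv.toMatrix_trans, ← Equiv.toPEquiv_trans]
      simp
  -- step 1: all off-diagonal entries of any conjugate of A vanish
  have hvan' : ∀ g : GLn (2 * m), ∀ i j : Fin (2 * m), i ≠ j →
      ((↑g : Mat (2 * m)) * A * (↑g⁻¹ : Mat (2 * m))) i j = 0 := by
    intro g i j hij
    -- a permutation σ with σ p = i, σ q = j
    obtain ⟨σ, hσp, hσq⟩ : ∃ σ : Equiv.Perm (Fin (2 * m)), σ p = i ∧ σ q = j := by
      set τ := Equiv.swap p i with hτ
      have hτp : τ p = i := Equiv.swap_apply_left p i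
      have hne : τ q ≠ i := by
        rw [← hτp]; exact fun h => hpq (τ.injective h).symm
      refine ⟨τ.trans (Equiv.swap (τ q) j), ?_, ?_⟩
      · simp only [Equiv.trans_apply, hτp]
        exact Equiv.swap_apply_of_ne_of_ne (Ne.symm hne) hij
      · simp only [Equiv.trans_apply]
        exact Equiv.swap_apply_left _ _
    obtain ⟨P, hP, hPinv⟩ := permGL σ
    have h := hvanish (P * g)
    rw [_root_.mul_inv_rev] at h
    simp only [Units.val_mul, hP, hPinv] at h
    rw [show σ.toPEquiv.toMatrix * (↑g : Mat (2 * m)) * (X * X) *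
          ((↑g⁻¹ : Mat (2 * m)) * σ.symm.toPEquiv.toMatrix)
        = σ.toPEquiv.toMatrix * ((↑g : Mat (2 * m)) * (X * X) * (↑g⁻¹ : Mat (2 * m)))
          * σ.symm.toPEquiv.toMatrix by
      noncomm_ring] at h
    rw [PEquiv.toMatrix_toPEquiv_mul, PEquiv.mul_toMatrix_toPEquiv] at h
    simpa [Matrix.submatrix_apply, hσp, hσq, hA] using h
  -- step 2: all diagonal entries of any conjugate of A are equal
  have hdiagEq : ∀ g : GLn (2 * m), ∀ i j : Fin (2 * m), i ≠ j →
      ((↑g : Mat (2 * m)) * A * (↑g⁻¹ : Mat (2 * m))) i i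
        = ((↑g : Mat (2 * m)) * A * (↑g⁻¹ : Mat (2 * m))) j j := by
    intro g i j hij
    set B := (↑g : Mat (2 * m)) * A * (↑g⁻¹ : Mat (2 * m)) with hB
    set E : Mat (2 * m) := Matrix.single i j 1 with hE
    have hEE : E * E = 0 := Matrix.single_mul_single_of_ne (1 : ℂ) i j i (Ne.symm hij) 1
    have hval : (1 + E) * (1 - E) = (1 : Mat (2 * m)) := by
      have h' : (1 + E) * (1 - E) = 1 - E * E := by noncomm_ring
      rw [h', hEE, sub_zero]
    have hinv : (1 - E) * (1 + E) = (1 : Mat (2 * m)) := by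
      have h' : (1 - E) * (1 + E) = 1 - E * E := by noncomm_ring
      rw [h', hEE, sub_zero]
    let T : GLn (2 * m) := ⟨1 + E, 1 - E, hval, hinv⟩
    have hTval : (↑T : Mat (2 * m)) = 1 + E := rfl
    have hTinv : (↑T⁻¹ : Mat (2 * m)) = 1 - E := rfl
    have h := hvan' (T * g) i j hij
    rw [_root_.mul_inv_rev] at h
    simp only [Units.val_mul, hTval, hTinv] at h
    rw [show ((1 + E) * (↑g : Mat (2 * m)) * A * ((↑g⁻¹ : Mat (2 * m)) * (1 - E)))
        = B + E * B - B * E - E * B * E by rw [hB]; noncomm_ring] at h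
    have hoff1 : B i j = 0 := hvan' g i j hij
    have hoff2 : B j i = 0 := hvan' g j i (Ne.symm hij)
    simp only [Matrix.sub_apply, Matrix.add_apply, hE,
      Matrix.single_mul_apply_same,
      Matrix.mul_single_apply_same, one_mul, mul_one,
      hoff1, hoff2] at h
    linear_combination -h
  -- deduce A is scalar
  have hoffA : ∀ i j : Fin (2 * m), i ≠ j → A i j = 0 := by
    intro i j hij
    have h := hvan' 1 i j hij
    simpa using h
  have hdiagA : ∀ i j : Fin (2 * m), A i i = A j j := by
    intro i j
    rcases eq_or_ne i j with rfl | hij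
    · rfl
    · have h := hdiagEq 1 i j hij
      simpa using h
  have hscalar : A = (A q q) • (1 : Mat (2 * m)) := by
    ext i j
    rcases eq_or_ne i j with rfl | hij
    · simp [hdiagA i q]
    · simp [hoffA i j hij, Matrix.one_apply_ne hij]
  -- A is nilpotent, so the scalar is 0
  obtain ⟨k, hk⟩ := hXnil
  have hAk : A ^ k = 0 := by
    rw [hA, (Commute.refl X).mul_pow, hk, mul_zero]
  have h1 : (A q q) ^ k • (1 : Mat (2 * m)) = 0 := by
    calc (A q q) ^ k • (1 : Mat (2 * m)) = (A q q) ^ k • (1 : Mat (2 * m)) ^ k := by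
          rw [one_pow]
      _ = ((A q q) • (1 : Mat (2 * m))) ^ k := (smul_pow _ _ _).symm
      _ = A ^ k := by rw [← hscalar]
      _ = 0 := hAk
  have hck : (A q q) ^ k = 0 := by
    have := congrFun (congrFun h1 q) q
    simpa using this
  have hc0 : A q q = 0 := IsNilpotent.eq_zero ⟨k, hck⟩
  have hA0 : X * X = 0 := by
    rw [← hA, hscalar, hc0, zero_smul]
  refine ⟨hA0, ?_⟩
  -- rank bound
  have hrange : LinearMap.range X.mulVecLin ≤ LinearMap.ker X.mulVecLin := by
    rintro v ⟨w, rfl⟩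
    simp only [LinearMap.mem_ker, Matrix.mulVecLin_apply]
    rw [Matrix.mulVec_mulVec, hA0, Matrix.zero_mulVec]
  have h1 : X.rank ≤ Module.finrank ℂ (LinearMap.ker X.mulVecLin) := by
    rw [Matrix.rank]
    exact Submodule.finrank_mono hrange
  have h2 := LinearMap.finrank_range_add_finrank_ker X.mulVecLin
  rw [Module.finrank_pi, Fintype.card_fin] at h2
  have h3 : X.rank = Module.finrank ℂ (LinearMap.range X.mulVecLin) := by rw [Matrix.rank]
  omega
end
end

section
/- Let m ≥ 2. For λ = (λ_1, …, λ_{2m−1}) ∈ ℂ^{2m−1} and 1 ≤ i ≤ 2m−1 define q̂_i(λ) = −(1/m)·Σ_{j=1}^{i−1} j·λ_j + ((m−i)/m)·λ_i + (1/m)·Σ_{j=i+1}^{2m−1} (2m−j)·λ_j + (m − i). Then λ satisfies λ_i·q̂_i(λ) = 0 for all i = 1, …, 2m−1 if and only if there exist s ∈ {1, …, 2m−1}, integers 1 ≤ i_1 < ⋯ < i_s ≤ 2m−1 with Σ_{k=1}^{s}(−1)^k·i_k = (−1)^s·m, and t ∈ ℂ, such that λ_{i_1} = t, λ_{i_j}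 = (−1)^j·(c_j − t) for 2 ≤ j ≤ s, where c_j = i_1 + 2·Σ_{k=2}^{j−1}(−1)^{k+1}·i_k + (−1)^{j+1}·i_j, and λ_k = 0 for every k ∉ {i_1, …, i_s}. -/
noncomputable section

namespace Stmt11

def Yf (m : ℕ) (lam : ℕ → ℂ) (p : ℕ) : ℂ :=
  2 * (∑ l ∈ Finset.Ico p (2 * m), lam l) + ((2 * m : ℂ) - (p : ℂ))

def SYf (m : ℕ) (lam : ℕ → ℂ) : ℂ := ∑ p ∈ Finset.Icc 1 (2 * m), Yf m lam p

lemma Yf_end (m : ℕ) (lam : ℕ → ℂ) : Yf m lam (2 * m) = 0 := by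
  simp [Yf]

lemma Yf_diff (m : ℕ) (lam : ℕ → ℂ) (p : ℕ) (hp : p < 2 * m) :
    Yf m lam p = Yf m lam (p + 1) + (2 * lam p + 1) := by
  unfold Yf
  rw [Finset.sum_eq_sum_Ico_succ_bot hp]
  push_cast
  ring

lemma Yf_drops (m : ℕ) (lam : ℕ → ℂ) (a b : ℕ) (hab : a ≤ b) (hb : b ≤ 2 * m)
    (h0 : ∀ l, a ≤ l → l < b → lam l = 0) :
    Yf m lam a = Yf m lam b + ((b : ℂ) - (a : ℂ)) := by
  unfold Yf
  rw [← Finset.sum_Ico_consecutive _ hab hb]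
  rw [Finset.sum_eq_zero (fun l hl => h0 l (Finset.mem_Ico.mp hl).1 (Finset.mem_Ico.mp hl).2)]
  ring

lemma SYf_eq (m : ℕ) (lam : ℕ → ℂ) (hm : 1 ≤ m) :
    SYf m lam = 2 * (∑ l ∈ Finset.Ico 1 (2 * m), (l : ℂ) * lam l) + (m : ℂ) * (2 * m - 1) := by
  unfold SYf Yf
  rw [Finset.sum_add_distrib, ← Finset.mul_sum]
  have hIccIco : Finset.Icc 1 (2*m) = Finset.Ico 1 (2*m+1) := rfl
  have h1 : ∑ p ∈ Finset.Icc 1 (2*m), (∑ l ∈ Finset.Ico p (2*m), lam l)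
      = ∑ l ∈ Finset.Ico 1 (2*m), (l : ℂ) * lam l := by
    have e1 : ∑ p ∈ Finset.Icc 1 (2*m), (∑ l ∈ Finset.Ico p (2*m), lam l)
        = ∑ p ∈ Finset.Ico 1 (2*m), (∑ l ∈ Finset.Ico p (2*m), lam l) := by
      rw [hIccIco, Finset.sum_Ico_succ_top (by omega)]
      simp
    rw [e1, Finset.sum_Ico_Ico_comm]
    apply Finset.sum_congr rfl
    intro l hl
    rw [Finset.sum_const, Nat.card_Ico, nsmul_eq_mul]
    simp
  rw [h1]
  have h2 : ∑ p ∈ Finset.Icc 1 (2*m), ((2*m : ℂ) - (p:ℂ)) = (m : ℂ) * (2*m - 1) := by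
    have hg : (∑ p ∈ Finset.Icc 1 (2*m), p) * 2 = (2*m) * (2*m+1) := by
      have h0 : Finset.Icc 1 (2*m) = Finset.Ico 1 (2*m+1) := rfl
      have h1 : Finset.Ico 0 (2*m+1) = Finset.range (2*m+1) := by
        rw [Finset.range_eq_Ico]
      have h2 : (∑ p ∈ Finset.Ico 0 (2*m+1), p) = ∑ p ∈ Finset.Ico 1 (2*m+1), p := by
        rw [Finset.sum_eq_sum_Ico_succ_bot (by omega)]
        simp
      have := Finset.sum_range_id_mul_two (2*m+1)
      rw [h0, ← h2, h1, this]
      simp only [Nat.add_sub_cancel]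
      ring
    have hgC : (∑ p ∈ Finset.Icc 1 (2*m), (p:ℂ)) * 2 = (2*m) * (2*m+1) := by
      have := congrArg (fun z : ℕ => (z : ℂ)) hg
      push_cast at this ⊢
      exact this
    rw [Finset.sum_sub_distrib, Finset.sum_const, Nat.card_Icc]
    simp only [Nat.add_sub_cancel, nsmul_eq_mul]
    push_cast
    linear_combination -hgC / 2
  rw [h2]

lemma key_identity (m : ℕ) (hm : 1 ≤ m) (lam : ℕ → ℂ) (qhat : ℕ → ℂ)
    (hq : ∀ i : ℕ, qhat i =
      -(1 / (m : ℂ)) * (∑ j ∈ Finset.Ico 1 i, (j : ℂ) * lam j) +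
      (((m : ℂ) - (i : ℂ)) / (m : ℂ)) * lam i +
      (1 / (m : ℂ)) * (∑ j ∈ Finset.Ico (i + 1) (2 * m), ((2 * (m : ℂ)) - (j : ℂ)) * lam j) +
      ((m : ℂ) - (i : ℂ))) (p : ℕ) (hp1 : 1 ≤ p) (hp2 : p ≤ 2 * m - 1) :
    (m : ℂ) * (Yf m lam p + Yf m lam (p + 1)) - SYf m lam = 2 * m * qhat p := by
  have hmC : (m : ℂ) ≠ 0 := Nat.cast_ne_zero.mpr (by omega)
  have hp2m : p < 2 * m := by omega
  set B1 := ∑ j ∈ Finset.Ico 1 p, (j : ℂ) * lam j with hB1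
  set S2 := ∑ j ∈ Finset.Ico (p+1) (2*m), lam j with hS2
  set B2 := ∑ j ∈ Finset.Ico (p+1) (2*m), (j : ℂ) * lam j with hB2
  have hYp1 : Yf m lam (p+1) = 2 * S2 + ((2*m : ℂ) - (p+1 : ℕ)) := rfl
  have hYp : Yf m lam p = 2 * lam p + 2 * S2 + 1 + ((2*m : ℂ) - (p+1 : ℕ)) := by
    rw [Yf_diff m lam p hp2m, hYp1]; ring
  have hSY : SYf m lam = 2 * (B1 + p * lam p + B2) + (m : ℂ) * (2*m - 1) := by
    rw [SYf_eq m lam hm]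
    congr 2
    rw [← Finset.sum_Ico_consecutive (fun j => (j:ℂ) * lam j) (show 1 ≤ p by omega) (le_of_lt hp2m),
      Finset.sum_eq_sum_Ico_succ_bot hp2m]
    ring
  have hq2 : ∑ j ∈ Finset.Ico (p+1) (2*m), ((2 * (m:ℂ)) - (j:ℂ)) * lam j
      = 2 * m * S2 - B2 := by
    rw [hS2, hB2, Finset.mul_sum, ← Finset.sum_sub_distrib]
    apply Finset.sum_congr rfl
    intro j _; ring
  rw [hq p, hq2, hYp, hYp1, hSY]
  push_cast
  field_simp
  ring

/-- Telescoping identity for flip/drop walks. -/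
lemma tele (Z : ℕ → ℂ) (n : ℕ) (hn : 1 ≤ n)
    (hstep : ∀ p, 1 ≤ p → p < n → Z (p+1) = -Z p ∨ Z (p+1) = Z p - 1) :
    ∑ p ∈ Finset.Icc 1 n, Z p = (Z 1 ^ 2 - Z n ^ 2) / 2 + (Z 1 + Z n) / 2 := by
  induction n, hn using Nat.le_induction with
  | base => simp
  | succ n hn ih =>
    rw [← Finset.Ico_add_one_right_eq_Icc, Finset.sum_Ico_succ_top (by omega), Finset.Ico_add_one_right_eq_Icc,
      ih (fun p h1 h2 => hstep p h1 (by omega))]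
    rcases hstep n hn (by omega) with h | h <;> rw [h] <;> ring

section Chain

variable {m s : ℕ} {lam : ℕ → ℂ} {ii : ℕ → ℕ}

/-- weak monotonicity -/
lemma wmono (hmono : ∀ k l, 1 ≤ k → k < l → l ≤ s → ii k < ii l)
    {k l : ℕ} (h1 : 1 ≤ k) (h2 : k ≤ l) (h3 : l ≤ s) : ii k ≤ ii l := by
  rcases eq_or_lt_of_le h2 with h | h
  · exact le_of_eq (congrArg ii h)
  · exact le_of_lt (hmono k l h1 h h3)

lemma lam_between (hm : 2 ≤ m)
    (hbd : ∀ k, 1 ≤ k → k ≤ s → 1 ≤ ii k ∧ ii k ≤ 2*m-1)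
    (hmono : ∀ k l, 1 ≤ k → k < l → l ≤ s → ii k < ii l)
    (hvan : ∀ k, 1 ≤ k → k ≤ 2*m-1 → (∀ j, 1 ≤ j → j ≤ s → ii j ≠ k) → lam k = 0)
    {k l : ℕ} (hk1 : 1 ≤ k) (hks : k + 1 ≤ s) (hl1 : ii k < l) (hl2 : l < ii (k+1)) :
    lam l = 0 := by
  apply hvan l (by have := (hbd k hk1 (by omega)).1; omega)
    (by have := (hbd (k+1) (by omega) hks).2; omega)
  intro j hj1 hjs hne
  rcases le_or_gt j k with h | h
  · have := wmono hmono hj1 h (by omega); omega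
  · have := wmono hmono (show 1 ≤ k+1 by omega) h hjs; omega

lemma lam_below (hm : 2 ≤ m) (hs : 1 ≤ s)
    (hmono : ∀ k l, 1 ≤ k → k < l → l ≤ s → ii k < ii l)
    (hvan : ∀ k, 1 ≤ k → k ≤ 2*m-1 → (∀ j, 1 ≤ j → j ≤ s → ii j ≠ k) → lam k = 0)
    (hbd : ∀ k, 1 ≤ k → k ≤ s → 1 ≤ ii k ∧ ii k ≤ 2*m-1)
    {l : ℕ} (hl1 : 1 ≤ l) (hl2 : l < ii 1) : lam l = 0 := by
  apply hvan l hl1 (by have := (hbd 1 le_rfl hs).2; omega)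
  intro j hj1 hjs hne
  have := wmono hmono le_rfl hj1 hjs; omega

lemma lam_above (hm : 2 ≤ m) (hs : 1 ≤ s)
    (hmono : ∀ k l, 1 ≤ k → k < l → l ≤ s → ii k < ii l)
    (hvan : ∀ k, 1 ≤ k → k ≤ 2*m-1 → (∀ j, 1 ≤ j → j ≤ s → ii j ≠ k) → lam k = 0)
    {l : ℕ} (hl1 : ii s < l) (hl2 : l ≤ 2*m-1) : lam l = 0 := by
  apply hvan l (by omega)  hl2
  intro j hj1 hjs hne
  have := wmono hmono hj1 hjs le_rfl; omega

/-- one-step flip difference identity -/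
lemma step_diff (hm : 2 ≤ m)
    (hbd : ∀ k, 1 ≤ k → k ≤ s → 1 ≤ ii k ∧ ii k ≤ 2*m-1)
    (hmono : ∀ k l, 1 ≤ k → k < l → l ≤ s → ii k < ii l)
    (hvan : ∀ k, 1 ≤ k → k ≤ 2*m-1 → (∀ j, 1 ≤ j → j ≤ s → ii j ≠ k) → lam k = 0)
    {k : ℕ} (hk1 : 1 ≤ k) (hks : k + 1 ≤ s) :
    (Yf m lam (ii k) + Yf m lam (ii k + 1))
      - (Yf m lam (ii (k+1)) + Yf m lam (ii (k+1) + 1))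
    = 2 * (lam (ii k) + lam (ii (k+1)) + ((ii (k+1) : ℂ) - (ii k : ℂ))) := by
  have hbk := hbd k hk1 (by omega)
  have hbk1 := hbd (k+1) (by omega) hks
  have hlt : ii k < ii (k+1) := hmono k (k+1) hk1 (by omega) hks
  have h1 : Yf m lam (ii k) = Yf m lam (ii k + 1) + (2 * lam (ii k) + 1) :=
    Yf_diff m lam _ (by omega)
  have h2 : Yf m lam (ii (k+1)) = Yf m lam (ii (k+1) + 1) + (2 * lam (ii (k+1)) + 1) :=
    Yf_diff m lam _ (by omega)
  have h3 : Yf m lam (ii k + 1) = Yf m lam (ii (k+1)) + (((ii (k+1) : ℂ)) - ((ii k + 1 : ℕ) : ℂ)) := by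
    apply Yf_drops m lam _ _ (by omega) (by omega)
    intro l hl1 hl2
    exact lam_between hm hbd hmono hvan hk1 hks (by omega) hl2
  rw [h1, h3, h2]
  push_cast
  ring

/-- endpoint: `Y_{ii s + 1} = 2m − 1 − ii s` -/
lemma end_val (hm : 2 ≤ m) (hs : 1 ≤ s)
    (hbd : ∀ k, 1 ≤ k → k ≤ s → 1 ≤ ii k ∧ ii k ≤ 2*m-1)
    (hmono : ∀ k l, 1 ≤ k → k < l → l ≤ s → ii k < ii l)
    (hvan : ∀ k, 1 ≤ k → k ≤ 2*m-1 → (∀ j, 1 ≤ j → j ≤ s → ii j ≠ k) → lam k = 0) :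
    Yf m lam (ii s + 1) = (2 * m : ℂ) - 1 - (ii s : ℂ) := by
  have hbs := hbd s hs le_rfl
  have h := Yf_drops m lam (ii s + 1) (2*m) (by omega) le_rfl
    (fun l hl1 hl2 => lam_above hm hs hmono hvan (by omega) (by omega))
  rw [h, Yf_end]
  push_cast
  ring

/-- `Y_1 = Y_{ii 1} + (ii 1 − 1)` -/
lemma start_val (hm : 2 ≤ m) (hs : 1 ≤ s)
    (hbd : ∀ k, 1 ≤ k → k ≤ s → 1 ≤ ii k ∧ ii k ≤ 2*m-1)
    (hmono : ∀ k l, 1 ≤ k → k < l → l ≤ s → ii k < ii l)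
    (hvan : ∀ k, 1 ≤ k → k ≤ 2*m-1 → (∀ j, 1 ≤ j → j ≤ s → ii j ≠ k) → lam k = 0) :
    Yf m lam 1 = Yf m lam (ii 1) + ((ii 1 : ℂ) - 1) := by
  have hb1 := hbd 1 le_rfl hs
  have h := Yf_drops m lam 1 (ii 1) (by omega) (by omega)
    (fun l hl1 hl2 => lam_below hm hs hmono hvan hbd (by omega) hl2)
  rw [h]
  push_cast
  ring

end Chain

def Cfun (ii : ℕ → ℕ) (j : ℕ) : ℂ :=
  (ii 1 : ℂ) + 2 * (∑ k ∈ Finset.Ico 2 j, (-1:ℂ)^(k+1) * (ii k:ℂ)) + (-1:ℂ)^(j+1) * (ii j:ℂ)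

def sigC (ii : ℕ → ℕ) (s : ℕ) : ℂ := ∑ k ∈ Finset.Icc 1 s, (-1:ℂ)^k * (ii k:ℂ)

lemma Cfun_two (ii : ℕ → ℕ) : Cfun ii 2 = (ii 1 : ℂ) - (ii 2 : ℂ) := by
  unfold Cfun
  rw [Finset.Ico_self, Finset.sum_empty]
  ring

lemma Cfun_rec (ii : ℕ → ℕ) (j : ℕ) (hj : 2 ≤ j) :
    Cfun ii (j+1) = Cfun ii j + (-1:ℂ)^j * ((ii (j+1) : ℂ) - (ii j : ℂ)) := by
  unfold Cfun
  rw [Finset.sum_Ico_succ_top hj]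
  rw [pow_succ, pow_succ]
  ring

lemma Cfun_sig (ii : ℕ → ℕ) (s : ℕ) (hs : 2 ≤ s) :
    Cfun ii s = -(ii 1 : ℂ) - 2 * sigC ii s + (-1:ℂ)^s * (ii s : ℂ) := by
  unfold Cfun sigC
  have h1 : Finset.Icc 1 s = Finset.Ico 1 (s+1) := rfl
  rw [h1, Finset.sum_eq_sum_Ico_succ_bot (show 1 < s + 1 by omega),
    Finset.sum_Ico_succ_top hs]
  have h2 : ∑ k ∈ Finset.Ico 2 s, (-1:ℂ)^(k+1) * (ii k:ℂ)
      = -∑ k ∈ Finset.Ico 2 s, (-1:ℂ)^k * (ii k:ℂ) := by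
    rw [← Finset.sum_neg_distrib]
    apply Finset.sum_congr rfl
    intro k _
    rw [pow_succ]; ring
  rw [h2, pow_succ]
  ring

lemma rec_to_form {s : ℕ} {lam : ℕ → ℂ} {ii : ℕ → ℕ}
    (hrec : ∀ k, 1 ≤ k → k + 1 ≤ s →
      lam (ii k) + lam (ii (k+1)) + ((ii (k+1) : ℂ) - (ii k : ℂ)) = 0) :
    ∀ j, 2 ≤ j → j ≤ s → lam (ii j) = (-1:ℂ)^j * (Cfun ii j - lam (ii 1)) := by
  intro j hj2 hjs
  induction j, hj2 using Nat.le_induction with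
  | base =>
    have h := hrec 1 le_rfl (by omega)
    rw [Cfun_two]
    have : lam (ii 2) = - lam (ii 1) - ((ii 2:ℂ) - ii 1) := by linear_combination h
    rw [this]; ring
  | succ j hj ih =>
    have h := hrec j (by omega) (by omega)
    have hihj := ih (by omega)
    rw [Cfun_rec ii j hj]
    have : lam (ii (j+1)) = - lam (ii j) - ((ii (j+1):ℂ) - ii j) := by linear_combination h
    rw [this, hihj]
    simp only [pow_succ]
    rcases Nat.even_or_odd j with h | h
    · rw [h.neg_one_pow]; ring
    · rw [h.neg_one_pow]; ring

lemma form_to_rec {s : ℕ} {lam : ℕ → ℂ} {ii : ℕ → ℕ} {t : ℂ}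
    (ht : lam (ii 1) = t)
    (hform : ∀ j, 2 ≤ j → j ≤ s → lam (ii j) = (-1:ℂ)^j * (Cfun ii j - t)) :
    ∀ k, 1 ≤ k → k + 1 ≤ s →
      lam (ii k) + lam (ii (k+1)) + ((ii (k+1) : ℂ) - (ii k : ℂ)) = 0 := by
  intro k hk1 hks
  rcases eq_or_lt_of_le hk1 with h1 | h1
  · have h2 := hform 2 le_rfl (by omega)
    rw [← h1, ht, h2, Cfun_two]
    ring
  · have hk2 : 2 ≤ k := h1
    have ha := hform k hk2 (by omega)
    have hb := hform (k+1) (by omega) hks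
    rw [ha, hb, Cfun_rec ii k hk2]
    simp only [pow_succ]
    rcases Nat.even_or_odd k with h | h
    · rw [h.neg_one_pow]; ring
    · rw [h.neg_one_pow]; ring

section Chain2

variable {m s : ℕ} {lam : ℕ → ℂ} {ii : ℕ → ℕ}

lemma Y1_eq (hm : 2 ≤ m) (hs : 1 ≤ s)
    (hbd : ∀ k, 1 ≤ k → k ≤ s → 1 ≤ ii k ∧ ii k ≤ 2*m-1)
    (hmono : ∀ k l, 1 ≤ k → k < l → l ≤ s → ii k < ii l)
    (hvan : ∀ k, 1 ≤ k → k ≤ 2*m-1 → (∀ j, 1 ≤ j → j ≤ s → ii j ≠ k) → lam k = 0) :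
    Yf m lam 1 = (Yf m lam (ii 1) + Yf m lam (ii 1 + 1) + 2 * lam (ii 1) + 1) / 2
      + (ii 1 : ℂ) - 1 := by
  have hb1 := hbd 1 le_rfl hs
  have hd : Yf m lam (ii 1) = Yf m lam (ii 1 + 1) + (2 * lam (ii 1) + 1) :=
    Yf_diff m lam _ (by omega)
  rw [start_val hm hs hbd hmono hvan, hd]
  ring

lemma nu_form (hm : 2 ≤ m) (hs : 1 ≤ s)
    (hbd : ∀ k, 1 ≤ k → k ≤ s → 1 ≤ ii k ∧ ii k ≤ 2*m-1)
    (hmono : ∀ k l, 1 ≤ k → k < l → l ≤ s → ii k < ii l)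
    (hvan : ∀ k, 1 ≤ k → k ≤ 2*m-1 → (∀ j, 1 ≤ j → j ≤ s → ii j ≠ k) → lam k = 0)
    (hform : ∀ j, 2 ≤ j → j ≤ s → lam (ii j) = (-1:ℂ)^j * (Cfun ii j - lam (ii 1))) :
    Yf m lam (ii s) + Yf m lam (ii s + 1)
      = -2 * (-1:ℂ)^s * ((ii 1 : ℂ) + lam (ii 1)) - 4 * (-1:ℂ)^s * sigC ii s
        + 4 * m - 1 := by
  have hbs := hbd s hs le_rfl
  have hd : Yf m lam (ii s) = Yf m lam (ii s + 1) + (2 * lam (ii s) + 1) :=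
    Yf_diff m lam _ (by omega)
  rw [hd, end_val hm hs hbd hmono hvan]
  rcases eq_or_lt_of_le hs with h1 | h1
  · -- s = 1
    rw [← h1]
    have hsig : sigC ii 1 = -(ii 1 : ℂ) := by
      unfold sigC
      rw [Finset.Icc_self, Finset.sum_singleton]
      ring
    rw [hsig]
    norm_num
    ring
  · have hs2 : 2 ≤ s := h1
    rw [hform s hs2 le_rfl, Cfun_sig ii s hs2]
    rcases Nat.even_or_odd s with h | h
    · rw [h.neg_one_pow]; ring
    · rw [h.neg_one_pow]; ring

end Chain2

section Backward

lemma flips_chain {m s : ℕ} {lam : ℕ → ℂ} {ii : ℕ → ℕ} (hm : 2 ≤ m)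
    (hbd : ∀ k, 1 ≤ k → k ≤ s → 1 ≤ ii k ∧ ii k ≤ 2*m-1)
    (hmono : ∀ k l, 1 ≤ k → k < l → l ≤ s → ii k < ii l)
    (hvan : ∀ k, 1 ≤ k → k ≤ 2*m-1 → (∀ j, 1 ≤ j → j ≤ s → ii j ≠ k) → lam k = 0)
    (hrec : ∀ k, 1 ≤ k → k + 1 ≤ s →
      lam (ii k) + lam (ii (k+1)) + ((ii (k+1) : ℂ) - (ii k : ℂ)) = 0) :
    ∀ k, 1 ≤ k → k ≤ s →
      Yf m lam (ii k) + Yf m lam (ii k + 1)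
        = Yf m lam (ii 1) + Yf m lam (ii 1 + 1) := by
  intro k hk1 hks
  induction k, hk1 using Nat.le_induction with
  | base => rfl
  | succ k hk ih =>
    have hd := step_diff hm hbd hmono hvan hk (by omega)
    have hr := hrec k hk (by omega)
    rw [← ih (by omega)]
    linear_combination -hd - 2 * hr

lemma backward_dir (m : ℕ) (hm : 2 ≤ m) (lam : ℕ → ℂ) (qhat : ℕ → ℂ)
    (hq : ∀ i : ℕ, qhat i =
      -(1 / (m : ℂ)) * (∑ j ∈ Finset.Ico 1 i, (j : ℂ) * lam j) +
      (((m : ℂ) - (i : ℂ)) / (m : ℂ)) * lam i +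
      (1 / (m : ℂ)) * (∑ j ∈ Finset.Ico (i + 1) (2 * m), ((2 * (m : ℂ)) - (j : ℂ)) * lam j) +
      ((m : ℂ) - (i : ℂ)))
    (s : ℕ) (hs : 1 ≤ s) (ii : ℕ → ℕ)
    (hbd : ∀ k, 1 ≤ k → k ≤ s → 1 ≤ ii k ∧ ii k ≤ 2*m-1)
    (hmono : ∀ k l, 1 ≤ k → k < l → l ≤ s → ii k < ii l)
    (hsig : (∑ k ∈ Finset.Icc 1 s, (-1 : ℤ) ^ k * (ii k : ℤ)) = (-1 : ℤ) ^ s * (m : ℤ))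
    (t : ℂ) (ht : lam (ii 1) = t)
    (hform : ∀ j, 2 ≤ j → j ≤ s → lam (ii j) = (-1:ℂ)^j * (Cfun ii j - t))
    (hvan : ∀ k, 1 ≤ k → k ≤ 2*m-1 → (∀ j, 1 ≤ j → j ≤ s → ii j ≠ k) → lam k = 0) :
    ∀ i : ℕ, 1 ≤ i → i ≤ 2 * m - 1 → lam i * qhat i = 0 := by
  have hmC : (m : ℂ) ≠ 0 := Nat.cast_ne_zero.mpr (by omega)
  subst ht
  have hrec := form_to_rec rfl hform
  set t := lam (ii 1) with htdef
  set ν : ℂ := Yf m lam (ii 1) + Yf m lam (ii 1 + 1) with hν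
  have hflips := flips_chain hm hbd hmono hvan hrec
  -- cast the sigma condition
  have hsigC : sigC ii s = (-1:ℂ)^s * (m:ℂ) := by
    have := congrArg (Int.cast : ℤ → ℂ) hsig
    push_cast at this
    exact this
  -- value of ν
  have hνval : ν = -2 * (-1:ℂ)^s * ((ii 1 : ℂ) + t) - 1 := by
    have h1 := nu_form hm hs hbd hmono hvan hform
    rw [hsigC] at h1
    rw [hν, ← hflips s hs le_rfl, h1]
    rcases Nat.even_or_odd s with h | h
    · rw [h.neg_one_pow]; ring
    · rw [h.neg_one_pow]; ring
  have hY1 := Y1_eq hm hs hbd hmono hvan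
  -- dichotomy
  have hdich : (Yf m lam 1 - ν) * (Yf m lam 1 + 1) = 0 := by
    have hfl1 : Yf m lam (ii 1) + Yf m lam (ii 1 + 1) = ν := rfl
    rcases Nat.even_or_odd s with h | h
    · apply mul_eq_zero_of_right
      rw [hY1, hfl1, hνval, h.neg_one_pow]
      ring
    · apply mul_eq_zero_of_left
      rw [hY1, hfl1, hνval, h.neg_one_pow]
      ring
  -- telescoping gives SY = m ν
  have hSY : SYf m lam = (m : ℂ) * ν := by
    have hstep : ∀ p, 1 ≤ p → p < 2*m →
        (fun p => Yf m lam p - ν/2) (p+1) = -((fun p => Yf m lam p - ν/2) p)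
        ∨ (fun p => Yf m lam p - ν/2) (p+1) = (fun p => Yf m lam p - ν/2) p - 1 := by
      intro p hp1 hp2
      by_cases h0 : lam p = 0
      · right
        have := Yf_diff m lam p hp2
        simp only
        rw [this, h0]
        ring
      · left
        have hpim : ∃ k, 1 ≤ k ∧ k ≤ s ∧ ii k = p := by
          by_contra hc
          push_neg at hc
          exact h0 (hvan p hp1 (by omega) (fun j hj1 hjs => hc j hj1 hjs))
        obtain ⟨k, hk1, hks, hkp⟩ := hpim
        have := hflips k hk1 hks
        rw [hkp] at this
        simp only
        linear_combination this
    have htel := tele (fun p => Yf m lam p - ν/2) (2*m) (by omega) hstep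
    rw [Finset.sum_sub_distrib, Finset.sum_const, Nat.card_Icc] at htel
    simp only [Nat.add_sub_cancel, nsmul_eq_mul] at htel
    rw [Yf_end] at htel
    have h2m : ((2*m : ℕ) : ℂ) = 2 * (m : ℂ) := by push_cast; ring
    rw [h2m] at htel
    have : SYf m lam - (m:ℂ) * ν = (Yf m lam 1 - ν) * (Yf m lam 1 + 1) / 2 := by
      unfold SYf
      linear_combination htel
    rw [hdich] at this
    linear_combination this
  -- conclude
  intro i hi1 hi2
  by_cases h0 : lam i = 0
  · rw [h0]; ring
  · have hpim : ∃ k, 1 ≤ k ∧ k ≤ s ∧ ii k = i := by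
      by_contra hc
      push_neg at hc
      exact h0 (hvan i hi1 hi2 (fun j hj1 hjs => hc j hj1 hjs))
    obtain ⟨k, hk1, hks, hkp⟩ := hpim
    have hfl := hflips k hk1 hks
    rw [hkp] at hfl
    have hkey := key_identity m (by omega) lam qhat hq i hi1 hi2
    rw [hfl, hSY] at hkey
    have : qhat i = 0 := by
      have h2 : 2 * (m:ℂ) * qhat i = 0 := by linear_combination -hkey
      rcases mul_eq_zero.mp h2 with h3 | h3
      · exact absurd h3 (mul_ne_zero two_ne_zero hmC)
      · exact h3
    rw [this]; ring

end Backward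

section Forward

lemma enum (I : Finset ℕ) (hne : I.Nonempty) :
    ∃ ii : ℕ → ℕ, (∀ k, 1 ≤ k → k ≤ I.card → ii k ∈ I) ∧
      (∀ k l, 1 ≤ k → k < l → l ≤ I.card → ii k < ii l) ∧
      (∀ x ∈ I, ∃ k, 1 ≤ k ∧ k ≤ I.card ∧ ii k = x) := by
  have hs : 0 < I.card := Finset.card_pos.mpr hne
  set e := I.orderEmbOfFin (rfl : I.card = I.card) with he
  refine ⟨fun k => if h : k - 1 < I.card then (e ⟨k-1, h⟩ : ℕ) else 0, ?_, ?_, ?_⟩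
  · intro k hk1 hk2
    simp only [dif_pos (show k - 1 < I.card by omega)]
    exact Finset.orderEmbOfFin_mem I rfl _
  · intro k l hk1 hkl hls
    simp only [dif_pos (show k - 1 < I.card by omega),
      dif_pos (show l - 1 < I.card by omega)]
    exact e.strictMono (by simp only [Fin.lt_def]; omega)
  · intro x hx
    have : x ∈ Set.range e := by
      rw [Finset.range_orderEmbOfFin]
      exact hx
    obtain ⟨a, ha⟩ := this
    refine ⟨a + 1, by omega, by omega, ?_⟩
    simp only [Nat.add_sub_cancel, dif_pos a.isLt]
    rw [← ha]

lemma good_case (m : ℕ) (hm : 2 ≤ m) (lam : ℕ → ℂ)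
    (I : Finset ℕ) (hne : I.Nonempty) (hsub : I ⊆ Finset.Icc 1 (2*m-1))
    (hIfull : ∀ k, 1 ≤ k → k ≤ 2*m-1 → lam k ≠ 0 → k ∈ I)
    (hIflip : ∀ x ∈ I, (m:ℂ) * (Yf m lam x + Yf m lam (x+1)) = SYf m lam)
    (hpar : (Odd I.card ∧ Yf m lam 1 = SYf m lam / m)
          ∨ (Even I.card ∧ Yf m lam 1 = -1)) :
    ∃ s : ℕ, 1 ≤ s ∧ s ≤ 2 * m - 1 ∧
      ∃ ii : ℕ → ℕ,
        (∀ k : ℕ, 1 ≤ k → k ≤ s → 1 ≤ ii k ∧ ii k ≤ 2 * m - 1) ∧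
        (∀ k l : ℕ, 1 ≤ k → k < l → l ≤ s → ii k < ii l) ∧
        (∑ k ∈ Finset.Icc 1 s, (-1 : ℤ) ^ k * (ii k : ℤ)) = (-1 : ℤ) ^ s * (m : ℤ) ∧
        ∃ t : ℂ,
          lam (ii 1) = t ∧
          (∀ j : ℕ, 2 ≤ j → j ≤ s → lam (ii j) = (-1 : ℂ) ^ j * (Cfun ii j - t)) ∧
          (∀ k : ℕ, 1 ≤ k → k ≤ 2 * m - 1 →
            (∀ j : ℕ, 1 ≤ j → j ≤ s → ii j ≠ k) → lam k = 0) := by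
  have hmC : (m : ℂ) ≠ 0 := Nat.cast_ne_zero.mpr (by omega)
  obtain ⟨ii, hmem, hmono, hsurj⟩ := enum I hne
  set s := I.card with hscard
  have hs : 1 ≤ s := Finset.card_pos.mpr hne
  have hsle : s ≤ 2*m-1 := by
    have := Finset.card_le_card hsub
    simpa [Nat.card_Icc] using this
  have hbd : ∀ k, 1 ≤ k → k ≤ s → 1 ≤ ii k ∧ ii k ≤ 2*m-1 := by
    intro k h1 h2
    have := hsub (hmem k h1 h2)
    simpa [Finset.mem_Icc] using this
  have hvan : ∀ k, 1 ≤ k → k ≤ 2*m-1 → (∀ j, 1 ≤ j → j ≤ s → ii j ≠ k) → lam k = 0 := by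
    intro k h1 h2 h3
    by_contra h0
    obtain ⟨j, hj1, hjs, hjk⟩ := hsurj k (hIfull k h1 h2 h0)
    exact h3 j hj1 hjs hjk
  set ν : ℂ := SYf m lam / (m : ℂ) with hνdef
  have hflips : ∀ k, 1 ≤ k → k ≤ s → Yf m lam (ii k) + Yf m lam (ii k + 1) = ν := by
    intro k h1 h2
    have := hIflip (ii k) (hmem k h1 h2)
    rw [hνdef]
    field_simp
    linear_combination this
  -- recursion between consecutive indices
  have hrec : ∀ k, 1 ≤ k → k + 1 ≤ s →
      lam (ii k) + lam (ii (k+1)) + ((ii (k+1) : ℂ) - (ii k : ℂ)) = 0 := by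
    intro k h1 h2
    have hd := step_diff hm hbd hmono hvan h1 h2
    have e1 := hflips k h1 (by omega)
    have e2 := hflips (k+1) (by omega) h2
    rw [e1, e2] at hd
    linear_combination -hd / 2
  have hform := rec_to_form hrec
  -- the ν and Y1 relations
  have hνf := nu_form hm hs hbd hmono hvan hform
  rw [hflips s hs le_rfl] at hνf
  have hY1 := Y1_eq hm hs hbd hmono hvan
  rw [hflips 1 le_rfl hs] at hY1
  -- σ condition (in ℂ)
  have hsigC : sigC ii s = (-1:ℂ)^s * (m:ℂ) := by
    rcases hpar with ⟨hodd, hY⟩ | ⟨heven, hY⟩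
    · rw [hodd.neg_one_pow] at hνf ⊢
      rw [hY1] at hY
      linear_combination -hνf / 4 - hY / 2
    · rw [heven.neg_one_pow] at hνf ⊢
      rw [hY1] at hY
      linear_combination hνf / 4 - hY / 2
  -- cast down to ℤ
  have hsigZ : (∑ k ∈ Finset.Icc 1 s, (-1 : ℤ) ^ k * (ii k : ℤ)) = (-1 : ℤ) ^ s * (m : ℤ) := by
    have : ((∑ k ∈ Finset.Icc 1 s, (-1 : ℤ) ^ k * (ii k : ℤ) : ℤ) : ℂ)
        = (((-1 : ℤ) ^ s * (m : ℤ) : ℤ) : ℂ) := by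
      push_cast
      exact hsigC
    exact_mod_cast this
  exact ⟨s, hs, hsle, ii, hbd, hmono, hsigZ, lam (ii 1), rfl, hform, hvan⟩

end Forward

section Slot

lemma sign_invariant (m : ℕ) (hm : 2 ≤ m) (S : Finset ℕ)
    (hsub : S ⊆ Finset.Icc 1 (2*m-1)) (W : ℕ → ℤ)
    (hodd : ∀ p, 1 ≤ p → p ≤ 2*m → Odd (W p))
    (hflip : ∀ p, 1 ≤ p → p ≤ 2*m-1 → p ∈ S → W (p+1) = -W p)
    (hdrop : ∀ p, 1 ≤ p → p ≤ 2*m-1 → p ∉ S → W (p+1) = W p - 2)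
    (hnoslot : ∀ p, 1 ≤ p → p ≤ 2*m-1 → p ∉ S → W p ≠ 1) :
    (0 < (-1:ℤ)^S.card * W (2*m) ↔ 0 < W 1) := by
  have haux : ∀ p, 1 ≤ p → p ≤ 2*m →
      (0 < (-1:ℤ)^((S.filter (· < p)).card) * W p ↔ 0 < W 1) := by
    intro p hp1
    induction p, hp1 using Nat.le_induction with
    | base =>
      intro _
      have h0 : S.filter (· < 1) = ∅ := by
        apply Finset.filter_eq_empty_iff.mpr
        intro x hx
        have := Finset.mem_Icc.mp (hsub hx)
        omega
      rw [h0]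
      simp
    | succ p hp ih =>
      intro hp2
      have hple : p ≤ 2*m-1 := by omega
      have ihp := ih (by omega)
      by_cases hpS : p ∈ S
      · have hcard : (S.filter (· < p+1)).card = (S.filter (· < p)).card + 1 := by
          have : S.filter (· < p+1) = insert p (S.filter (· < p)) := by
            ext x
            simp only [Finset.mem_filter, Finset.mem_insert]
            constructor
            · rintro ⟨hx, hlt⟩
              rcases Nat.lt_succ_iff_lt_or_eq.mp hlt with h | h
              · exact Or.inr ⟨hx, h⟩
              · exact Or.inl h
            · rintro (h | ⟨hx, hlt⟩)
              · subst h; exact ⟨hpS, by omega⟩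
              · exact ⟨hx, by omega⟩
          rw [this, Finset.card_insert_of_notMem (by simp)]
        rw [hcard, hflip p (by omega) hple hpS, pow_succ]
        rw [← ihp]
        constructor <;> intro h <;> nlinarith [h]
      · have hcard : (S.filter (· < p+1)).card = (S.filter (· < p)).card := by
          congr 1
          ext x
          simp only [Finset.mem_filter]
          constructor
          · rintro ⟨hx, hlt⟩
            refine ⟨hx, ?_⟩
            rcases Nat.lt_succ_iff_lt_or_eq.mp hlt with h | h
            · exact h
            · exact absurd (h ▸ hx) hpS
          · rintro ⟨hx, hlt⟩
            exact ⟨hx, by omega⟩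
        rw [hcard, hdrop p (by omega) hple hpS]
        rw [← ihp]
        obtain ⟨j, hj⟩ := hodd p (by omega) (by omega)
        have hne1 : W p ≠ 1 := hnoslot p (by omega) hple hpS
        rcases Nat.even_or_odd (S.filter (· < p)).card with he | he
        · rw [he.neg_one_pow]
          omega
        · rw [he.neg_one_pow]
          omega
  have hfin : S.filter (· < 2*m) = S := by
    apply Finset.filter_true_of_mem
    intro x hx
    have := Finset.mem_Icc.mp (hsub hx)
    omega
  have := haux (2*m) (by omega) le_rfl
  rw [hfin] at this
  exact this

end Slot

section SlotFromBad

lemma slot_from_bad (m : ℕ) (hm : 2 ≤ m) (lam : ℕ → ℂ)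
    (S : Finset ℕ) (hne : S.Nonempty) (hsub : S ⊆ Finset.Icc 1 (2*m-1))
    (hSlam : ∀ x ∈ S, lam x ≠ 0)
    (hSfull : ∀ k, 1 ≤ k → k ≤ 2*m-1 → lam k ≠ 0 → k ∈ S)
    (hSflip : ∀ x ∈ S, (m:ℂ) * (Yf m lam x + Yf m lam (x+1)) = SYf m lam)
    (hbad : (Even S.card ∧ Yf m lam 1 = SYf m lam / m)
          ∨ (Odd S.card ∧ Yf m lam 1 = -1 ∧ Yf m lam 1 ≠ SYf m lam / m)) :
    ∃ p, 1 ≤ p ∧ p ≤ 2*m-1 ∧ p ∉ S ∧ lam p = 0 ∧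
      (m:ℂ) * (Yf m lam p + Yf m lam (p+1)) = SYf m lam := by
  classical
  have hmC : (m : ℂ) ≠ 0 := Nat.cast_ne_zero.mpr (by omega)
  obtain ⟨ii, hmem, hmono, hsurj⟩ := enum S hne
  set s := S.card with hscard
  have hs : 1 ≤ s := Finset.card_pos.mpr hne
  have hbd : ∀ k, 1 ≤ k → k ≤ s → 1 ≤ ii k ∧ ii k ≤ 2*m-1 := by
    intro k h1 h2
    have := hsub (hmem k h1 h2)
    simpa [Finset.mem_Icc] using this
  have hvan : ∀ k, 1 ≤ k → k ≤ 2*m-1 → (∀ j, 1 ≤ j → j ≤ s → ii j ≠ k) → lam k = 0 := by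
    intro k h1 h2 h3
    by_contra h0
    obtain ⟨j, hj1, hjs, hjk⟩ := hsurj k (hSfull k h1 h2 h0)
    exact h3 j hj1 hjs hjk
  set ν : ℂ := SYf m lam / (m : ℂ) with hνdef
  have hmν : (m:ℂ) * ν = SYf m lam := by
    rw [hνdef]; field_simp
  have hflips : ∀ k, 1 ≤ k → k ≤ s → Yf m lam (ii k) + Yf m lam (ii k + 1) = ν := by
    intro k h1 h2
    have := hSflip (ii k) (hmem k h1 h2)
    rw [hνdef]
    field_simp
    linear_combination this
  have hrec : ∀ k, 1 ≤ k → k + 1 ≤ s →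
      lam (ii k) + lam (ii (k+1)) + ((ii (k+1) : ℂ) - (ii k : ℂ)) = 0 := by
    intro k h1 h2
    have hd := step_diff hm hbd hmono hvan h1 h2
    have e1 := hflips k h1 (by omega)
    have e2 := hflips (k+1) (by omega) h2
    rw [e1, e2] at hd
    linear_combination -hd / 2
  have hform := rec_to_form hrec
  have hνf := nu_form hm hs hbd hmono hvan hform
  rw [hflips s hs le_rfl] at hνf
  have hY1 := Y1_eq hm hs hbd hmono hvan
  rw [hflips 1 le_rfl hs] at hY1
  set t : ℂ := lam (ii 1) with htdef
  set σz : ℤ := ∑ k ∈ Finset.Icc 1 s, (-1 : ℤ) ^ k * (ii k : ℤ) with hσzdef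
  have hσcast : sigC ii s = (σz : ℂ) := by
    rw [hσzdef]
    push_cast
    rfl
  rw [hσcast] at hνf
  -- derive integer values for t and ν
  have hTN : ∃ Tz Nz : ℤ, t = (Tz : ℂ) ∧ ν = (Nz : ℂ) ∧ Odd Nz := by
    rcases hbad with ⟨hev, hY⟩ | ⟨hod, hY, _⟩
    · rw [hev.neg_one_pow] at hνf
      have hν1 : ν = 2*t + 2*(ii 1 : ℂ) - 1 := by
        linear_combination (-2)*hY + 2*hY1
      have ht : t = ((m:ℤ) - σz - (ii 1 : ℤ) : ℤ) * 1 := by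
        push_cast
        linear_combination (-1/4)*hν1 + (1/4)*hνf
      refine ⟨(m:ℤ) - σz - (ii 1 : ℤ), 2*((m:ℤ) - σz - (ii 1 : ℤ)) + 2*(ii 1 : ℤ) - 1,
        by rw [ht]; push_cast; try ring, ?_, ⟨(m:ℤ) - σz - 1, by ring⟩⟩
      rw [hν1, ht]
      push_cast
      try ring
    · rw [hod.neg_one_pow] at hνf
      have hν1 : ν = -2*t - 2*(ii 1 : ℂ) - 1 := by
        linear_combination 2*hY - 2*hY1
      have ht : t = (-(ii 1 : ℤ) - σz - (m:ℤ) : ℤ) * 1 := by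
        push_cast
        linear_combination hν1/4 - hνf/4
      refine ⟨-(ii 1 : ℤ) - σz - (m:ℤ), -2*(-(ii 1 : ℤ) - σz - (m:ℤ)) - 2*(ii 1 : ℤ) - 1,
        by rw [ht]; push_cast; try ring, ?_, ⟨σz + (m:ℤ) - 1, by ring⟩⟩
      rw [hν1, ht]
      push_cast
      try ring
  obtain ⟨Tz, Nz, ht, hνz, hNodd⟩ := hTN
  -- integrality of lam
  have hlamZk : ∀ k, 1 ≤ k → k ≤ s → ∃ z : ℤ, lam (ii k) = (z : ℂ) := by
    intro k hk1
    induction k, hk1 using Nat.le_induction with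
    | base => intro _; exact ⟨Tz, ht⟩
    | succ k hk ih =>
      intro hk2
      obtain ⟨z, hz⟩ := ih (by omega)
      refine ⟨-z - (ii (k+1) : ℤ) + (ii k : ℤ), ?_⟩
      have := hrec k hk hk2
      push_cast
      linear_combination this - hz
  have hlamZ : ∀ l, 1 ≤ l → l ≤ 2*m-1 → ∃ z : ℤ, lam l = (z : ℂ) := by
    intro l h1 h2
    by_cases h0 : lam l = 0
    · exact ⟨0, by rw [h0]; simp⟩
    · obtain ⟨k, hk1, hks, hkl⟩ := hsurj l (hSfull l h1 h2 h0)
      rw [← hkl]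
      exact hlamZk k hk1 hks
  set Λ : ℕ → ℤ := fun l => if h : ∃ z : ℤ, lam l = (z : ℂ) then h.choose else 0 with hΛdef
  have hΛ : ∀ l, 1 ≤ l → l ≤ 2*m-1 → lam l = (Λ l : ℂ) := by
    intro l h1 h2
    have h := hlamZ l h1 h2
    rw [hΛdef]
    simp only [dif_pos h]
    exact h.choose_spec
  set YZ : ℕ → ℤ := fun p => 2*(∑ l ∈ Finset.Ico p (2*m), Λ l) + ((2*m : ℤ) - (p : ℤ))
    with hYZdef
  have hYZ : ∀ p, 1 ≤ p → Yf m lam p = (YZ p : ℂ) := by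
    intro p hp
    rw [hYZdef]
    unfold Yf
    push_cast
    have : ∑ l ∈ Finset.Ico p (2*m), lam l = ∑ l ∈ Finset.Ico p (2*m), ((Λ l : ℤ) : ℂ) := by
      apply Finset.sum_congr rfl
      intro l hl
      have hl' := Finset.mem_Ico.mp hl
      exact hΛ l (by omega) (by omega)
    rw [this]
    try push_cast
    try ring
  set WZ : ℕ → ℤ := fun p => 2 * YZ p - Nz with hWZdef
  have hWC : ∀ p, 1 ≤ p → ((WZ p : ℤ) : ℂ) = 2 * Yf m lam p - ν := by
    intro p hp
    rw [hWZdef]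
    push_cast
    rw [hYZ p hp, hνz]
    try push_cast
    try ring
  have hWodd : ∀ p, Odd (WZ p) := by
    intro p
    obtain ⟨j, hj⟩ := hNodd
    exact ⟨YZ p - j - 1, by rw [hWZdef]; simp only; omega⟩
  -- flips and drops at integer level
  have hWflip : ∀ p, 1 ≤ p → p ≤ 2*m-1 → p ∈ S → WZ (p+1) = -WZ p := by
    intro p h1 h2 hpS
    have hf := hSflip p hpS
    rw [← hmν] at hf
    have hYp1 : Yf m lam (p+1) = ν - Yf m lam p := by
      have h' := mul_left_cancel₀ hmC hf
      linear_combination h'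
    have : ((WZ (p+1) : ℤ) : ℂ) = ((-WZ p : ℤ) : ℂ) := by
      rw [hWC (p+1) (by omega)]
      push_cast
      rw [hWC p h1, hYp1]
      ring
    exact_mod_cast this
  have hWdrop : ∀ p, 1 ≤ p → p ≤ 2*m-1 → p ∉ S → WZ (p+1) = WZ p - 2 := by
    intro p h1 h2 hpS
    have h0 : lam p = 0 := by
      by_contra hc
      exact hpS (hSfull p h1 h2 hc)
    have hd := Yf_diff m lam p (by omega)
    rw [h0] at hd
    have : ((WZ (p+1) : ℤ) : ℂ) = ((WZ p - 2 : ℤ) : ℂ) := by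
      rw [hWC (p+1) (by omega)]
      push_cast
      rw [hWC p h1]
      linear_combination -2 * hd
    exact_mod_cast this
  -- endpoint values
  have hW2m : WZ (2*m) = -Nz := by
    have : ((WZ (2*m) : ℤ) : ℂ) = ((-Nz : ℤ) : ℂ) := by
      rw [hWC (2*m) (by omega), Yf_end, hνz]
      push_cast
      ring
    exact_mod_cast this
  by_cases hslot : ∃ p, 1 ≤ p ∧ p ≤ 2*m-1 ∧ p ∉ S ∧ WZ p = 1
  · obtain ⟨p, hp1, hp2, hpS, hWp⟩ := hslot
    have h0 : lam p = 0 := by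
      by_contra hc
      exact hpS (hSfull p hp1 hp2 hc)
    refine ⟨p, hp1, hp2, hpS, h0, ?_⟩
    have hd := Yf_diff m lam p (by omega)
    rw [h0] at hd
    have hYp : 2 * Yf m lam p - ν = 1 := by
      rw [← hWC p hp1, hWp]
      simp
    rw [← hmν]
    linear_combination (m:ℂ) * hYp - (m:ℂ) * hd
  · push_neg at hslot
    exfalso
    have hinv := sign_invariant m hm S hsub WZ (fun p _ _ => hWodd p) hWflip hWdrop
      (fun p h1 h2 h3 => hslot p h1 h2 h3)
    rcases hbad with ⟨hev, hY⟩ | ⟨hod, hY, hYne⟩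
    · have hW1 : WZ 1 = Nz := by
        have : ((WZ 1 : ℤ) : ℂ) = ((Nz : ℤ) : ℂ) := by
          rw [hWC 1 le_rfl, hY, hνz]
          ring
        exact_mod_cast this
      rw [← hscard, hev.neg_one_pow, hW2m, hW1, one_mul] at hinv
      obtain ⟨j, hj⟩ := hNodd
      omega
    · have hW1 : WZ 1 = -2 - Nz := by
        have : ((WZ 1 : ℤ) : ℂ) = ((-2 - Nz : ℤ) : ℂ) := by
          rw [hWC 1 le_rfl, hY, hνz]
          push_cast
          ring
        exact_mod_cast this
      rw [← hscard, hod.neg_one_pow, hW2m, hW1] at hinv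
      have hNz : Nz = -1 := by
        obtain ⟨j, hj⟩ := hNodd
        rcases hinv with ⟨h1, h2⟩
        omega
      apply hYne
      rw [hY, hνz, hNz]
      push_cast
      ring

end SlotFromBad

lemma forward_dir (m : ℕ) (hm : 2 ≤ m) (lam : ℕ → ℂ) (qhat : ℕ → ℂ)
    (hq : ∀ i : ℕ, qhat i =
      -(1 / (m : ℂ)) * (∑ j ∈ Finset.Ico 1 i, (j : ℂ) * lam j) +
      (((m : ℂ) - (i : ℂ)) / (m : ℂ)) * lam i +
      (1 / (m : ℂ)) * (∑ j ∈ Finset.Ico (i + 1) (2 * m), ((2 * (m : ℂ)) - (j : ℂ)) * lam j) +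
      ((m : ℂ) - (i : ℂ)))
    (hsol : ∀ i : ℕ, 1 ≤ i → i ≤ 2 * m - 1 → lam i * qhat i = 0) :
    ∃ s : ℕ, 1 ≤ s ∧ s ≤ 2 * m - 1 ∧
      ∃ ii : ℕ → ℕ,
        (∀ k : ℕ, 1 ≤ k → k ≤ s → 1 ≤ ii k ∧ ii k ≤ 2 * m - 1) ∧
        (∀ k l : ℕ, 1 ≤ k → k < l → l ≤ s → ii k < ii l) ∧
        (∑ k ∈ Finset.Icc 1 s, (-1 : ℤ) ^ k * (ii k : ℤ)) = (-1 : ℤ) ^ s * (m : ℤ) ∧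
        ∃ t : ℂ,
          lam (ii 1) = t ∧
          (∀ j : ℕ, 2 ≤ j → j ≤ s → lam (ii j) = (-1 : ℂ) ^ j * (Cfun ii j - t)) ∧
          (∀ k : ℕ, 1 ≤ k → k ≤ 2 * m - 1 →
            (∀ j : ℕ, 1 ≤ j → j ≤ s → ii j ≠ k) → lam k = 0) := by
  classical
  have hmC : (m : ℂ) ≠ 0 := Nat.cast_ne_zero.mpr (by omega)
  have hflipS : ∀ i, 1 ≤ i → i ≤ 2*m-1 → lam i ≠ 0 →
      (m:ℂ) * (Yf m lam i + Yf m lam (i+1)) = SYf m lam := by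
    intro i h1 h2 h0
    have hkey := key_identity m (by omega) lam qhat hq i h1 h2
    have hq0 : qhat i = 0 := by
      rcases mul_eq_zero.mp (hsol i h1 h2) with h | h
      · exact absurd h h0
      · exact h
    rw [hq0] at hkey
    linear_combination hkey
  set S : Finset ℕ := (Finset.Icc 1 (2*m-1)).filter (fun i => lam i ≠ 0) with hSdef
  have hsub : S ⊆ Finset.Icc 1 (2*m-1) := Finset.filter_subset _ _
  have hSlam : ∀ x ∈ S, lam x ≠ 0 := by
    intro x hx
    exact (Finset.mem_filter.mp hx).2
  have hSfull : ∀ k, 1 ≤ k → k ≤ 2*m-1 → lam k ≠ 0 → k ∈ S := by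
    intro k h1 h2 h0
    exact Finset.mem_filter.mpr ⟨Finset.mem_Icc.mpr ⟨h1, h2⟩, h0⟩
  have hSflip : ∀ x ∈ S, (m:ℂ) * (Yf m lam x + Yf m lam (x+1)) = SYf m lam := by
    intro x hx
    have hb := Finset.mem_Icc.mp (hsub hx)
    exact hflipS x hb.1 hb.2 (hSlam x hx)
  by_cases hne : S.Nonempty
  case neg =>
    -- all lam vanish
    have hall : ∀ k, 1 ≤ k → k ≤ 2*m-1 → lam k = 0 := by
      intro k h1 h2
      by_contra h0
      exact hne ⟨k, hSfull k h1 h2 h0⟩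
    refine ⟨1, le_rfl, by omega, fun _ => m, ?_, ?_, ?_, 0, ?_, ?_, ?_⟩
    · intro k h1 h2; exact ⟨show 1 ≤ m by omega, show m ≤ 2*m-1 by omega⟩
    · intro k l h1 h2 h3; omega
    · simp
    · exact hall m (by omega) (by omega)
    · intro j h1 h2; exact absurd h2 (by omega)
    · intro k h1 h2 _; exact hall k h1 h2
  case pos =>
    set ν : ℂ := SYf m lam / (m : ℂ) with hνdef
    have hmν : (m:ℂ) * ν = SYf m lam := by
      rw [hνdef]; field_simp
    -- dichotomy
    have hdich : Yf m lam 1 = ν ∨ Yf m lam 1 = -1 := by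
      have hstep : ∀ p, 1 ≤ p → p < 2*m →
          (fun p => Yf m lam p - ν/2) (p+1) = -((fun p => Yf m lam p - ν/2) p)
          ∨ (fun p => Yf m lam p - ν/2) (p+1) = (fun p => Yf m lam p - ν/2) p - 1 := by
        intro p hp1 hp2
        by_cases h0 : lam p = 0
        · right
          have := Yf_diff m lam p hp2
          simp only
          rw [this, h0]
          ring
        · left
          have hf := hflipS p hp1 (by omega) h0
          rw [← hmν] at hf
          have := mul_left_cancel₀ hmC hf
          simp only
          linear_combination this
      have htel := tele (fun p => Yf m lam p - ν/2) (2*m) (by omega) hstep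
      rw [Finset.sum_sub_distrib, Finset.sum_const, Nat.card_Icc] at htel
      simp only [Nat.add_sub_cancel, nsmul_eq_mul] at htel
      rw [Yf_end] at htel
      have h2m : ((2*m : ℕ) : ℂ) = 2 * (m : ℂ) := by push_cast; ring
      rw [h2m] at htel
      have h0 : (Yf m lam 1 - ν) * (Yf m lam 1 + 1) = 0 := by
        have hSY : SYf m lam - (m:ℂ) * ν = 0 := by rw [hmν]; ring
        unfold SYf at hSY
        linear_combination -2 * htel + 2 * hSY
      rcases mul_eq_zero.mp h0 with h | h
      · exact Or.inl (by linear_combination h)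
      · exact Or.inr (by linear_combination h)
    rcases Nat.even_or_odd S.card with hev | hod
    · by_cases hY1 : Yf m lam 1 = -1
      · exact good_case m hm lam S hne hsub hSfull hSflip (Or.inr ⟨hev, hY1⟩)
      · have hYν : Yf m lam 1 = ν := by
          rcases hdich with h | h
          · exact h
          · exact absurd h hY1
        obtain ⟨p, hp1, hp2, hpS, hp0, hpflip⟩ := slot_from_bad m hm lam S hne hsub
          hSlam hSfull hSflip (Or.inl ⟨hev, hYν⟩)
        refine good_case m hm lam (insert p S) (Finset.insert_nonempty p S)
          ?_ ?_ ?_ (Or.inl ⟨?_, hYν⟩)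
        · intro x hx
          rcases Finset.mem_insert.mp hx with h | h
          · subst h; exact Finset.mem_Icc.mpr ⟨hp1, hp2⟩
          · exact hsub h
        · intro k h1 h2 h0
          exact Finset.mem_insert_of_mem (hSfull k h1 h2 h0)
        · intro x hx
          rcases Finset.mem_insert.mp hx with h | h
          · subst h; exact hpflip
          · exact hSflip x h
        · rw [Finset.card_insert_of_notMem hpS]
          exact Even.add_one hev
    · by_cases hY1 : Yf m lam 1 = ν
      · exact good_case m hm lam S hne hsub hSfull hSflip (Or.inl ⟨hod, hY1⟩)
      · have hYm1 : Yf m lam 1 = -1 := by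
          rcases hdich with h | h
          · exact absurd h hY1
          · exact h
        obtain ⟨p, hp1, hp2, hpS, hp0, hpflip⟩ := slot_from_bad m hm lam S hne hsub
          hSlam hSfull hSflip (Or.inr ⟨hod, hYm1, hY1⟩)
        refine good_case m hm lam (insert p S) (Finset.insert_nonempty p S)
          ?_ ?_ ?_ (Or.inr ⟨?_, hYm1⟩)
        · intro x hx
          rcases Finset.mem_insert.mp hx with h | h
          · subst h; exact Finset.mem_Icc.mpr ⟨hp1, hp2⟩
          · exact hsub h
        · intro k h1 h2 h0
          exact Finset.mem_insert_of_mem (hSfull k h1 h2 h0)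
        · intro x hx
          rcases Finset.mem_insert.mp hx with h | h
          · subst h; exact hpflip
          · exact hSflip x h
        · rw [Finset.card_insert_of_notMem hpS]
          exact Odd.add_one hod

end Stmt11

theorem stmt_11 (m : ℕ) (hm : 2 ≤ m)
    (lam : ℕ → ℂ)
    -- `q̂_i(λ)`
    (qhat : ℕ → ℂ)
    (hq : ∀ i : ℕ, qhat i =
      -(1 / (m : ℂ)) * (∑ j ∈ Finset.Ico 1 i, (j : ℂ) * lam j) +
      (((m : ℂ) - (i : ℂ)) / (m : ℂ)) * lam i +
      (1 / (m : ℂ)) * (∑ j ∈ Finset.Ico (i + 1) (2 * m), ((2 * (m : ℂ)) - (j : ℂ)) * lam j) +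
      ((m : ℂ) - (i : ℂ))) :
    -- `λ_i · q̂_i(λ) = 0` for all `i = 1, …, 2m−1`  ↔  `λ` lies on one of the lines of `Ξ̂`
    (∀ i : ℕ, 1 ≤ i → i ≤ 2 * m - 1 → lam i * qhat i = 0) ↔
    (∃ s : ℕ, 1 ≤ s ∧ s ≤ 2 * m - 1 ∧
      ∃ ii : ℕ → ℕ,
        (∀ k : ℕ, 1 ≤ k → k ≤ s → 1 ≤ ii k ∧ ii k ≤ 2 * m - 1) ∧
        (∀ k l : ℕ, 1 ≤ k → k < l → l ≤ s → ii k < ii l) ∧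
        (∑ k ∈ Finset.Icc 1 s, (-1 : ℤ) ^ k * (ii k : ℤ)) = (-1 : ℤ) ^ s * (m : ℤ) ∧
        ∃ t : ℂ,
          lam (ii 1) = t ∧
          (∀ j : ℕ, 2 ≤ j → j ≤ s → lam (ii j) =
            (-1 : ℂ) ^ j *
              (((ii 1 : ℂ) + 2 * (∑ k ∈ Finset.Ico 2 j, (-1 : ℂ) ^ (k + 1) * (ii k : ℂ)) +
                (-1 : ℂ) ^ (j + 1) * (ii j : ℂ)) - t)) ∧
          (∀ k : ℕ, 1 ≤ k → k ≤ 2 * m - 1 →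
            (∀ j : ℕ, 1 ≤ j → j ≤ s → ii j ≠ k) → lam k = 0)) := by
  constructor
  · intro hsol
    obtain ⟨s, h1, h2, ii, hb, hmo, hsg, t, ht, hf, hv⟩ :=
      Stmt11.forward_dir m hm lam qhat hq hsol
    exact ⟨s, h1, h2, ii, hb, hmo, hsg, t, ht,
      fun j hj1 hj2 => by rw [hf j hj1 hj2]; rfl, hv⟩
  · rintro ⟨s, h1, h2, ii, hb, hmo, hsg, t, ht, hf, hv⟩
    exact Stmt11.backward_dir m hm lam qhat hq s h1 ii hb hmo hsg t ht
      (fun j hj1 hj2 => hf j hj1 hj2) hv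
end
end

section
/- Let m ≥ 2, let s ∈ {1, …, 2m−2}, and let 1 ≤ i_1 < ⋯ < i_s ≤ 2m−1 be integers with Σ_{k=1}^{s}(−1)^k·i_k ≠ (−1)^s·m. Then there exists j ∈ {1, …, 2m−1} ∖ {i_1, …, i_s} such that, writing i′_1 < ⋯ < i′_{s+1} for the increasing rearrangement of i_1, …, i_s, j, one has Σ_{k=1}^{s+1}(−1)^k·i′_k = (−1)^{s+1}·m. -/
open Finset
namespace Stmt12Aux

def cfun (s : ℕ) (ii : ℕ → ℕ) (j : ℕ) : ℕ :=
  ((Finset.Icc 1 s).filter (fun k => ii k < j)).card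

def Bfun (s : ℕ) (ii : ℕ → ℕ) (j : ℕ) : ℤ :=
  ∑ k ∈ (Finset.Icc 1 s).filter (fun k => ii k < j), (-1:ℤ)^k * (ii k : ℤ)

def Wfun (s : ℕ) (ii : ℕ → ℕ) (j : ℕ) : ℤ :=
  2 * Bfun s ii j - (∑ k ∈ Finset.Icc 1 s, (-1:ℤ)^k * (ii k : ℤ))
    + (-1)^(cfun s ii j + 1) * (j : ℤ)

theorem filter_eq_Icc (s : ℕ) (ii : ℕ → ℕ)
    (hmono : ∀ k l : ℕ, 1 ≤ k → k < l → l ≤ s → ii k < ii l) (j : ℕ) :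
    (Finset.Icc 1 s).filter (fun k => ii k < j) = Finset.Icc 1 (cfun s ii j) := by
  have hsub : (Finset.Icc 1 s).filter (fun k => ii k < j) ⊆ Finset.Icc 1 (cfun s ii j) := by
    intro k hk
    simp only [mem_filter, mem_Icc] at hk
    obtain ⟨⟨hk1, hks⟩, hkj⟩ := hk
    have hss : Finset.Icc 1 k ⊆ (Finset.Icc 1 s).filter (fun k => ii k < j) := by
      intro k' hk'
      simp only [mem_Icc] at hk'
      simp only [mem_filter, mem_Icc]
      refine ⟨⟨hk'.1, le_trans hk'.2 hks⟩, ?_⟩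
      rcases eq_or_lt_of_le hk'.2 with h | h
      · exact h ▸ hkj
      · exact lt_trans (hmono k' k hk'.1 h hks) hkj
    have := Finset.card_le_card hss
    simp only [Nat.card_Icc] at this
    simp only [mem_Icc]
    exact ⟨hk1, by unfold cfun; omega⟩
  refine (Finset.eq_of_subset_of_card_le hsub ?_).symm ▸ rfl
  simp [Nat.card_Icc, cfun]

theorem cfun_le (s : ℕ) (ii : ℕ → ℕ) (j : ℕ) : cfun s ii j ≤ s := by
  have := Finset.card_filter_le (Finset.Icc 1 s) (fun k => ii k < j)
  simpa [Nat.card_Icc, cfun] using this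

theorem lt_iff_le_cfun (s : ℕ) (ii : ℕ → ℕ)
    (hmono : ∀ k l : ℕ, 1 ≤ k → k < l → l ≤ s → ii k < ii l) (j : ℕ)
    (k : ℕ) (hk1 : 1 ≤ k) (hks : k ≤ s) :
    ii k < j ↔ k ≤ cfun s ii j := by
  have h := filter_eq_Icc s ii hmono j
  constructor
  · intro hkj
    have : k ∈ (Finset.Icc 1 s).filter (fun k => ii k < j) := by
      simp [mem_filter, mem_Icc, hk1, hks, hkj]
    rw [h] at this
    simp only [mem_Icc] at this
    exact this.2
  · intro hkc
    have : k ∈ Finset.Icc 1 (cfun s ii j) := by simp [mem_Icc, hk1, hkc]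
    rw [← h] at this
    simp only [mem_filter] at this
    exact this.2

theorem notmem_filter_succ (s : ℕ) (ii : ℕ → ℕ) (t : ℕ)
    (h : ∀ k : ℕ, 1 ≤ k → k ≤ s → ii k ≠ t) :
    (Finset.Icc 1 s).filter (fun k => ii k < t + 1)
      = (Finset.Icc 1 s).filter (fun k => ii k < t) := by
  apply Finset.filter_congr
  intro k hk
  simp only [mem_Icc] at hk
  have := h k hk.1 hk.2
  constructor <;> intro h2 <;> omega

theorem mem_filter_succ (s : ℕ) (ii : ℕ → ℕ)
    (hmono : ∀ k l : ℕ, 1 ≤ k → k < l → l ≤ s → ii k < ii l)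
    (t q : ℕ) (hq1 : 1 ≤ q) (hqs : q ≤ s) (hqt : ii q = t) :
    (Finset.Icc 1 s).filter (fun k => ii k < t + 1)
      = insert q ((Finset.Icc 1 s).filter (fun k => ii k < t)) := by
  ext k
  simp only [mem_filter, mem_Icc, mem_insert]
  constructor
  · rintro ⟨⟨hk1, hks⟩, hkt⟩
    by_cases hkq : k = q
    · exact Or.inl hkq
    · refine Or.inr ⟨⟨hk1, hks⟩, ?_⟩
      rcases lt_trichotomy k q with h | h | h
      · have := hmono k q hk1 h hqs; omega
      · exact absurd h hkq
      · have := hmono q k hq1 h hks; omega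
  · rintro (rfl | ⟨⟨hk1, hks⟩, hkt⟩)
    · exact ⟨⟨hq1, hqs⟩, by omega⟩
    · exact ⟨⟨hk1, hks⟩, by omega⟩

theorem cfun_succ_mem (s : ℕ) (ii : ℕ → ℕ)
    (hmono : ∀ k l : ℕ, 1 ≤ k → k < l → l ≤ s → ii k < ii l)
    (t q : ℕ) (hq1 : 1 ≤ q) (hqs : q ≤ s) (hqt : ii q = t) :
    cfun s ii (t + 1) = cfun s ii t + 1 ∧ q = cfun s ii t + 1 ∧
      Bfun s ii (t + 1) = Bfun s ii t + (-1)^q * (t : ℤ) := by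
  have hqnot : q ∉ (Finset.Icc 1 s).filter (fun k => ii k < t) := by
    simp [mem_filter, hqt]
  have hins := mem_filter_succ s ii hmono t q hq1 hqs hqt
  have hc : cfun s ii (t + 1) = cfun s ii t + 1 := by
    unfold cfun
    rw [hins, Finset.card_insert_of_notMem hqnot]
  refine ⟨hc, ?_, ?_⟩
  · -- q = cfun s ii t + 1
    have h1 : q ≤ cfun s ii (t + 1) :=
      (lt_iff_le_cfun s ii hmono (t+1) q hq1 hqs).1 (by omega)
    have h2 : ¬ (q ≤ cfun s ii t) := by
      intro h
      have := (lt_iff_le_cfun s ii hmono t q hq1 hqs).2 h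
      omega
    omega
  · unfold Bfun
    rw [hins, Finset.sum_insert hqnot, hqt]
    ring

theorem step (s : ℕ) (ii : ℕ → ℕ)
    (hmono : ∀ k l : ℕ, 1 ≤ k → k < l → l ≤ s → ii k < ii l) (t : ℕ) :
    Wfun s ii (t + 1) - Wfun s ii t = (-1)^(cfun s ii (t + 1) + 1) := by
  by_cases h : ∃ q : ℕ, 1 ≤ q ∧ q ≤ s ∧ ii q = t
  · obtain ⟨q, hq1, hqs, hqt⟩ := h
    obtain ⟨hc, hq, hB⟩ := cfun_succ_mem s ii hmono t q hq1 hqs hqt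
    unfold Wfun
    rw [hc, hB, hq]
    push_cast
    ring
  · push_neg at h
    have hfil := notmem_filter_succ s ii t h
    have hc : cfun s ii (t + 1) = cfun s ii t := by unfold cfun; rw [hfil]
    have hB : Bfun s ii (t + 1) = Bfun s ii t := by unfold Bfun; rw [hfil]
    unfold Wfun
    rw [hc, hB]
    push_cast
    ring

theorem flat (s : ℕ) (ii : ℕ → ℕ)
    (hmono : ∀ k l : ℕ, 1 ≤ k → k < l → l ≤ s → ii k < ii l)
    (j q : ℕ) (hq1 : 1 ≤ q) (hqs : q ≤ s) (hqj : ii q = j) (hj1 : 1 ≤ j) :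
    Wfun s ii (j + 1) = Wfun s ii (j - 1) := by
  obtain ⟨j', rfl⟩ : ∃ j', j = j' + 1 := ⟨j - 1, by omega⟩
  have h1 := step s ii hmono (j' + 1)
  have h2 := step s ii hmono j'
  obtain ⟨hc, hq, _⟩ := cfun_succ_mem s ii hmono (j' + 1) q hq1 hqs hqj
  rw [hc] at h1
  have hpow : (-1:ℤ)^(cfun s ii (j' + 1) + 1 + 1) = -(-1:ℤ)^(cfun s ii (j' + 1) + 1) := by
    ring
  rw [hpow] at h1
  simp only [Nat.add_sub_cancel]
  omega

theorem W_zero (s : ℕ) (ii : ℕ → ℕ)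
    (hpos : ∀ k : ℕ, 1 ≤ k → k ≤ s → 1 ≤ ii k) :
    Wfun s ii 0 = -(∑ k ∈ Finset.Icc 1 s, (-1:ℤ)^k * (ii k : ℤ)) := by
  have hfil : (Finset.Icc 1 s).filter (fun k => ii k < 0) = ∅ := by
    apply Finset.filter_false_of_mem
    intro k _
    omega
  unfold Wfun Bfun cfun
  rw [hfil]
  simp

theorem W_top (s m : ℕ) (ii : ℕ → ℕ)
    (hrange : ∀ k : ℕ, 1 ≤ k → k ≤ s → 1 ≤ ii k ∧ ii k ≤ 2 * m - 1) (hm : 1 ≤ m) :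
    Wfun s ii (2 * m) = (∑ k ∈ Finset.Icc 1 s, (-1:ℤ)^k * (ii k : ℤ))
      + (-1)^(s+1) * (2 * m : ℤ) := by
  have hfil : (Finset.Icc 1 s).filter (fun k => ii k < 2 * m) = Finset.Icc 1 s := by
    apply Finset.filter_true_of_mem
    intro k hk
    simp only [mem_Icc] at hk
    have := (hrange k hk.1 hk.2).2
    omega
  have hc : cfun s ii (2 * m) = s := by unfold cfun; rw [hfil]; simp [Nat.card_Icc]
  unfold Wfun
  rw [hc]
  unfold Bfun
  rw [hfil]
  push_cast
  ring

theorem crossing (f : ℕ → ℤ) (N : ℕ) (M : ℤ) (T : Finset ℕ)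
    (hstep : ∀ t : ℕ, f (t+1) - f t = 1 ∨ f (t+1) - f t = -1)
    (hflat : ∀ j ∈ T, 1 ≤ j → f (j+1) = f (j-1))
    (h0 : f 0 < M) (hN : M < f N) :
    ∃ j : ℕ, 1 ≤ j ∧ j < N ∧ j ∉ T ∧ f j = M := by
  classical
  set S := (Finset.range N).filter (fun t => f t < M) with hS
  have hN0 : 0 < N := by
    rcases Nat.eq_zero_or_pos N with h | h
    · rw [h] at hN; omega
    · exact h
  have h0S : (0 : ℕ) ∈ S := by simp [hS, hN0, h0]
  have hne : S.Nonempty := ⟨0, h0S⟩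
  set j0 := S.max' hne with hj0
  have hj0S : j0 ∈ S := S.max'_mem hne
  have hj0N : j0 < N := by
    have := hj0S; simp only [hS, mem_filter, mem_range] at this; exact this.1
  have hj0lt : f j0 < M := by
    have := hj0S; simp only [hS, mem_filter, mem_range] at this; exact this.2
  have hge : ∀ t : ℕ, j0 < t → t ≤ N → M ≤ f t := by
    intro t ht htN
    rcases eq_or_lt_of_le htN with rfl | htN'
    · omega
    · by_contra hcon
      push_neg at hcon
      have : t ∈ S := by simp [hS, htN', hcon]
      have := S.le_max' t this
      omega
  have hfj : f (j0 + 1) = M := by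
    have h1 : M ≤ f (j0 + 1) := hge (j0 + 1) (by omega) (by omega)
    rcases hstep j0 with h | h <;> omega
  refine ⟨j0 + 1, by omega, ?_, ?_, hfj⟩
  · rcases eq_or_lt_of_le (show j0 + 1 ≤ N by omega) with h | h
    · rw [h] at hfj; omega
    · exact h
  · intro hmem
    have hj1N : j0 + 1 < N := by
      rcases eq_or_lt_of_le (show j0 + 1 ≤ N by omega) with h | h
      · rw [h] at hfj; omega
      · exact h
    have := hflat (j0 + 1) hmem (by omega)
    simp only [Nat.add_sub_cancel] at this
    have h2 : M ≤ f (j0 + 1 + 1) := hge (j0 + 1 + 1) (by omega) (by omega)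
    omega

end Stmt12Aux

open Stmt12Aux Finset in
theorem stmt_12 (m s : ℕ) (hm : 2 ≤ m) (hs1 : 1 ≤ s) (hs2 : s ≤ 2 * m - 2)
    (ii : ℕ → ℕ)
    (hrange : ∀ k : ℕ, 1 ≤ k → k ≤ s → 1 ≤ ii k ∧ ii k ≤ 2 * m - 1)
    (hmono : ∀ k l : ℕ, 1 ≤ k → k < l → l ≤ s → ii k < ii l)
    (hsum : (∑ k ∈ Finset.Icc 1 s, (-1 : ℤ) ^ k * (ii k : ℤ)) ≠ (-1 : ℤ) ^ s * (m : ℤ)) :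
    ∃ j : ℕ, 1 ≤ j ∧ j ≤ 2 * m - 1 ∧ (∀ k : ℕ, 1 ≤ k → k ≤ s → ii k ≠ j) ∧
      ∃ ii' : ℕ → ℕ,
        -- `ii'` is the increasing rearrangement of `i_1, …, i_s, j`
        (∀ k l : ℕ, 1 ≤ k → k < l → l ≤ s + 1 → ii' k < ii' l) ∧
        (Finset.Icc 1 (s + 1)).image ii' = insert j ((Finset.Icc 1 s).image ii) ∧
        (∑ k ∈ Finset.Icc 1 (s + 1), (-1 : ℤ) ^ k * (ii' k : ℤ)) =
          (-1 : ℤ) ^ (s + 1) * (m : ℤ) := by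
  classical
  set A := ∑ k ∈ Finset.Icc 1 s, (-1:ℤ)^k * (ii k : ℤ) with hA
  set M : ℤ := (-1)^(s+1) * (m:ℤ) with hM
  have hm1 : 1 ≤ m := by omega
  have hW0 : Wfun s ii 0 = -A := W_zero s ii (fun k hk1 hks => (hrange k hk1 hks).1)
  have hWt : Wfun s ii (2*m) = A + (-1)^(s+1) * (2*m:ℤ) := W_top s m ii hrange hm1
  have hsumW : Wfun s ii 0 + Wfun s ii (2*m) = 2 * M := by
    rw [hW0, hWt, hM]; push_cast; ring
  have hW0ne : Wfun s ii 0 ≠ M := by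
    rw [hW0, hM]
    intro h
    apply hsum
    have hp : (-1:ℤ)^(s+1) = -(-1:ℤ)^s := by ring
    rw [hp] at h
    linarith
  have hstep : ∀ t : ℕ, Wfun s ii (t+1) - Wfun s ii t = 1 ∨
      Wfun s ii (t+1) - Wfun s ii t = -1 := by
    intro t
    rw [step s ii hmono t]
    exact neg_one_pow_eq_or ℤ _
  have hflat : ∀ j ∈ (Finset.Icc 1 s).image ii, 1 ≤ j → Wfun s ii (j+1) = Wfun s ii (j-1) := by
    intro j hj hj1
    simp only [Finset.mem_image, Finset.mem_Icc] at hj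
    obtain ⟨q, ⟨hq1, hqs⟩, hqj⟩ := hj
    exact flat s ii hmono j q hq1 hqs hqj hj1
  have hexists : ∃ j : ℕ, 1 ≤ j ∧ j < 2*m ∧ j ∉ (Finset.Icc 1 s).image ii ∧ Wfun s ii j = M := by
    rcases lt_or_gt_of_ne hW0ne with hlt | hgt
    · exact crossing (Wfun s ii) (2*m) M ((Finset.Icc 1 s).image ii) hstep hflat hlt (by omega)
    · have hstep' : ∀ t : ℕ, (2*M - Wfun s ii (t+1)) - (2*M - Wfun s ii t) = 1 ∨
          (2*M - Wfun s ii (t+1)) - (2*M - Wfun s ii t) = -1 := by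
        intro t
        rcases hstep t with h | h
        · right; omega
        · left; omega
      have hflat' : ∀ j ∈ (Finset.Icc 1 s).image ii, 1 ≤ j →
          2*M - Wfun s ii (j+1) = 2*M - Wfun s ii (j-1) := by
        intro j hj hj1
        have := hflat j hj hj1
        omega
      have h0' : 2*M - Wfun s ii 0 < M := by omega
      have hN' : M < 2*M - Wfun s ii (2*m) := by omega
      obtain ⟨j, h1, h2, h3, h4⟩ :=
        crossing (fun t => 2*M - Wfun s ii t) (2*m) M ((Finset.Icc 1 s).image ii) hstep' hflat' h0' hN'
      have h4' : 2*M - Wfun s ii j = M := h4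
      exact ⟨j, h1, h2, h3, by omega⟩
  obtain ⟨j, hj1, hjN, hjT, hjW⟩ := hexists
  have hjle : j ≤ 2*m - 1 := by omega
  have hjT' : ∀ k : ℕ, 1 ≤ k → k ≤ s → ii k ≠ j := by
    intro k hk1 hks heq
    apply hjT
    exact Finset.mem_image.2 ⟨k, Finset.mem_Icc.2 ⟨hk1, hks⟩, heq⟩
  set c := cfun s ii j with hc
  have hcs : c ≤ s := cfun_le s ii j
  have hlt' : ∀ k : ℕ, 1 ≤ k → k ≤ c → ii k < j := by
    intro k hk1 hkc
    exact (lt_iff_le_cfun s ii hmono j k hk1 (le_trans hkc hcs)).2 hkc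
  have hgt' : ∀ k : ℕ, c + 1 ≤ k → k ≤ s → j < ii k := by
    intro k hk hks
    have h1 : ¬ ii k < j := by
      intro h
      have := (lt_iff_le_cfun s ii hmono j k (by omega) hks).1 h
      omega
    have h2 := hjT' k (by omega) hks
    omega
  set ii' : ℕ → ℕ := fun k => if k ≤ c then ii k else if k = c + 1 then j else ii (k-1)
    with hii'
  have e1 : ∀ k : ℕ, k ≤ c → ii' k = ii k := by
    intro k h
    simp only [hii']
    rw [if_pos h]
  have e2 : ii' (c+1) = j := by
    simp [hii']
  have e3 : ∀ k : ℕ, c + 2 ≤ k → ii' k = ii (k-1) := by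
    intro k h
    simp only [hii']
    rw [if_neg (by omega), if_neg (by omega)]
  refine ⟨j, hj1, hjle, hjT', ii', ?_, ?_, ?_⟩
  · -- monotonicity
    intro k l hk1 hkl hls1
    by_cases hlc : l ≤ c
    · rw [e1 k (by omega), e1 l hlc]
      exact hmono k l hk1 hkl (le_trans hlc hcs)
    · by_cases hlc1 : l = c + 1
      · rw [e1 k (by omega), hlc1, e2]
        exact hlt' k hk1 (by omega)
      · rw [e3 l (by omega)]
        by_cases hkc : k ≤ c
        · rw [e1 k hkc]
          exact lt_trans (hlt' k hk1 hkc) (hgt' (l-1) (by omega) (by omega))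
        · by_cases hkc1 : k = c + 1
          · rw [hkc1, e2]
            exact hgt' (l-1) (by omega) (by omega)
          · rw [e3 k (by omega)]
            exact hmono (k-1) (l-1) (by omega) (by omega) (by omega)
  · -- image
    ext x
    simp only [Finset.mem_image, Finset.mem_insert, Finset.mem_Icc]
    constructor
    · rintro ⟨k, ⟨hk1, hks1⟩, rfl⟩
      by_cases hkc : k ≤ c
      · exact Or.inr ⟨k, ⟨hk1, by omega⟩, (e1 k hkc).symm ▸ rfl⟩
      · by_cases hkc1 : k = c + 1
        · left; rw [hkc1, e2]
        · right
          refine ⟨k - 1, ⟨by omega, by omega⟩, ?_⟩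
          rw [e3 k (by omega)]
    · rintro (rfl | ⟨k, ⟨hk1, hks⟩, rfl⟩)
      · exact ⟨c+1, ⟨by omega, by omega⟩, e2⟩
      · by_cases hkc : k ≤ c
        · exact ⟨k, ⟨hk1, by omega⟩, e1 k hkc⟩
        · refine ⟨k+1, ⟨by omega, by omega⟩, ?_⟩
          rw [e3 (k+1) (by omega)]
          simp
  · -- the sum
    have hsplit1 : Finset.Icc 1 (s+1)
        = insert (c+1) (Finset.Icc 1 c ∪ Finset.Icc (c+2) (s+1)) := by
      ext t
      simp only [Finset.mem_insert, Finset.mem_union, Finset.mem_Icc]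
      omega
    have hd1 : (c+1) ∉ Finset.Icc 1 c ∪ Finset.Icc (c+2) (s+1) := by
      simp only [Finset.mem_union, Finset.mem_Icc]
      omega
    have hd2 : Disjoint (Finset.Icc 1 c) (Finset.Icc (c+2) (s+1)) := by
      rw [Finset.disjoint_left]
      intro a ha hb
      simp only [Finset.mem_Icc] at ha hb
      omega
    rw [hsplit1, Finset.sum_insert hd1, Finset.sum_union hd2]
    have pieceA : ∑ k ∈ Finset.Icc 1 c, (-1:ℤ)^k * (ii' k : ℤ)
        = ∑ k ∈ Finset.Icc 1 c, (-1:ℤ)^k * (ii k : ℤ) := by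
      apply Finset.sum_congr rfl
      intro k hk
      rw [e1 k (Finset.mem_Icc.1 hk).2]
    have pieceB : (-1:ℤ)^(c+1) * (ii' (c+1) : ℤ) = (-1:ℤ)^(c+1) * (j : ℤ) := by
      rw [e2]
    have himg : Finset.Icc (c+2) (s+1) = (Finset.Icc (c+1) s).image (· + 1) := by
      ext t
      simp only [Finset.mem_image, Finset.mem_Icc]
      constructor
      · intro h
        exact ⟨t - 1, by omega, by omega⟩
      · rintro ⟨a, ha, rfl⟩
        omega
    have pieceC : ∑ k ∈ Finset.Icc (c+2) (s+1), (-1:ℤ)^k * (ii' k : ℤ)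
        = -∑ k ∈ Finset.Icc (c+1) s, (-1:ℤ)^k * (ii k : ℤ) := by
      rw [himg, Finset.sum_image (by intro a _ b _ h; simp only at h; omega)]
      rw [← Finset.sum_neg_distrib]
      apply Finset.sum_congr rfl
      intro k hk
      simp only [Finset.mem_Icc] at hk
      rw [e3 (k+1) (by omega)]
      simp only [Nat.add_sub_cancel]
      ring
    rw [pieceA, pieceB, pieceC]
    have hBfun : Bfun s ii j = ∑ k ∈ Finset.Icc 1 c, (-1:ℤ)^k * (ii k : ℤ) := by
      unfold Bfun
      rw [filter_eq_Icc s ii hmono j]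
    have hsplit2 : A = (∑ k ∈ Finset.Icc 1 c, (-1:ℤ)^k * (ii k : ℤ))
        + ∑ k ∈ Finset.Icc (c+1) s, (-1:ℤ)^k * (ii k : ℤ) := by
      rw [hA, ← Finset.sum_union (by
        rw [Finset.disjoint_left]
        intro a ha hb
        simp only [Finset.mem_Icc] at ha hb
        omega)]
      congr 1
      ext t
      simp only [Finset.mem_union, Finset.mem_Icc]
      omega
    have hWj : 2 * Bfun s ii j - A + (-1:ℤ)^(c+1) * (j:ℤ) = M := hjW
    rw [hBfun] at hWj
    linear_combination hWj + hsplit2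
end

section
/- Let m ≥ 1, let s ∈ {1, …, 2m−1}, and let 1 ≤ i_1 < ⋯ < i_s ≤ 2m−1 be integers with Σ_{k=1}^{s}(−1)^k·i_k = (−1)^s·m. For 1 ≤ i ≤ 2m−1 let ϖ_i ∈ ℚ^{2m} be the vector whose first i coordinates equal 1 − i/(2m) and whose remaining 2m−i coordinates equal −i/(2m). Then every coordinate of the vector Σ_{j=1}^{s}(−1)^j·ϖ_{i_j} ∈ ℚ^{2m} equals 1/2 or −1/2, and exactly m coordinates equal 1/2. -/
lemma alt_sum (a : ℕ) : ∀ s : ℕ, a ≤ s + 1 →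
    ∑ j ∈ Finset.Icc a s, (-1:ℚ)^j = ((-1)^s + (-1)^a)/2 := by
  intro s
  induction s with
  | zero =>
    intro h
    interval_cases a
    · simp
    · simp [Finset.Icc_eq_empty_of_lt]
  | succ n ih =>
    intro h
    rcases Nat.lt_or_ge a (n + 2) with h2 | h2
    · rw [Finset.sum_Icc_succ_top (by omega : a ≤ n + 1), ih (by omega), pow_succ]
      ring
    · have : a = n + 2 := by omega
      subst this
      rw [Finset.Icc_eq_empty (by omega)]
      simp [pow_succ]

lemma exists_j0 (s c : ℕ) (ii : ℕ → ℕ)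
    (hmono : ∀ k l : ℕ, 1 ≤ k → k < l → l ≤ s → ii k < ii l) :
    ∃ j0, j0 ≤ s ∧ ∀ j, 1 ≤ j → j ≤ s → (c < ii j ↔ j0 < j) := by
  refine ⟨((Finset.Icc 1 s).filter (fun j => ii j ≤ c)).card, ?_, ?_⟩
  · calc ((Finset.Icc 1 s).filter (fun j => ii j ≤ c)).card
        ≤ (Finset.Icc 1 s).card := Finset.card_filter_le _ _
      _ = s := by simp
  · intro j hj1 hjs
    constructor
    · intro hc
      have hsub : (Finset.Icc 1 s).filter (fun j => ii j ≤ c) ⊆ Finset.Ico 1 j := by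
        intro j' hj'
        simp only [Finset.mem_filter, Finset.mem_Icc] at hj'
        simp only [Finset.mem_Ico]
        refine ⟨hj'.1.1, ?_⟩
        by_contra hge
        push_neg at hge
        rcases Nat.eq_or_lt_of_le hge with he | hl
        · subst he; omega
        · have := hmono j j' hj1 hl hj'.1.2
          omega
      have := Finset.card_le_card hsub
      rw [Nat.card_Ico] at this
      omega
    · intro hlt
      by_contra hc
      push_neg at hc
      have hsub : Finset.Icc 1 j ⊆ (Finset.Icc 1 s).filter (fun j => ii j ≤ c) := by
        intro j' hj'
        simp only [Finset.mem_Icc] at hj'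
        simp only [Finset.mem_filter, Finset.mem_Icc]
        refine ⟨⟨hj'.1, le_trans hj'.2 hjs⟩, ?_⟩
        rcases Nat.eq_or_lt_of_le hj'.2 with he | hl
        · subst he; exact hc
        · exact le_trans (le_of_lt (hmono j' j hj'.1 hl hjs)) hc
      have := Finset.card_le_card hsub
      rw [Nat.card_Icc] at this
      omega

theorem stmt_13 (m s : ℕ) (hm : 1 ≤ m) (hs1 : 1 ≤ s) (hs2 : s ≤ 2 * m - 1)
    (ii : ℕ → ℕ)
    (hrange : ∀ k : ℕ, 1 ≤ k → k ≤ s → 1 ≤ ii k ∧ ii k ≤ 2 * m - 1)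
    (hmono : ∀ k l : ℕ, 1 ≤ k → k < l → l ≤ s → ii k < ii l)
    (hsum : (∑ k ∈ Finset.Icc 1 s, (-1 : ℤ) ^ k * (ii k : ℤ)) = (-1 : ℤ) ^ s * (m : ℤ))
    -- `ϖ_i ∈ ℚ^{2m}`: first `i` coordinates equal `1 − i/(2m)`, the rest equal `−i/(2m)`
    (w : ℕ → Fin (2 * m) → ℚ)
    (hw : ∀ i : ℕ, w i = fun k : Fin (2 * m) => (if (k : ℕ) < i then 1 else 0) - (i : ℚ) / (2 * m))
    (v : Fin (2 * m) → ℚ)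
    (hv : v = fun k => ∑ j ∈ Finset.Icc 1 s, (-1 : ℚ) ^ j * w (ii j) k) :
    (∀ k : Fin (2 * m), v k = 1 / 2 ∨ v k = -(1 / 2)) ∧
    (Finset.univ.filter fun k : Fin (2 * m) => v k = 1 / 2).card = m := by
  have hm0 : (2 * m : ℚ) ≠ 0 := by positivity
  -- rational version of hsum
  have hsumQ : (∑ j ∈ Finset.Icc 1 s, (-1 : ℚ) ^ j * (ii j : ℚ)) = (-1 : ℚ) ^ s * (m : ℚ) := by
    have := congrArg (fun z : ℤ => (z : ℚ)) hsum
    push_cast at this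
    convert this using 2
  -- Part 1
  have part1 : ∀ k : Fin (2 * m), v k = 1 / 2 ∨ v k = -(1 / 2) := by
    intro k
    obtain ⟨j0, hj0s, hj0⟩ := exists_j0 s (k : ℕ) ii hmono
    have hvk : v k = (-1:ℚ)^(j0+1) / 2 := by
      rw [hv]
      simp only [hw]
      have hsplit : ∀ j ∈ Finset.Icc 1 s,
          (-1 : ℚ) ^ j * ((if (k : ℕ) < ii j then (1:ℚ) else 0) - (ii j : ℚ) / (2 * m))
          = (if j0 < j then (-1:ℚ)^j else 0) - ((-1:ℚ)^j * (ii j : ℚ)) / (2 * m) := by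
        intro j hj
        simp only [Finset.mem_Icc] at hj
        rw [if_congr (hj0 j hj.1 hj.2) rfl rfl]
        by_cases h : j0 < j <;> simp [h] <;> ring
      rw [Finset.sum_congr rfl hsplit, Finset.sum_sub_distrib]
      have h1 : ∑ j ∈ Finset.Icc 1 s, (if j0 < j then (-1:ℚ)^j else 0)
          = ∑ j ∈ Finset.Icc (j0+1) s, (-1:ℚ)^j := by
        rw [← Finset.sum_filter]
        congr 1
        ext j
        simp only [Finset.mem_filter, Finset.mem_Icc]
        omega
      have h2 : ∑ j ∈ Finset.Icc 1 s, ((-1:ℚ)^j * (ii j : ℚ)) / (2 * m)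
          = (-1:ℚ)^s / 2 := by
        rw [← Finset.sum_div, hsumQ]
        field_simp
      rw [h1, h2, alt_sum (j0+1) s (by omega)]
      ring
    rw [hvk]
    rcases Nat.even_or_odd j0 with he | ho
    · right
      rw [pow_succ, he.neg_one_pow]
      ring
    · left
      rw [pow_succ, ho.neg_one_pow]
      ring
  refine ⟨part1, ?_⟩
  -- Part 2: sum of coordinates is 0
  have hwsum : ∀ j, 1 ≤ j → j ≤ s → ∑ k : Fin (2 * m), w (ii j) k = 0 := by
    intro j hj1 hjs
    rw [hw]
    rw [Finset.sum_sub_distrib, Finset.sum_const, Finset.card_univ, Fintype.card_fin]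
    have hle : ii j ≤ 2 * m := by have := hrange j hj1 hjs; omega
    have hcount : ∑ k : Fin (2 * m), (if (k : ℕ) < ii j then (1:ℚ) else 0) = (ii j : ℚ) := by
      rw [Fin.sum_univ_eq_sum_range (fun k => if k < ii j then (1:ℚ) else 0)]
      rw [← Finset.sum_filter]
      have : (Finset.range (2*m)).filter (fun k => k < ii j) = Finset.range (ii j) := by
        ext x
        simp only [Finset.mem_filter, Finset.mem_range]
        omega
      rw [this]
      simp
    rw [hcount]
    field_simp
    rw [nsmul_eq_mul, Nat.cast_mul, Nat.cast_ofNat, mul_div_cancel₀ _ hm0, sub_self]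
  have hvsum : ∑ k : Fin (2 * m), v k = 0 := by
    rw [hv]
    rw [Finset.sum_comm]
    apply Finset.sum_eq_zero
    intro j hj
    simp only [Finset.mem_Icc] at hj
    rw [← Finset.mul_sum, hwsum j hj.1 hj.2, mul_zero]
  -- translate sum to count
  set P : Fin (2*m) → Prop := fun k => v k = 1/2 with hP
  classical
  have hA : ∑ k ∈ Finset.univ.filter P, v k
      = ((Finset.univ.filter P).card : ℚ) * (1/2) := by
    rw [Finset.sum_congr rfl (fun k hk => (Finset.mem_filter.mp hk).2), Finset.sum_const,
      nsmul_eq_mul]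
  have hB : ∑ k ∈ Finset.univ.filter (fun k => ¬ P k), v k
      = ((Finset.univ.filter (fun k => ¬ P k)).card : ℚ) * (-(1/2)) := by
    have : ∀ k ∈ Finset.univ.filter (fun k => ¬ P k), v k = -(1/2) := by
      intro k hk
      have hnp := (Finset.mem_filter.mp hk).2
      rcases part1 k with h | h
      · exact absurd h hnp
      · exact h
    rw [Finset.sum_congr rfl this, Finset.sum_const, nsmul_eq_mul]
  have hsum2 : (0:ℚ)
      = ((Finset.univ.filter P).card : ℚ) * (1/2)
        + ((Finset.univ.filter (fun k => ¬ P k)).card : ℚ) * (-(1/2)) := by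
    rw [← hvsum, ← Finset.sum_filter_add_sum_filter_not Finset.univ P, hA, hB]
  have hcards : (Finset.univ.filter P).card + (Finset.univ.filter (fun k => ¬ P k)).card
      = 2 * m := by
    rw [Finset.card_filter_add_card_filter_not, Finset.card_univ, Fintype.card_fin]
  have : ((Finset.univ.filter P).card : ℚ) = m := by
    have hc2 : ((Finset.univ.filter (fun k => ¬ P k)).card : ℚ)
        = 2 * m - (Finset.univ.filter P).card := by
      have := congrArg (fun n : ℕ => (n : ℚ)) hcards
      push_cast at this
      linarith
    rw [hc2] at hsum2
    linarith
  exact_mod_cast this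
end

section
/- Let m ≥ 2, let e = Σ_{i=1}^{m} E_{i,m+i} and f = Σ_{i=1}^{m} E_{m+i,i} in sl_{2m}(ℂ) (matrix units E_{i,j}), and let g^e = {Y ∈ sl_{2m}(ℂ) : [Y, e] = 0} be the centralizer of e. Let 𝒮 = f + g^e be the corresponding Slodowy slice, R the algebra of polynomial functions on 𝒮, and Ī ⊆ R the ideal generated by the restrictions to 𝒮 of the entries of the map X ↦ X² − (tr(X²)/2m)·I_{2m}. Then R/Ī is isomorphic as a ℂ-algebra to the polynomial ring ℂ[z] in one variable. -/
open Matrix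

noncomputable section

abbrev MatB (m : ℕ) := Matrix (Fin m ⊕ Fin m) (Fin m ⊕ Fin m) ℂ

/-- The algebra of polynomial functions on a subset `S` of the space of square matrices:
the subalgebra of all functions `S → ℂ` generated by the matrix-entry coordinate
functions. -/
def funAlg (m : ℕ) (S : Set (MatB m)) : Subalgebra ℂ (↥S → ℂ) :=
  Algebra.adjoin ℂ {p | ∃ i j : Fin m ⊕ Fin m, p = fun X => X.1 i j}

/-- Entries of points of the Slodowy slice. -/
lemma slice_entries (m : ℕ) (e f : MatB m)
    (he : e = Matrix.fromBlocks 0 1 0 0) (hf : f = Matrix.fromBlocks 0 0 1 0)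
    (S : Set (MatB m))
    (hS : S = {X | ∃ Y : MatB m, Y.trace = 0 ∧ Y * e = e * Y ∧ X = f + Y})
    (x : MatB m) (hx : x ∈ S) :
    (∀ i j, x (Sum.inr i) (Sum.inl j) = if i = j then 1 else 0) ∧
    (∀ i j, x (Sum.inl i) (Sum.inl j) = x (Sum.inr i) (Sum.inr j)) := by
  subst hS he hf
  obtain ⟨Y, -, hc, rfl⟩ := hx
  have hC : ∀ i j, Y (Sum.inr i) (Sum.inl j) = 0 := by
    intro i j
    have h := congrFun (congrFun hc (Sum.inr i)) (Sum.inr j)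
    simpa [Matrix.mul_apply, Fintype.sum_sum_type, Matrix.one_apply] using h
  have hAD : ∀ i j, Y (Sum.inl i) (Sum.inl j) = Y (Sum.inr i) (Sum.inr j) := by
    intro i j
    have h := congrFun (congrFun hc (Sum.inl i)) (Sum.inr j)
    simpa [Matrix.mul_apply, Fintype.sum_sum_type, Matrix.one_apply] using h
  refine ⟨fun i j => ?_, fun i j => ?_⟩
  · simp [Matrix.add_apply, Matrix.one_apply, hC i j]
  · simp [Matrix.add_apply, hAD i j]

set_option maxHeartbeats 2000000 in
set_option synthInstance.maxHeartbeats 400000 in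
theorem stmt_15 (m : ℕ) (hm : 2 ≤ m)
    -- `e = Σ_{i=1}^m E_{i,m+i}` and `f = Σ_{i=1}^m E_{m+i,i}` in `sl_{2m}(ℂ)`
    (e f : MatB m)
    (he : e = Matrix.fromBlocks 0 1 0 0)
    (hf : f = Matrix.fromBlocks 0 0 1 0)
    -- the Slodowy slice `𝒮 = f + g^e`, where `g^e` is the centralizer of `e` in `sl_{2m}`
    (S : Set (MatB m))
    (hS : S = {X | ∃ Y : MatB m, Y.trace = 0 ∧ Y * e = e * Y ∧ X = f + Y})
    -- `Ī` is the ideal of `R = ℂ[𝒮]` generated by the restrictions to `𝒮` of the entries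
    -- of `X ↦ X² − (tr(X²)/2m)·I_{2m}`
    (Ibar : Ideal (funAlg m S))
    (hI : Ibar = Ideal.span {p : funAlg m S | ∃ i j : Fin m ⊕ Fin m,
      (p : ↥S → ℂ) = fun X =>
        (X.1 * X.1) i j - ((X.1 * X.1).trace / (2 * m)) * (1 : MatB m) i j}) :
    Nonempty ((funAlg m S ⧸ Ibar) ≃ₐ[ℂ] Polynomial ℂ) := by
  haveI : NeZero m := ⟨by omega⟩
  -- pointwise facts
  have P1 : ∀ x : ↥S, ∀ i j, x.1 (Sum.inr i) (Sum.inl j) = if i = j then 1 else 0 :=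
    fun x => (slice_entries m e f he hf S hS x.1 x.2).1
  have P2 : ∀ x : ↥S, ∀ i j, x.1 (Sum.inl i) (Sum.inl j) = x.1 (Sum.inr i) (Sum.inr j) :=
    fun x => (slice_entries m e f he hf S hS x.1 x.2).2
  -- coordinate functions
  have coordMem : ∀ i j : Fin m ⊕ Fin m, (fun x : ↥S => x.1 i j) ∈ funAlg m S :=
    fun i j => Algebra.subset_adjoin ⟨i, j, rfl⟩
  set coord : (Fin m ⊕ Fin m) → (Fin m ⊕ Fin m) → funAlg m S :=
    fun i j => ⟨fun x => x.1 i j, coordMem i j⟩ with hcoord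
  -- entry functions of the square lie in the algebra
  have sqMem : ∀ i j : Fin m ⊕ Fin m, (fun x : ↥S => (x.1 * x.1) i j) ∈ funAlg m S := by
    intro i j
    have h : (fun x : ↥S => (x.1 * x.1) i j)
        = ∑ k, (fun x : ↥S => x.1 i k) * (fun x : ↥S => x.1 k j) := by
      funext x
      simp [Matrix.mul_apply, Finset.sum_apply]
    rw [h]
    exact Subalgebra.sum_mem _ fun k _ => mul_mem (coordMem i k) (coordMem k j)
  have trMem : (fun x : ↥S => (x.1 * x.1).trace) ∈ funAlg m S := by
    have h : (fun x : ↥S => (x.1 * x.1).trace)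
        = ∑ d, (fun x : ↥S => (x.1 * x.1) d d) := by
      funext x
      simp [Matrix.trace, Matrix.diag, Finset.sum_apply]
    rw [h]
    exact Subalgebra.sum_mem _ fun d _ => sqMem d d
  have constMem : ∀ c : ℂ, (fun _ : ↥S => c) ∈ funAlg m S := by
    intro c
    have h : (fun _ : ↥S => c) = algebraMap ℂ (↥S → ℂ) c := rfl
    rw [h]
    exact Subalgebra.algebraMap_mem _ c
  have genMem : ∀ i j : Fin m ⊕ Fin m,
      (fun x : ↥S => (x.1 * x.1) i j - ((x.1 * x.1).trace / (2 * m)) * (1 : MatB m) i j)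
        ∈ funAlg m S := by
    intro i j
    have h : (fun x : ↥S => (x.1 * x.1) i j - ((x.1 * x.1).trace / (2 * m)) * (1 : MatB m) i j)
        = (fun x : ↥S => (x.1 * x.1) i j)
          - (fun x : ↥S => (x.1 * x.1).trace) * (fun _ : ↥S => (1 : MatB m) i j / (2 * m)) := by
      funext x
      simp [Pi.sub_apply]
      ring
    rw [h]
    exact sub_mem (sqMem i j) (mul_mem trMem (constMem _))
  set genE : (Fin m ⊕ Fin m) → (Fin m ⊕ Fin m) → funAlg m S := fun i j =>
    ⟨fun x => (x.1 * x.1) i j - ((x.1 * x.1).trace / (2 * m)) * (1 : MatB m) i j,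
      genMem i j⟩ with hgenE
  have genInI : ∀ i j, genE i j ∈ Ibar := by
    intro i j
    rw [hI]
    exact Ideal.subset_span ⟨i, j, rfl⟩
  -- square entries pointwise
  have sq21 : ∀ x : ↥S, ∀ i j, (x.1 * x.1) (Sum.inr i) (Sum.inl j)
      = 2 * x.1 (Sum.inl i) (Sum.inl j) := by
    intro x i j
    rw [Matrix.mul_apply, Fintype.sum_sum_type]
    simp only [P1 x, P2 x]
    simp [Finset.sum_ite_eq, Finset.sum_ite_eq', ite_mul, mul_ite, mul_zero, zero_mul,
      one_mul, mul_one]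
    ring
  have sq11 : ∀ x : ↥S, ∀ i j, (x.1 * x.1) (Sum.inl i) (Sum.inl j)
      = (∑ k, x.1 (Sum.inl i) (Sum.inl k) * x.1 (Sum.inl k) (Sum.inl j))
        + x.1 (Sum.inl i) (Sum.inr j) := by
    intro x i j
    rw [Matrix.mul_apply, Fintype.sum_sum_type]
    congr 1
    simp [P1 x, mul_ite, mul_zero, mul_one]
  -- membership of coordinates
  have aIn : ∀ i j, coord (Sum.inl i) (Sum.inl j) ∈ Ibar := by
    intro i j
    have h : coord (Sum.inl i) (Sum.inl j)
        = algebraMap ℂ (funAlg m S) (2⁻¹ : ℂ) * genE (Sum.inr i) (Sum.inl j) := by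
      apply Subtype.ext
      funext x
      have hx : ((algebraMap ℂ (funAlg m S) (2⁻¹ : ℂ) * genE (Sum.inr i) (Sum.inl j) :
          funAlg m S) : ↥S → ℂ) x
          = (2⁻¹ : ℂ) * ((genE (Sum.inr i) (Sum.inl j) : funAlg m S) : ↥S → ℂ) x := rfl
      rw [hx, hgenE]
      have h1 : (1 : MatB m) (Sum.inr i) (Sum.inl j) = 0 := by
        simp [Matrix.one_apply]
      simp only [sq21 x, h1]
      ring
    rw [h]
    exact Ideal.mul_mem_left _ _ (genInI _ _)
  have bOff : ∀ i j, i ≠ j → coord (Sum.inl i) (Sum.inr j) ∈ Ibar := by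
    intro i j hij
    have h : coord (Sum.inl i) (Sum.inr j)
        = genE (Sum.inl i) (Sum.inl j)
          - ∑ k, coord (Sum.inl i) (Sum.inl k) * coord (Sum.inl k) (Sum.inl j) := by
      apply Subtype.ext
      funext x
      have hx : ((genE (Sum.inl i) (Sum.inl j)
          - ∑ k, coord (Sum.inl i) (Sum.inl k) * coord (Sum.inl k) (Sum.inl j) :
          funAlg m S) : ↥S → ℂ) x
          = ((genE (Sum.inl i) (Sum.inl j) : funAlg m S) : ↥S → ℂ) x
            - ((∑ k, coord (Sum.inl i) (Sum.inl k) * coord (Sum.inl k) (Sum.inl j) :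
              funAlg m S) : ↥S → ℂ) x := rfl
      have hs : ((∑ k, coord (Sum.inl i) (Sum.inl k) * coord (Sum.inl k) (Sum.inl j) :
          funAlg m S) : ↥S → ℂ) x
          = ∑ k, x.1 (Sum.inl i) (Sum.inl k) * x.1 (Sum.inl k) (Sum.inl j) := by
        rw [AddSubmonoidClass.coe_finset_sum, Finset.sum_apply]
        rfl
      rw [hx, hs, hgenE]
      have h1 : (1 : MatB m) (Sum.inl i) (Sum.inl j) = 0 := by
        simp [Matrix.one_apply, hij]
      simp only [sq11 x, h1]
      ring
    rw [h]
    exact sub_mem (genInI _ _)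
      (Ideal.sum_mem _ fun k _ => Ideal.mul_mem_right _ _ (aIn i k))
  have bDiag : ∀ i, coord (Sum.inl i) (Sum.inr i) - coord (Sum.inl 0) (Sum.inr 0) ∈ Ibar := by
    intro i
    have h : coord (Sum.inl i) (Sum.inr i) - coord (Sum.inl 0) (Sum.inr 0)
        = (genE (Sum.inl i) (Sum.inl i)
            - ∑ k, coord (Sum.inl i) (Sum.inl k) * coord (Sum.inl k) (Sum.inl i))
          - (genE (Sum.inl 0) (Sum.inl 0)
            - ∑ k, coord (Sum.inl 0) (Sum.inl k) * coord (Sum.inl k) (Sum.inl 0)) := by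
      apply Subtype.ext
      funext x
      have hs : ∀ a : Fin m, ((∑ k, coord (Sum.inl a) (Sum.inl k) * coord (Sum.inl k) (Sum.inl a) :
          funAlg m S) : ↥S → ℂ) x
          = ∑ k, x.1 (Sum.inl a) (Sum.inl k) * x.1 (Sum.inl k) (Sum.inl a) := by
        intro a
        rw [AddSubmonoidClass.coe_finset_sum, Finset.sum_apply]
        rfl
      have hx : ((((genE (Sum.inl i) (Sum.inl i)
            - ∑ k, coord (Sum.inl i) (Sum.inl k) * coord (Sum.inl k) (Sum.inl i))
          - (genE (Sum.inl 0) (Sum.inl 0)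
            - ∑ k, coord (Sum.inl 0) (Sum.inl k) * coord (Sum.inl k) (Sum.inl 0))) :
          funAlg m S) : ↥S → ℂ) x
          = (((genE (Sum.inl i) (Sum.inl i) : funAlg m S) : ↥S → ℂ) x
              - ∑ k, x.1 (Sum.inl i) (Sum.inl k) * x.1 (Sum.inl k) (Sum.inl i))
            - (((genE (Sum.inl 0) (Sum.inl 0) : funAlg m S) : ↥S → ℂ) x
              - ∑ k, x.1 (Sum.inl 0) (Sum.inl k) * x.1 (Sum.inl k) (Sum.inl 0)) := by
        rw [← hs i, ← hs 0]
        rfl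
      have hl : ((coord (Sum.inl i) (Sum.inr i) - coord (Sum.inl 0) (Sum.inr 0) :
          funAlg m S) : ↥S → ℂ) x
          = x.1 (Sum.inl i) (Sum.inr i) - x.1 (Sum.inl 0) (Sum.inr 0) := rfl
      rw [hl, hx, hgenE]
      have h1 : ∀ a : Fin m, (1 : MatB m) (Sum.inl a) (Sum.inl a) = 1 := by
        intro a; simp [Matrix.one_apply]
      simp only [sq11 x, h1]
      ring
    rw [h]
    refine sub_mem (sub_mem (genInI _ _) ?_) (sub_mem (genInI _ _) ?_) <;>
      exact Ideal.sum_mem _ fun k _ => Ideal.mul_mem_right _ _ (aIn _ k)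
  have cConst : ∀ i j, coord (Sum.inr i) (Sum.inl j)
      = algebraMap ℂ (funAlg m S) (if i = j then 1 else 0) := by
    intro i j
    apply Subtype.ext
    funext x
    exact P1 x i j
  have dEq : ∀ i j, coord (Sum.inr i) (Sum.inr j) = coord (Sum.inl i) (Sum.inl j) := by
    intro i j
    apply Subtype.ext
    funext x
    exact (P2 x i j).symm
  -- the algebra map from polynomials
  set mk : funAlg m S →ₐ[ℂ] funAlg m S ⧸ Ibar := Ideal.Quotient.mkₐ ℂ Ibar with hmk
  set t : funAlg m S := coord (Sum.inl 0) (Sum.inr 0) with ht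
  set F : Polynomial ℂ →ₐ[ℂ] funAlg m S ⧸ Ibar := Polynomial.aeval (mk t) with hF
  -- surjectivity
  have hsurj : Function.Surjective F := by
    have key : ∀ r : funAlg m S, mk r ∈ F.range := by
      intro r
      refine (fun (P : funAlg m S → Prop)
          (h1 : ∀ x (h : x ∈ {p : ↥S → ℂ | ∃ i j : Fin m ⊕ Fin m, p = fun X => X.1 i j}),
            P ⟨x, Algebra.subset_adjoin h⟩)
          (h2 : ∀ c, P (algebraMap ℂ (funAlg m S) c))
          (h3 : ∀ a b, P a → P b → P (a + b)) (h4 : ∀ a b, P a → P b → P (a * b))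
          (r : funAlg m S) =>
          Algebra.adjoin_induction (p := fun x hx => P ⟨x, hx⟩) h1 (fun c => h2 c)
            (fun _ _ _ _ ha hb => h3 _ _ ha hb) (fun _ _ _ _ ha hb => h4 _ _ ha hb) r.2)
        (fun r => mk r ∈ F.range) ?_ ?_ ?_ ?_ r
      · rintro z ⟨i, j, rfl⟩
        show mk (coord i j) ∈ F.range
        rcases i with i | i <;> rcases j with j | j
        · have : mk (coord (Sum.inl i) (Sum.inl j)) = 0 := by
            rw [hmk, Ideal.Quotient.mkₐ_eq_mk, Ideal.Quotient.eq_zero_iff_mem]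
            exact aIn i j
          rw [this]; exact zero_mem _
        · by_cases hij : i = j
          · subst hij
            have : mk (coord (Sum.inl i) (Sum.inr i)) = mk t := by
              rw [hmk, Ideal.Quotient.mkₐ_eq_mk, Ideal.Quotient.eq]
              exact bDiag i
            rw [this]
            exact ⟨Polynomial.X, by rw [hF]; simp⟩
          · have : mk (coord (Sum.inl i) (Sum.inr j)) = 0 := by
              rw [hmk, Ideal.Quotient.mkₐ_eq_mk, Ideal.Quotient.eq_zero_iff_mem]
              exact bOff i j hij
            rw [this]; exact zero_mem _
        · rw [cConst i j, AlgHom.commutes]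
          exact Subalgebra.algebraMap_mem _ _
        · rw [dEq i j]
          have : mk (coord (Sum.inl i) (Sum.inl j)) = 0 := by
            rw [hmk, Ideal.Quotient.mkₐ_eq_mk, Ideal.Quotient.eq_zero_iff_mem]
            exact aIn i j
          rw [this]; exact zero_mem _
      · intro c
        show mk (algebraMap ℂ (funAlg m S) c) ∈ F.range
        rw [AlgHom.commutes]
        exact Subalgebra.algebraMap_mem _ _
      · intro a b ha hb
        show mk (a + b) ∈ F.range
        have h : mk (a + b) = mk a + mk b := map_add mk a b
        rw [h]; exact add_mem ha hb
      · intro a b ha hb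
        show mk (a * b) ∈ F.range
        have h : mk (a * b) = mk a * mk b := _root_.map_mul mk a b
        rw [h]; exact mul_mem ha hb
    intro y
    obtain ⟨r, rfl⟩ := Ideal.Quotient.mk_surjective y
    have := key r
    rw [hmk, Ideal.Quotient.mkₐ_eq_mk] at this
    exact this
  -- evaluation points on the line
  have xzMem : ∀ z : ℂ, Matrix.fromBlocks 0 (z • (1 : Matrix (Fin m) (Fin m) ℂ)) 1 0 ∈ S := by
    intro z
    rw [hS]
    refine ⟨Matrix.fromBlocks 0 (z • (1 : Matrix (Fin m) (Fin m) ℂ)) 0 0, ?_, ?_, ?_⟩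
    · simp [Matrix.trace, Matrix.diag, Fintype.sum_sum_type]
    · rw [he]
      simp [Matrix.fromBlocks_multiply]
    · rw [hf]
      simp [Matrix.fromBlocks_add]
  set xz : ℂ → ↥S := fun z => ⟨_, xzMem z⟩ with hxz
  set ev : ℂ → (funAlg m S →ₐ[ℂ] ℂ) := fun z =>
    (Pi.evalAlgHom ℂ (fun _ => ℂ) (xz z)).comp (funAlg m S).val with hev
  have evIbar : ∀ z : ℂ, ∀ r ∈ Ibar, ev z r = 0 := by
    intro z
    have hle : Ibar ≤ RingHom.ker (ev z) := by
      rw [hI, Ideal.span_le]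
      rintro p ⟨i, j, hp⟩
      have hsq : ((xz z).1 * (xz z).1)
          = Matrix.fromBlocks (z • (1 : Matrix (Fin m) (Fin m) ℂ)) 0 0
              (z • (1 : Matrix (Fin m) (Fin m) ℂ)) := by
        rw [hxz]
        simp [Matrix.fromBlocks_multiply]
      have htr : ((xz z).1 * (xz z).1).trace = 2 * m * z := by
        rw [hsq]
        simp [Matrix.trace, Matrix.diag, Fintype.sum_sum_type, Finset.sum_const]
        ring
      have hent : ∀ i j : Fin m ⊕ Fin m,
          ((xz z).1 * (xz z).1) i j = z * (1 : MatB m) i j := by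
        intro i j
        rw [hsq]
        rcases i with i | i <;> rcases j with j | j <;>
          simp [Matrix.one_apply, Matrix.smul_apply, mul_comm]
      have hm0 : (2 * m : ℂ) ≠ 0 := by
        have : (m : ℂ) ≠ 0 := Nat.cast_ne_zero.mpr (by omega)
        simp [this]
      have : ev z p = 0 := by
        have h0 : ev z p = (p : ↥S → ℂ) (xz z) := rfl
        rw [h0, hp]
        show ((xz z).1 * (xz z).1) i j - ((xz z).1 * (xz z).1).trace / (2 * m) * (1 : MatB m) i j = 0
        rw [hent i j, htr]
        rw [mul_div_cancel_left₀ z hm0]; ring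
      simpa [RingHom.mem_ker] using this
    intro r hr
    exact hle hr
  have evt : ∀ z : ℂ, ev z t = z := by
    intro z
    have h0 : ev z t = (xz z).1 (Sum.inl 0) (Sum.inr 0) := rfl
    rw [h0, hxz]
    simp
  -- injectivity
  have hinj : Function.Injective F := by
    rw [injective_iff_map_eq_zero]
    intro p hp
    have h1 : Polynomial.aeval t p ∈ Ibar := by
      have h2 : mk (Polynomial.aeval t p) = 0 := by
        rw [← Polynomial.aeval_algHom_apply]
        exact hp
      rw [hmk, Ideal.Quotient.mkₐ_eq_mk] at h2
      exact (Ideal.Quotient.eq_zero_iff_mem).mp h2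
    have h2 : ∀ z : ℂ, Polynomial.eval z p = 0 := by
      intro z
      have h3 := evIbar z _ h1
      rw [← Polynomial.aeval_algHom_apply, evt z] at h3
      rwa [Polynomial.coe_aeval_eq_eval] at h3
    have : p = 0 := Polynomial.funext fun r => by rw [h2 r]; simp
    exact this
  exact ⟨(AlgEquiv.ofBijective F ⟨hinj, hsurj⟩).symm⟩
end
end

section
/- Let r ≥ 2, let 0 ≤ k ≤ r−2 and let 1 ≤ i_1 < ⋯ < i_k ≤ r−2 be integers. In ℚ^r, set ϖ_i = e_1 + ⋯ + e_i for 1 ≤ i ≤ r−2, ϖ_{r−1} = (1/2)(e_1 + ⋯ + e_{r−1} − e_r) and ϖ_r = (1/2)(e_1 + ⋯ + e_{r−1} + e_r), where e_1, …, e_r is the standard basis. Then every coordinate of each of the two vectors Σ_{j=1}^{k}(−1)^{k−j+1}·ϖ_{i_j} + ϖ_{r−1} and Σ_{j=1}^{k}(−1)^{k−j+1}·ϖ_{i_j} + ϖ_r equals 1/2 or −1/2. -/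
/-- Key lemma: the alternating sum of a nondecreasing 0/1 sequence with signs
`(-1)^(k-j+1)` is `0`, or `-1` (and in the latter case `a < ii k` with `1 ≤ k`). -/
lemma key_alt_sum (ii : ℕ → ℕ) (a : ℕ) :
    ∀ k : ℕ, (∀ b c : ℕ, 1 ≤ b → b < c → c ≤ k → ii b < ii c) →
    (∑ j ∈ Finset.Icc 1 k, (-1 : ℚ) ^ (k - j + 1) * (if a < ii j then 1 else 0)) = 0 ∨
    ((∑ j ∈ Finset.Icc 1 k, (-1 : ℚ) ^ (k - j + 1) * (if a < ii j then 1 else 0)) = -1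
      ∧ 1 ≤ k ∧ a < ii k) := by
  intro k
  induction k with
  | zero => intro _; left; simp
  | succ k ih =>
    intro hmono
    have hsplit :
        (∑ j ∈ Finset.Icc 1 (k + 1), (-1 : ℚ) ^ (k + 1 - j + 1) * (if a < ii j then 1 else 0))
        = (∑ j ∈ Finset.Icc 1 k, (-1 : ℚ) ^ (k + 1 - j + 1) * (if a < ii j then 1 else 0))
          + (-1 : ℚ) ^ (k + 1 - (k + 1) + 1) * (if a < ii (k + 1) then 1 else 0) := by
      exact Finset.sum_Icc_succ_top (by omega) _
    have hneg :
        (∑ j ∈ Finset.Icc 1 k, (-1 : ℚ) ^ (k + 1 - j + 1) * (if a < ii j then 1 else 0))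
        = -(∑ j ∈ Finset.Icc 1 k, (-1 : ℚ) ^ (k - j + 1) * (if a < ii j then 1 else 0)) := by
      rw [← Finset.sum_neg_distrib]
      refine Finset.sum_congr rfl ?_
      intro j hj
      rw [Finset.mem_Icc] at hj
      have h1 : k + 1 - j + 1 = (k - j + 1) + 1 := by omega
      rw [h1, pow_succ]
      ring
    have hk1 : k + 1 - (k + 1) + 1 = 1 := by omega
    rw [hsplit, hneg, hk1, pow_one]
    have hmono' : ∀ b c : ℕ, 1 ≤ b → b < c → c ≤ k → ii b < ii c := by
      intro b c h1 h2 h3; exact hmono b c h1 h2 (by omega)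
    rcases ih hmono' with h0 | ⟨h1, hk1', hak⟩
    · rw [h0]
      by_cases hlt : a < ii (k + 1)
      · right
        refine ⟨by simp [hlt], by omega, hlt⟩
      · left; simp [hlt]
    · rw [h1]
      have : a < ii (k + 1) := lt_of_lt_of_le hak
        (le_of_lt (hmono k (k + 1) hk1' (by omega) (le_refl _)))
      left; simp [this]

theorem stmt_17 (r k : ℕ) (hr : 2 ≤ r) (hk : k ≤ r - 2)
    (ii : ℕ → ℕ)
    (hrange : ∀ l : ℕ, 1 ≤ l → l ≤ k → 1 ≤ ii l ∧ ii l ≤ r - 2)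
    (hmono : ∀ a b : ℕ, 1 ≤ a → a < b → b ≤ k → ii a < ii b)
    -- `ϖ_i = e_1 + ⋯ + e_i` for `1 ≤ i ≤ r−2`
    (w : ℕ → Fin r → ℚ)
    (hw : ∀ i : ℕ, 1 ≤ i → i ≤ r - 2 → w i = fun a : Fin r => if (a : ℕ) < i then 1 else 0)
    -- `ϖ_{r−1} = (1/2)(e_1 + ⋯ + e_{r−1} − e_r)` and `ϖ_r = (1/2)(e_1 + ⋯ + e_{r−1} + e_r)`
    (wrm wr : Fin r → ℚ)
    (hwrm : wrm = fun a : Fin r => if (a : ℕ) < r - 1 then 1 / 2 else -(1 / 2))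
    (hwr : wr = fun _ : Fin r => 1 / 2) :
    (∀ a : Fin r,
      (∑ j ∈ Finset.Icc 1 k, (-1 : ℚ) ^ (k - j + 1) * w (ii j) a) + wrm a = 1 / 2 ∨
      (∑ j ∈ Finset.Icc 1 k, (-1 : ℚ) ^ (k - j + 1) * w (ii j) a) + wrm a = -(1 / 2)) ∧
    (∀ a : Fin r,
      (∑ j ∈ Finset.Icc 1 k, (-1 : ℚ) ^ (k - j + 1) * w (ii j) a) + wr a = 1 / 2 ∨
      (∑ j ∈ Finset.Icc 1 k, (-1 : ℚ) ^ (k - j + 1) * w (ii j) a) + wr a = -(1 / 2)) := by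
  have hrw : ∀ a : Fin r,
      (∑ j ∈ Finset.Icc 1 k, (-1 : ℚ) ^ (k - j + 1) * w (ii j) a)
      = ∑ j ∈ Finset.Icc 1 k,
          (-1 : ℚ) ^ (k - j + 1) * (if (a : ℕ) < ii j then 1 else 0) := by
    intro a
    refine Finset.sum_congr rfl ?_
    intro j hj
    rw [Finset.mem_Icc] at hj
    obtain ⟨h1, h2⟩ := hrange j hj.1 hj.2
    rw [hw (ii j) h1 h2]
  have hcase : ∀ a : Fin r,
      (∑ j ∈ Finset.Icc 1 k, (-1 : ℚ) ^ (k - j + 1) * w (ii j) a) = 0 ∨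
      ((∑ j ∈ Finset.Icc 1 k, (-1 : ℚ) ^ (k - j + 1) * w (ii j) a) = -1
        ∧ (a : ℕ) < r - 1) := by
    intro a
    rw [hrw a]
    rcases key_alt_sum ii (a : ℕ) k hmono with h0 | ⟨h1, hk1, hak⟩
    · left; exact h0
    · right
      refine ⟨h1, ?_⟩
      have := (hrange k hk1 (le_refl _)).2
      omega
  constructor
  · intro a
    rcases hcase a with h0 | ⟨h1, hlt⟩
    · rw [h0, hwrm]
      by_cases h : (a : ℕ) < r - 1 <;> simp [h]
    · rw [h1, hwrm]
      simp only [hlt, if_pos]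
      right; ring
  · intro a
    rcases hcase a with h0 | ⟨h1, _⟩
    · rw [h0, hwr]; left; ring
    · rw [h1, hwr]; right; ring
end

section
/- Let n ≥ 2 and let Y ⊆ sl_n(ℂ) be a Zariski-closed subset stable under conjugation by GL_n(ℂ) and under multiplication by nonzero complex scalars, such that: (i) {X ∈ sl_n(ℂ) : rank X ≤ 1} ⊆ Y; and (ii) the intersection of Y with the affine subspace E_{n,1} + g^{E_{1,n}} is a finite set, where g^{E_{1,n}} = {Z ∈ sl_n(ℂ) : [Z, E_{1,n}] = 0} is the centralizer of the matrix unit E_{1,n}. Then Y = {X ∈ sl_n(ℂ) : rank X ≤ 1}. -/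
open Matrix

noncomputable section

/-- A subset of the space of `n×n` complex matrices is Zariski closed if it is the
common zero locus of a family of polynomials in the matrix entries. -/
def zclosed {n : ℕ} (S : Set (Mat n)) : Prop :=
  ∃ T : Set (MvPolynomial (Fin n × Fin n) ℂ),
    S = {X | ∀ p ∈ T, MvPolynomial.eval (fun q => X q.1 q.2) p = 0}

namespace Stmt19Aux

variable {n : ℕ}

lemma commute_std (p q : Fin n) (hpq : p ≠ q) (Z : Mat n)
    (h1 : ∀ a, a ≠ p → Z a p = 0) (h2 : ∀ b, b ≠ q → Z q b = 0)
    (h3 : Z p p = Z q q) :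
    Z * single p q (1 : ℂ) = single p q (1 : ℂ) * Z := by
  ext a b
  by_cases hb : b = q
  · subst hb
    by_cases ha : a = p
    · subst ha
      rw [Matrix.mul_single_apply_same, Matrix.single_mul_apply_same]
      rw [h3]; ring
    · rw [Matrix.mul_single_apply_same,
        Matrix.single_mul_apply_of_ne _ _ _ _ _ ha]
      rw [h1 a ha]; ring
  · by_cases ha : a = p
    · subst ha
      rw [Matrix.mul_single_apply_of_ne _ _ _ _ _ hb,
        Matrix.single_mul_apply_same]
      rw [h2 b hb]; ring
    · rw [Matrix.mul_single_apply_of_ne _ _ _ _ _ hb,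
        Matrix.single_mul_apply_of_ne _ _ _ _ _ ha]

lemma rank_std_le_one (q p : Fin n) : (single q p (1 : ℂ)).rank ≤ 1 := by
  classical
  rw [Matrix.rank_eq_finrank_span_cols]
  have hle : Submodule.span ℂ (Set.range (single q p (1:ℂ))ᵀ) ≤
      Submodule.span ℂ ({Pi.single q 1} : Set (Fin n → ℂ)) := by
    rw [Submodule.span_le]
    rintro x ⟨j, rfl⟩
    by_cases hj : j = p
    · have hcol : (single q p (1:ℂ))ᵀ j = Pi.single q 1 := by
        funext i
        simp only [Matrix.transpose_apply, Matrix.single, Matrix.of_apply]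
        by_cases hi : i = q
        · subst hi; simp [hj]
        · simp [hj, Ne.symm hi, Pi.single_apply, hi]
      rw [hcol]
      exact Submodule.subset_span rfl
    · have hcol : (single q p (1:ℂ))ᵀ j = 0 := by
        funext i
        simp only [Matrix.transpose_apply, Matrix.single, Matrix.of_apply]
        simp [Ne.symm hj]
      rw [hcol]
      exact Submodule.zero_mem _
  calc Module.finrank ℂ (Submodule.span ℂ (Set.range (single q p (1:ℂ))ᵀ))
      ≤ Module.finrank ℂ (Submodule.span ℂ ({Pi.single q 1} : Set (Fin n → ℂ))) :=
        Submodule.finrank_mono hle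
    _ ≤ 1 := le_of_eq (finrank_span_singleton (by
          intro h
          have := congrFun h q
          simp at this))

/-- If no vector gives an independent pair `(v, Xv)`, a traceless matrix is zero. -/
lemma eq_zero_of_no_indep (hn : 2 ≤ n) (X : Mat n) (htr : X.trace = 0)
    (hno : ∀ v : Fin n → ℂ, ¬ LinearIndependent ℂ ![v, X.mulVec v]) : X = 0 := by
  classical
  have hs : ∀ w : Fin n → ℂ, w ≠ 0 → ∃ c : ℂ, X.mulVec w = c • w := by
    intro w hw
    have h := hno w
    rw [linearIndependent_fin2] at h
    push_neg at h
    simp only [Matrix.cons_val_one, Matrix.head_cons, Matrix.cons_val_zero] at h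
    by_cases h0 : X.mulVec w = 0
    · exact ⟨0, by simp [h0]⟩
    · obtain ⟨a, ha⟩ := h h0
      have ha0 : a ≠ 0 := by
        rintro rfl; rw [zero_smul] at ha; exact hw ha.symm
      refine ⟨a⁻¹, ?_⟩
      conv_rhs => rw [← ha]
      rw [smul_smul, inv_mul_cancel₀ ha0, one_smul]
  set z : Fin n := ⟨0, by omega⟩ with hz
  have hsingle : ∀ j : Fin n, (Pi.single j 1 : Fin n → ℂ) ≠ 0 := by
    intro j h
    have := congrFun h j
    simp at this
  have hcex : ∀ j : Fin n, ∃ c : ℂ, X.mulVec (Pi.single j 1 : Fin n → ℂ) = c • (Pi.single j 1 : Fin n → ℂ) :=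
    fun j => hs _ (hsingle j)
  set c : Fin n → ℂ := fun j => (hcex j).choose with hc
  have hcspec : ∀ j : Fin n, X.mulVec (Pi.single j 1 : Fin n → ℂ) = c j • (Pi.single j 1 : Fin n → ℂ) :=
    fun j => (hcex j).choose_spec
  have hentry : ∀ i j : Fin n, X i j = if i = j then c j else 0 := by
    intro i j
    have h1 := congrFun (hcspec j) i
    rw [Matrix.mulVec_single] at h1
    simp only [Pi.smul_apply, Matrix.col_apply, MulOpposite.op_one, one_smul] at h1
    rw [h1]
    by_cases hij : i = j
    · subst hij; simp
    · simp [Pi.single_apply, hij]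
  have hdiag : ∀ j : Fin n, c j = c z := by
    intro j
    by_cases hj : j = z
    · rw [hj]
    · set w : Fin n → ℂ := (Pi.single j 1 : Fin n → ℂ) + (Pi.single z 1 : Fin n → ℂ) with hwdef
      have hw : w ≠ 0 := by
        intro h
        have := congrFun h j
        simp [hwdef, Pi.single_apply, hj] at this
      obtain ⟨d, hd⟩ := hs w hw
      have hXw : X.mulVec w = c j • (Pi.single j 1 : Fin n → ℂ) + c z • (Pi.single z 1 : Fin n → ℂ) := by
        rw [hwdef, Matrix.mulVec_add, hcspec j, hcspec z]
      have hj' : X.mulVec w j = c j := by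
        rw [hXw]; simp [Pi.single_apply, hj]
      have h0' : X.mulVec w z = c z := by
        rw [hXw]; simp [Pi.single_apply, hj, Ne.symm hj]
      have hj'' : X.mulVec w j = d := by
        rw [hd]; simp [hwdef, Pi.single_apply, hj]
      have h0'' : X.mulVec w z = d := by
        rw [hd]; simp [hwdef, Pi.single_apply, Ne.symm hj]
      rw [hj''] at hj'; rw [h0''] at h0'
      rw [← hj', ← h0']
  have htr' : (n : ℂ) * c z = 0 := by
    have h2 : X.trace = ∑ j : Fin n, X j j := rfl
    rw [h2] at htr
    have h3 : ∑ j : Fin n, X j j = ∑ _j : Fin n, c z := by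
      apply Finset.sum_congr rfl
      intro j _
      rw [hentry j j, if_pos rfl, hdiag j]
    rw [h3, Finset.sum_const, Finset.card_univ, Fintype.card_fin, nsmul_eq_mul] at htr
    exact htr
  have hc0 : c z = 0 := by
    have hn0 : (n : ℂ) ≠ 0 := by
      simp only [ne_eq, Nat.cast_eq_zero]; omega
    exact (mul_eq_zero.mp htr').resolve_left hn0
  ext i j
  rw [hentry i j]
  by_cases hij : i = j
  · simp [hij, hdiag j, hc0]
  · simp [hij]

lemma conj_to_slice (hn : 2 ≤ n) (p q : Fin n) (hp : (p : ℕ) = 0) (hq : (q : ℕ) = n - 1)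
    (X : Mat n) (v : Fin n → ℂ)
    (hv : LinearIndependent ℂ ![v, X.mulVec v]) :
    ∃ (g : GLn n) (a : ℂ) (M : Mat n),
      M = (↑g : Mat n) * X * (↑g⁻¹ : Mat n) ∧
      (∀ i, M i p = if i = p then a else if i = q then 1 else 0) ∧
      (∀ j, M q j = if j = p then 1 else if j = q then a else 0) := by
  classical
  have hpq : p ≠ q := by
    intro h
    rw [Fin.ext_iff, hp, hq] at h
    omega
  set T : (Fin n → ℂ) →ₗ[ℂ] (Fin n → ℂ) := Matrix.toLin' X with hTdef
  have hTapp : ∀ w, T w = X.mulVec w := fun w => Matrix.toLin'_apply X w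
  -- the functional φ
  set W := Submodule.span ℂ (Set.range ![v, X.mulVec v]) with hWdef
  obtain ⟨C, hC⟩ := Submodule.exists_isCompl W
  set bW : Module.Basis (Fin 2) ℂ W := Module.Basis.span hv with hbWdef
  set φ : (Fin n → ℂ) →ₗ[ℂ] ℂ := LinearMap.ofIsCompl hC (bW.coord 1) 0 with hφdef
  have hφmem : ∀ x : W, φ x = bW.coord 1 x := fun x => LinearMap.ofIsCompl_left_apply hC x
  have hbW0 : (bW 0 : Fin n → ℂ) = v := by
    rw [hbWdef, Module.Basis.span_apply]
    simp
  have hbW1 : (bW 1 : Fin n → ℂ) = X.mulVec v := by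
    rw [hbWdef, Module.Basis.span_apply]
    simp
  have hφv : φ v = 0 := by
    have h := hφmem (bW 0)
    rw [hbW0] at h
    rw [h, Module.Basis.coord_apply, Module.Basis.repr_self, Finsupp.single_apply]
    simp
  have hφTv : φ (X.mulVec v) = 1 := by
    have h := hφmem (bW 1)
    rw [hbW1] at h
    rw [h, Module.Basis.coord_apply, Module.Basis.repr_self, Finsupp.single_apply]
    simp
  set a : ℂ := φ (X.mulVec (X.mulVec v)) / 2 with hadef
  have hφTTv : φ (X.mulVec (X.mulVec v)) = 2 * a := by rw [hadef]; ring
  set u : Fin n → ℂ := X.mulVec v - a • v with hudef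
  have hTv : X.mulVec v = a • v + u := by rw [hudef]; abel
  have hφu : φ u = 1 := by
    rw [hudef, map_sub, _root_.map_smul, hφv, hφTv, smul_zero, sub_zero]
  have hφTu : φ (X.mulVec u) = a := by
    rw [hudef, Matrix.mulVec_sub, Matrix.mulVec_smul, map_sub, _root_.map_smul, hφTTv, hφTv]
    simp only [smul_eq_mul, mul_one]
    ring
  -- linear independence of v, u
  have hvne : v ≠ 0 := hv.ne_zero 0
  have hXvne : X.mulVec v ≠ 0 := by
    have := hv.ne_zero 1
    simpa using this
  have hfin2 := linearIndependent_fin2.mp hv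
  simp only [Matrix.cons_val_one, Matrix.head_cons, Matrix.cons_val_zero] at hfin2
  have hnosc : ∀ s : ℂ, X.mulVec v ≠ s • v := by
    intro s hsv
    have hs0 : s ≠ 0 := by
      rintro rfl
      rw [zero_smul] at hsv
      exact hXvne hsv
    exact hfin2.2 s⁻¹ (by rw [hsv, smul_smul, inv_mul_cancel₀ hs0, one_smul])
  have hvu : LinearIndependent ℂ ![v, u] := by
    rw [linearIndependent_fin2]
    simp only [Matrix.cons_val_one, Matrix.head_cons, Matrix.cons_val_zero]
    constructor
    · intro h0
      rw [hudef, sub_eq_zero] at h0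
      exact hnosc a h0
    · intro s hsu
      have hs0 : s ≠ 0 := by
        rintro rfl
        rw [zero_smul] at hsu
        exact hvne hsu.symm
      rw [hudef, smul_sub] at hsu
      have hv' : v = s • X.mulVec v - (s * a) • v := by
        rw [← smul_smul]
        exact hsu.symm
      have h1 : (1 + s * a) • v = s • X.mulVec v := by
        rw [add_smul, one_smul]
        nth_rewrite 1 [hv']
        abel
      have h2 : X.mulVec v = (s⁻¹ * (1 + s * a)) • v := by
        calc X.mulVec v = (s⁻¹ * s) • X.mulVec v := by
              rw [inv_mul_cancel₀ hs0, one_smul]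
          _ = s⁻¹ • (s • X.mulVec v) := by rw [smul_smul]
          _ = s⁻¹ • ((1 + s * a) • v) := by rw [h1]
          _ = (s⁻¹ * (1 + s * a)) • v := by rw [smul_smul]
      exact hnosc _ h2
  -- the subspaces S and K
  set S := Submodule.span ℂ (Set.range ![v, u]) with hSdef
  set bS : Module.Basis (Fin 2) ℂ S := Module.Basis.span hvu with hbSdef
  have hrange : Set.range ![v, u] = {v, u} := by
    ext x
    constructor
    · rintro ⟨i, rfl⟩
      fin_cases i <;> simp
    · rintro (rfl | rfl)
      · exact ⟨0, rfl⟩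
      · exact ⟨1, rfl⟩
  have hSmem : ∀ x, x ∈ S ↔ ∃ cc d : ℂ, cc • v + d • u = x := by
    intro x
    rw [hSdef, hrange, Submodule.mem_span_pair]
  set K := LinearMap.ker φ ⊓ LinearMap.ker (φ ∘ₗ T) with hKdef
  have hKφ : ∀ x ∈ K, φ x = 0 := by
    intro x hx
    exact (Submodule.mem_inf.mp hx).1
  have hKφT : ∀ x ∈ K, φ (X.mulVec x) = 0 := by
    intro x hx
    have h := (Submodule.mem_inf.mp hx).2
    rw [LinearMap.mem_ker, LinearMap.comp_apply, hTapp] at h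
    exact h
  have hmemK : ∀ x, φ x = 0 → φ (X.mulVec x) = 0 → x ∈ K := by
    intro x h1 h2
    rw [hKdef, Submodule.mem_inf]
    exact ⟨h1, by rw [LinearMap.mem_ker, LinearMap.comp_apply, hTapp]; exact h2⟩
  have hcompl : IsCompl K S := by
    constructor
    · rw [Submodule.disjoint_def]
      intro x hxK hxS
      obtain ⟨cc, d, hcd⟩ := (hSmem x).mp hxS
      have h1 : φ x = d := by
        rw [← hcd, map_add, _root_.map_smul, _root_.map_smul, hφv, hφu]
        simp
      have h2 : φ (X.mulVec x) = cc + d * a := by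
        have : X.mulVec x = cc • X.mulVec v + d • X.mulVec u := by
          rw [← hcd, Matrix.mulVec_add, Matrix.mulVec_smul, Matrix.mulVec_smul]
        rw [this, map_add, _root_.map_smul, _root_.map_smul, hφTv, hφTu]
        simp
      have hd : d = 0 := by rw [← h1]; exact hKφ x hxK
      have hcc : cc = 0 := by
        have := hKφT x hxK
        rw [h2, hd] at this
        simpa using this
      rw [← hcd, hd, hcc]
      simp
    · rw [codisjoint_iff, eq_top_iff]
      intro x _
      set t : ℂ := φ x with htdef
      set s : ℂ := φ (X.mulVec x) - a * t with hsdef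
      set y : Fin n → ℂ := s • v + t • u with hydef
      have hyS : y ∈ S := (hSmem y).mpr ⟨s, t, rfl⟩
      have hxyK : x - y ∈ K := by
        apply hmemK
        · rw [map_sub, hydef, map_add, _root_.map_smul, _root_.map_smul, hφv, hφu]
          simp [htdef]
        · have hXy : X.mulVec y = s • X.mulVec v + t • X.mulVec u := by
            rw [hydef, Matrix.mulVec_add, Matrix.mulVec_smul, Matrix.mulVec_smul]
          rw [Matrix.mulVec_sub, map_sub, hXy, map_add, _root_.map_smul, _root_.map_smul, hφTv, hφTu]
          simp only [smul_eq_mul, mul_one]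
          rw [hsdef]
          ring
      rw [Submodule.mem_sup]
      exact ⟨x - y, hxyK, y, hyS, by abel⟩
  -- dimension count
  have hfinS : Module.finrank ℂ S = 2 := by
    rw [hSdef, finrank_span_eq_card hvu]
    simp
  have hfinV : Module.finrank ℂ (Fin n → ℂ) = n := by
    simp
  have hfinK : Module.finrank ℂ K = n - 2 := by
    have h := Submodule.finrank_add_eq_of_isCompl hcompl
    rw [hfinS, hfinV] at h
    omega
  set bK : Module.Basis (Fin (n - 2)) ℂ K := Module.finBasisOfFinrankEq ℂ K hfinK with hbKdef
  set bV : Module.Basis (Fin (n - 2) ⊕ Fin 2) ℂ (Fin n → ℂ) :=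
    (bK.prod bS).map (Submodule.prodEquivOfIsCompl K S hcompl) with hbVdef
  have hbVinl : ∀ k, bV (Sum.inl k) = (bK k : Fin n → ℂ) := by
    intro k
    rw [hbVdef, Module.Basis.map_apply, Submodule.coe_prodEquivOfIsCompl']
    have h1 : ((bK.prod bS) (Sum.inl k)).1 = bK k := Module.Basis.prod_apply_inl_fst bK bS k
    have h2 : ((bK.prod bS) (Sum.inl k)).2 = 0 := Module.Basis.prod_apply_inl_snd bK bS k
    rw [h1, h2]
    simp
  have hbVinr : ∀ i, bV (Sum.inr i) = (bS i : Fin n → ℂ) := by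
    intro i
    rw [hbVdef, Module.Basis.map_apply, Submodule.coe_prodEquivOfIsCompl']
    have h1 : ((bK.prod bS) (Sum.inr i)).1 = 0 := Module.Basis.prod_apply_inr_fst bK bS i
    have h2 : ((bK.prod bS) (Sum.inr i)).2 = bS i := Module.Basis.prod_apply_inr_snd bK bS i
    rw [h1, h2]
    simp
  have hbS0 : (bS 0 : Fin n → ℂ) = v := by rw [hbSdef, Module.Basis.span_apply]; simp
  have hbS1 : (bS 1 : Fin n → ℂ) = u := by rw [hbSdef, Module.Basis.span_apply]; simp
  -- the index equivalence
  set Efun : (Fin (n - 2) ⊕ Fin 2) → Fin n :=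
    Sum.elim (fun k => ⟨(k : ℕ) + 1, by have := k.2; omega⟩)
      (fun i => if i = 0 then p else q) with hEfun
  have hEinj : Function.Injective Efun := by
    rintro (k | i) (l | j) h
    · simp only [hEfun, Sum.elim_inl, Fin.mk.injEq] at h
      have : k = l := by
        apply Fin.ext
        omega
      rw [this]
    · exfalso
      simp only [hEfun, Sum.elim_inl, Sum.elim_inr] at h
      by_cases hj : j = 0
      · rw [if_pos hj] at h
        have h2 : (k : ℕ) + 1 = (p : ℕ) := by
          simpa using congrArg Fin.val h
        omega
      · rw [if_neg hj] at h
        have h2 : (k : ℕ) + 1 = (q : ℕ) := by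
          simpa using congrArg Fin.val h
        have hk := k.2
        omega
    · exfalso
      simp only [hEfun, Sum.elim_inl, Sum.elim_inr] at h
      by_cases hi : i = 0
      · rw [if_pos hi] at h
        have h2 : (p : ℕ) = (l : ℕ) + 1 := by
          simpa using congrArg Fin.val h
        omega
      · rw [if_neg hi] at h
        have h2 : (q : ℕ) = (l : ℕ) + 1 := by
          simpa using congrArg Fin.val h
        have hk := l.2
        omega
    · simp only [hEfun, Sum.elim_inr] at h
      congr 1
      by_cases hi : i = 0 <;> by_cases hj : j = 0
      · rw [hi, hj]
      · rw [if_pos hi, if_neg hj] at h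
        exact absurd h hpq
      · rw [if_neg hi, if_pos hj] at h
        exact absurd h.symm hpq
      · have hi1 : i = 1 := by omega
        have hj1 : j = 1 := by omega
        rw [hi1, hj1]
  have hEbij : Function.Bijective Efun := by
    rw [Fintype.bijective_iff_injective_and_card]
    constructor
    · exact hEinj
    · simp only [Fintype.card_sum, Fintype.card_fin]
      omega
  set E : (Fin (n - 2) ⊕ Fin 2) ≃ Fin n := Equiv.ofBijective Efun hEbij with hEdef
  have hEinr0 : E (Sum.inr 0) = p := by
    simp [hEdef, hEfun, Equiv.ofBijective_apply]
  have hEinr1 : E (Sum.inr 1) = q := by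
    simp [hEdef, hEfun, Equiv.ofBijective_apply]
  set b : Module.Basis (Fin n) ℂ (Fin n → ℂ) := bV.reindex E with hbdef
  have hbp : b p = v := by
    rw [hbdef, Module.Basis.reindex_apply, ← hEinr0, Equiv.symm_apply_apply, hbVinr, hbS0]
  have hbq : b q = u := by
    rw [hbdef, Module.Basis.reindex_apply, ← hEinr1, Equiv.symm_apply_apply, hbVinr, hbS1]
  have hbmid : ∀ j : Fin n, j ≠ p → j ≠ q → b j ∈ K := by
    intro j hjp hjq
    rw [hbdef, Module.Basis.reindex_apply]
    rcases hEj : E.symm j with k | i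
    · rw [hbVinl]
      exact (bK k).2
    · exfalso
      have : j = E (Sum.inr i) := by
        rw [← hEj, Equiv.apply_symm_apply]
      by_cases hi : i = 0
      · rw [hi, hEinr0] at this
        exact hjp this
      · have hi1 : i = 1 := by omega
        rw [hi1, hEinr1] at this
        exact hjq this
  -- the coordinate functional along q is φ
  have hcoord : b.coord q = φ := by
    apply b.ext
    intro j
    rw [Module.Basis.coord_apply, Module.Basis.repr_self, Finsupp.single_apply]
    by_cases hjq : j = q
    · rw [if_pos hjq, hjq, hbq, hφu]
    · rw [if_neg hjq]
      by_cases hjp : j = p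
      · rw [hjp, hbp, hφv]
      · exact (hKφ _ (hbmid j hjp hjq)).symm
  have hcoord' : ∀ x, b.repr x q = φ x := by
    intro x
    have := congrArg (fun f => f x) hcoord
    simpa [Module.Basis.coord_apply] using this
  -- the matrix M
  set M : Mat n := LinearMap.toMatrix b b T with hMdef
  have hMapp : ∀ i j, M i j = b.repr (T (b j)) i := by
    intro i j
    rw [hMdef, LinearMap.toMatrix_apply]
  have hMcol : ∀ i, M i p = if i = p then a else if i = q then 1 else 0 := by
    intro i
    rw [hMapp, hbp, hTapp, hTv, ← hbp, ← hbq, map_add, _root_.map_smul, Module.Basis.repr_self,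
      Module.Basis.repr_self]
    simp only [Finsupp.coe_add, Finsupp.coe_smul, Pi.add_apply, Pi.smul_apply,
      Finsupp.single_apply, smul_eq_mul]
    by_cases hip : i = p
    · rw [if_pos hip, if_pos hip.symm, if_neg (show ¬ q = i by rw [hip]; exact fun h => hpq h.symm)]
      ring
    · rw [if_neg hip, if_neg (show ¬ p = i from fun h => hip h.symm)]
      by_cases hiq : i = q
      · rw [if_pos hiq, if_pos hiq.symm]
        ring
      · rw [if_neg hiq, if_neg (show ¬ q = i from fun h => hiq h.symm)]
        ring
  have hMrow : ∀ j, M q j = if j = p then 1 else if j = q then a else 0 := by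
    intro j
    rw [hMapp, hcoord']
    by_cases hjp : j = p
    · rw [if_pos hjp, hjp, hbp, hTapp, hφTv]
    · rw [if_neg hjp]
      by_cases hjq : j = q
      · rw [if_pos hjq, hjq, hbq, hTapp, hφTu]
      · rw [if_neg hjq, hTapp, hKφT _ (hbmid j hjp hjq)]
  -- change of basis matrices
  set sb : Module.Basis (Fin n) ℂ (Fin n → ℂ) := Pi.basisFun ℂ (Fin n) with hsbdef
  set P : Mat n := sb.toMatrix ⇑b with hPdef
  set Q : Mat n := b.toMatrix ⇑sb with hQdef
  have hPQ : P * Q = 1 := Module.Basis.toMatrix_mul_toMatrix_flip sb b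
  have hQP : Q * P = 1 := Module.Basis.toMatrix_mul_toMatrix_flip b sb
  have hXPMQ : P * M * Q = X := by
    rw [hPdef, hMdef, hQdef, basis_toMatrix_mul_linearMap_toMatrix_mul_basis_toMatrix]
    rw [hsbdef, LinearMap.toMatrix_eq_toMatrix', hTdef, LinearMap.toMatrix'_toLin']
  set g : GLn n := ⟨Q, P, hQP, hPQ⟩ with hgdef
  have hgco : (↑g : Mat n) = Q := rfl
  have hginv : (↑g⁻¹ : Mat n) = P := rfl
  refine ⟨g, a, M, ?_, hMcol, hMrow⟩
  rw [hgco, hginv, ← hXPMQ]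
  have hassoc : Q * (P * M * Q) * P = Q * P * M * (Q * P) := by
    simp only [Matrix.mul_assoc]
  rw [hassoc, hQP, Matrix.one_mul, Matrix.mul_one]

lemma nat_pow_inj {k : ℕ} (hk : 1 ≤ k) {m1 m2 : ℕ}
    (h : ((m1 : ℂ)) ^ k = ((m2 : ℂ)) ^ k) : m1 = m2 := by
  rw [← Nat.cast_pow, ← Nat.cast_pow, Nat.cast_inj] at h
  exact Nat.pow_left_injective (by omega) h

/-- The Kazhdan ℂ*-action produces infinitely many elements of `Y` inside the slice. -/
lemma slice_infinite (hn : 2 ≤ n) (p q : Fin n) (hpq : p ≠ q)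
    (Y : Set (Mat n))
    (hconj : ∀ g : GLn n, ∀ X ∈ Y, (↑g : Mat n) * X * (↑g⁻¹ : Mat n) ∈ Y)
    (hscal : ∀ c : ℂ, c ≠ 0 → ∀ X ∈ Y, c • X ∈ Y)
    (M : Mat n) (a : ℂ) (hMY : M ∈ Y) (htrM : M.trace = 0)
    (hMcol : ∀ i, M i p = if i = p then a else if i = q then 1 else 0)
    (hMrow : ∀ j, M q j = if j = p then 1 else if j = q then a else 0)
    (hMne : M ≠ single q p (1 : ℂ)) :
    (Y ∩ {X : Mat n | ∃ Z : Mat n, Z.trace = 0 ∧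
      Z * single p q (1:ℂ) = single p q (1:ℂ) * Z ∧
      X = single q p (1:ℂ) + Z}).Infinite := by
  classical
  set F : Mat n := single q p (1:ℂ) with hFdef
  have hFapp : ∀ i j, F i j = if i = q ∧ j = p then 1 else 0 := by
    intro i j
    rw [hFdef]
    simp only [Matrix.single, Matrix.of_apply]
    by_cases h1 : q = i <;> by_cases h2 : p = j <;>
      simp [h1, h2, eq_comm]
  have hFpp : F p p = 0 := by rw [hFapp]; simp [hpq, hpq.symm]
  have hFqq : F q q = 0 := by rw [hFapp]; simp [hpq, hpq.symm]
  have hFqp : F q p = 1 := by rw [hFapp]; simp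
  have htrF : F.trace = 0 := Matrix.trace_single_eq_of_ne q p (1:ℂ) hpq.symm
  -- a nonzero entry of M - F, away from (q,p)
  have hZne : M - F ≠ 0 := fun h => hMne (by rwa [sub_eq_zero] at h)
  obtain ⟨i0, hi0⟩ : ∃ i0, M i0 ≠ F i0 := by
    by_contra hcon
    push_neg at hcon
    exact hMne (by ext i j; rw [hcon i])
  obtain ⟨j0, hj0⟩ : ∃ j0, M i0 j0 ≠ F i0 j0 := by
    by_contra hcon
    push_neg at hcon
    exact hi0 (funext hcon)
  have hnotqp : ¬(i0 = q ∧ j0 = p) := by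
    rintro ⟨rfl, rfl⟩
    rw [hMrow, hFqp] at hj0
    simp [hpq.symm] at hj0
  have hM0 : M i0 j0 ≠ 0 ∨ F i0 j0 ≠ 0 := by
    by_contra hcon
    push_neg at hcon
    exact hj0 (by rw [hcon.1, hcon.2])
  have hF0 : F i0 j0 = 0 := by
    rw [hFapp, if_neg hnotqp]
  have hMij : M i0 j0 ≠ 0 := fun h => hj0 (by rw [h, hF0])
  -- the family
  set vL : ℂ → Fin n → ℂ := fun c i => if i = p then c ^ 2 else if i = q then 1 else c with hvL
  set vR : ℂ → Fin n → ℂ := fun c j => if j = p then 1 else if j = q then c ^ 2 else c with hvR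
  set N : ℂ → Mat n := fun c => diagonal (vL c) * M * diagonal (vR c) with hN
  have hNapp : ∀ c i j, N c i j = vL c i * M i j * vR c j := by
    intro c i j
    rw [hN]
    simp only [Matrix.diagonal_mul, Matrix.mul_diagonal]
  have hvLne : ∀ c : ℂ, c ≠ 0 → ∀ i, vL c i ≠ 0 := by
    intro c hc i
    simp only [hvL]
    by_cases h1 : i = p
    · rw [if_pos h1]; exact pow_ne_zero 2 hc
    · rw [if_neg h1]
      by_cases h2 : i = q
      · rw [if_pos h2]; exact one_ne_zero
      · rw [if_neg h2]; exact hc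
  have hvRvL : ∀ c : ℂ, ∀ i, vR c i * vL c i = c ^ 2 := by
    intro c i
    simp only [hvL, hvR]
    by_cases h1 : i = p
    · rw [if_pos h1, if_pos h1, one_mul]
    · rw [if_neg h1, if_neg h1]
      by_cases h2 : i = q
      · rw [if_pos h2, if_pos h2, mul_one]
      · rw [if_neg h2, if_neg h2, ← sq]
  have hvRc : ∀ c : ℂ, c ≠ 0 → ∀ j, vR c j = c ^ 2 * (vL c j)⁻¹ := by
    intro c hc j
    simp only [hvL, hvR]
    by_cases h1 : j = p
    · rw [if_pos h1, if_pos h1, mul_inv_cancel₀ (pow_ne_zero 2 hc)]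
    · by_cases h2 : j = q
      · rw [if_neg h1, if_neg h1, if_pos h2, if_pos h2]
        simp
      · rw [if_neg h1, if_neg h1, if_neg h2, if_neg h2]
        rw [sq, mul_assoc, mul_inv_cancel₀ hc, mul_one]
  -- pointwise values
  have hvLp' : ∀ c : ℂ, vL c p = c ^ 2 := by intro c; simp only [hvL]; simp
  have hvLq' : ∀ c : ℂ, vL c q = 1 := by
    intro c; simp only [hvL]
    rw [if_neg (show ¬ q = p from fun h => hpq h.symm)]
    simp
  have hvRp' : ∀ c : ℂ, vR c p = 1 := by intro c; simp only [hvR]; simp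
  have hvRq' : ∀ c : ℂ, vR c q = c ^ 2 := by
    intro c; simp only [hvR]
    rw [if_neg (show ¬ q = p from fun h => hpq h.symm)]
    simp
  have hMpp : M p p = a := by rw [hMcol, if_pos rfl]
  have hMqq : M q q = a := by
    rw [hMrow, if_neg (show ¬ q = p from fun h => hpq h.symm), if_pos rfl]
  -- membership of the family in Y
  have hNY : ∀ c : ℂ, c ≠ 0 → N c ∈ Y := by
    intro c hc
    have hfun1 : (fun i => vL c i * (vL c i)⁻¹) = (1 : Fin n → ℂ) := by
      funext i
      show vL c i * (vL c i)⁻¹ = 1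
      exact mul_inv_cancel₀ (hvLne c hc i)
    have hfun2 : (fun i => (vL c i)⁻¹ * vL c i) = (1 : Fin n → ℂ) := by
      funext i
      show (vL c i)⁻¹ * vL c i = 1
      exact inv_mul_cancel₀ (hvLne c hc i)
    have hunit1 : (diagonal (vL c)) * (diagonal fun i => (vL c i)⁻¹) = 1 := by
      rw [Matrix.diagonal_mul_diagonal, hfun1]
      exact Matrix.diagonal_one
    have hunit2 : (diagonal fun i => (vL c i)⁻¹) * (diagonal (vL c)) = 1 := by
      rw [Matrix.diagonal_mul_diagonal, hfun2]
      exact Matrix.diagonal_one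
    set g : GLn n := ⟨diagonal (vL c), diagonal fun i => (vL c i)⁻¹, hunit1, hunit2⟩ with hg
    have hmem := hscal (c ^ 2) (pow_ne_zero 2 hc) _ (hconj g M hMY)
    have hgco : (↑g : Mat n) = diagonal (vL c) := rfl
    have hginv : (↑g⁻¹ : Mat n) = diagonal fun i => (vL c i)⁻¹ := rfl
    rw [hgco, hginv] at hmem
    have heq : N c = (c ^ 2) • ((diagonal (vL c)) * M * (diagonal fun i => (vL c i)⁻¹)) := by
      ext i j
      rw [hNapp]
      simp only [Matrix.smul_apply, Matrix.diagonal_mul, Matrix.mul_diagonal, smul_eq_mul]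
      rw [hvRc c hc j]
      ring
    rw [heq]
    exact hmem
  -- slice membership of the family
  have hNslice : ∀ c : ℂ, c ≠ 0 → ∃ Z : Mat n, Z.trace = 0 ∧
      Z * single p q (1:ℂ) = single p q (1:ℂ) * Z ∧
      N c = single q p (1:ℂ) + Z := by
    intro c hc
    refine ⟨N c - F, ?_, ?_, by rw [← hFdef]; abel⟩
    · have hNtr : (N c).trace = c ^ 2 * M.trace := by
        calc (N c).trace = (diagonal (vR c) * diagonal (vL c) * M).trace := by
              rw [hN, Matrix.trace_mul_cycle]
          _ = ((diagonal fun i => vR c i * vL c i) * M).trace := by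
              rw [Matrix.diagonal_mul_diagonal]
          _ = ∑ i, (vR c i * vL c i) * M i i := by
              simp [Matrix.trace, Matrix.diag, Matrix.diagonal_mul]
          _ = ∑ i, c ^ 2 * M i i := by
              apply Finset.sum_congr rfl
              intro i _
              rw [hvRvL c i]
          _ = c ^ 2 * M.trace := by
              rw [Matrix.trace, ← Finset.mul_sum]
              rfl
      rw [Matrix.trace_sub, hNtr, htrM, htrF, mul_zero, sub_zero]
    · apply commute_std p q hpq
      · intro i hip
        rw [Matrix.sub_apply, hNapp, hvRp', hMcol, if_neg hip]
        by_cases hiq : i = q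
        · rw [if_pos hiq, hiq, hvLq', hFqp]
          ring
        · rw [if_neg hiq, hFapp, if_neg (fun hh => hiq hh.1)]
          ring
      · intro j hjq
        rw [Matrix.sub_apply, hNapp, hvLq', hMrow]
        by_cases hjp : j = p
        · rw [if_pos hjp, hjp, hvRp', hFqp]
          ring
        · rw [if_neg hjp, if_neg hjq, hFapp, if_neg (fun hh => hjp hh.2)]
          ring
      · rw [Matrix.sub_apply, Matrix.sub_apply, hNapp, hNapp, hFpp, hFqq,
          hvRp', hvLq', hvLp', hvRq', hMpp, hMqq]
        ring
  -- exponent forms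
  have hvLcases : ∀ (cc : ℂ) i, vL cc i = cc ^ (if i = p then 2 else if i = q then 0 else 1) := by
    intro cc i
    simp only [hvL]
    split_ifs <;> simp
  have hvRcases : ∀ (cc : ℂ) j, vR cc j = cc ^ (if j = p then 0 else if j = q then 2 else 1) := by
    intro cc j
    simp only [hvR]
    split_ifs <;> simp
  -- the countable family
  set c : ℕ → ℂ := fun m => ((m + 2 : ℕ) : ℂ) with hcdef
  have hcne : ∀ m, c m ≠ 0 := by
    intro m
    rw [hcdef]
    simp only [ne_eq, Nat.cast_eq_zero]
    omega
  set Fam : ℕ → Mat n := fun m => N (c m) with hFam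
  have hmemAll : ∀ m, Fam m ∈ (Y ∩ {X : Mat n | ∃ Z : Mat n, Z.trace = 0 ∧
      Z * single p q (1:ℂ) = single p q (1:ℂ) * Z ∧
      X = single q p (1:ℂ) + Z}) := by
    intro m
    exact ⟨hNY _ (hcne m), hNslice _ (hcne m)⟩
  have hinj : Function.Injective Fam := by
    intro m1 m2 h
    have hentry : N (c m1) i0 j0 = N (c m2) i0 j0 := by
      rw [hFam] at h
      exact congrFun (congrFun h i0) j0
    rw [hNapp, hNapp] at hentry
    have hkey : vL (c m1) i0 * vR (c m1) j0 = vL (c m2) i0 * vR (c m2) j0 := by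
      have h1 : vL (c m1) i0 * vR (c m1) j0 * M i0 j0
          = vL (c m2) i0 * vR (c m2) j0 * M i0 j0 := by
        calc vL (c m1) i0 * vR (c m1) j0 * M i0 j0
            = vL (c m1) i0 * M i0 j0 * vR (c m1) j0 := by ring
          _ = vL (c m2) i0 * M i0 j0 * vR (c m2) j0 := hentry
          _ = vL (c m2) i0 * vR (c m2) j0 * M i0 j0 := by ring
      exact mul_right_cancel₀ hMij h1
    set ei : ℕ := if i0 = p then 2 else if i0 = q then 0 else 1 with hei
    set ej : ℕ := if j0 = p then 0 else if j0 = q then 2 else 1 with hej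
    have hkey2 : c m1 ^ (ei + ej) = c m2 ^ (ei + ej) := by
      rw [pow_add, pow_add]
      rw [hvLcases, hvRcases, hvLcases, hvRcases] at hkey
      exact hkey
    have hk1 : 1 ≤ ei + ej := by
      rw [hei, hej]
      split_ifs <;> first | omega | (exact absurd ⟨by assumption, by assumption⟩ hnotqp)
    have hmm : m1 + 2 = m2 + 2 := by
      rw [hcdef] at hkey2
      exact nat_pow_inj hk1 hkey2
    omega
  exact Set.infinite_of_injective_forall_mem hinj hmemAll

end Stmt19Aux

theorem stmt_19 (n : ℕ) (hn : 2 ≤ n)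
    -- `e = E_{1,n}` and `f = E_{n,1}`
    (e f : Mat n)
    (he : e = Matrix.single ⟨0, by omega⟩ ⟨n - 1, by omega⟩ (1 : ℂ))
    (hf : f = Matrix.single ⟨n - 1, by omega⟩ ⟨0, by omega⟩ (1 : ℂ))
    -- `Y` is a Zariski-closed subset of `sl_n(ℂ)`
    (Y : Set (Mat n)) (hYsl : Y ⊆ {X : Mat n | X.trace = 0}) (hYclosed : zclosed Y)
    -- stable under conjugation and under multiplication by nonzero scalars
    (hconj : ∀ g : GLn n, ∀ X ∈ Y, (↑g : Mat n) * X * (↑g⁻¹ : Mat n) ∈ Y)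
    (hscal : ∀ c : ℂ, c ≠ 0 → ∀ X ∈ Y, c • X ∈ Y)
    -- (i) the closure of the minimal nilpotent orbit is contained in `Y`
    (hmin : {X : Mat n | X.trace = 0 ∧ X.rank ≤ 1} ⊆ Y)
    -- (ii) `Y` meets the Slodowy slice `f + g^e` in a finite set
    (hfin : (Y ∩ {X : Mat n | ∃ Z : Mat n, Z.trace = 0 ∧ Z * e = e * Z ∧
      X = f + Z}).Finite) :
    Y = {X : Mat n | X.trace = 0 ∧ X.rank ≤ 1} := by
  apply Set.Subset.antisymm _ hmin
  intro X hX
  have htrX : X.trace = 0 := hYsl hX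
  refine ⟨htrX, ?_⟩
  by_contra hrk
  have hrk2 : 2 ≤ X.rank := by omega
  set p : Fin n := ⟨0, by omega⟩ with hpdef
  set q : Fin n := ⟨n - 1, by omega⟩ with hqdef
  have hp : (p : ℕ) = 0 := rfl
  have hq : (q : ℕ) = n - 1 := rfl
  have hpq : p ≠ q := by
    intro h
    rw [Fin.ext_iff, hp, hq] at h
    omega
  have he' : e = single p q (1 : ℂ) := he
  have hf' : f = single q p (1 : ℂ) := hf
  -- a vector with `v, Xv` independent
  have hvex : ∃ v : Fin n → ℂ, LinearIndependent ℂ ![v, X.mulVec v] := by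
    by_contra hno
    push_neg at hno
    have hX0 : X = 0 := Stmt19Aux.eq_zero_of_no_indep hn X htrX hno
    rw [hX0, Matrix.rank_zero] at hrk2
    omega
  obtain ⟨v, hv⟩ := hvex
  obtain ⟨g, a, M, hMeq, hMcol, hMrow⟩ := Stmt19Aux.conj_to_slice hn p q hp hq X v hv
  have hMY : M ∈ Y := by rw [hMeq]; exact hconj g X hX
  have hginvg : (↑g⁻¹ : Mat n) * (↑g : Mat n) = 1 := g.inv_mul
  have htrM : M.trace = 0 := by
    rw [hMeq, Matrix.trace_mul_cycle, hginvg, Matrix.one_mul, htrX]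
  have hXM : (↑g⁻¹ : Mat n) * M * (↑g : Mat n) = X := by
    rw [hMeq]
    have hassoc : (↑g⁻¹ : Mat n) * ((↑g : Mat n) * X * (↑g⁻¹ : Mat n)) * (↑g : Mat n)
        = ((↑g⁻¹ : Mat n) * (↑g : Mat n)) * X * ((↑g⁻¹ : Mat n) * (↑g : Mat n)) := by
      simp only [Matrix.mul_assoc]
    rw [hassoc, hginvg, Matrix.one_mul, Matrix.mul_one]
  have hMne : M ≠ single q p (1 : ℂ) := by
    intro hMf
    have hle : X.rank ≤ 1 := by
      calc X.rank = ((↑g⁻¹ : Mat n) * single q p (1:ℂ) * (↑g : Mat n)).rank := by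
            rw [← hXM, hMf]
        _ ≤ ((↑g⁻¹ : Mat n) * single q p (1:ℂ)).rank := Matrix.rank_mul_le_left _ _
        _ ≤ (single q p (1:ℂ)).rank := Matrix.rank_mul_le_right _ _
        _ ≤ 1 := Stmt19Aux.rank_std_le_one q p
    omega
  have hinf := Stmt19Aux.slice_infinite hn p q hpq Y hconj hscal M a hMY htrM hMcol hMrow hMne
  rw [he', hf'] at hfin
  exact hinf hfin
end
end
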